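/- arXiv:0708.1179 — 7 statements merged into one kernel-verified Lean document; each statement's English description precedes it below -/
import Mathlib

section
/- Let K ≥ 1 be an integer and let G_{S,D}, G_{S,R_1}, …, G_{S,R_K}, G_{R_1,D}, …, G_{R_K,D} be jointly independent random variables, where each G_{i,j} is exponentially distributed with rate λ_{i,j} > 0. Fix r ∈ (0, 1/2). For s > 0 define the random decoding set D(s) ⊆ {1,…,K} by j ∈ D(s) iff 1 + s·G_{S,R_j} ≥ (1+s)^{2r}, and define the outage probability P(s) = Pr[(1 + s·G_{S,D})·(1 + s·Σ_{j∈D(s)} G_{R_j,D}) < (1+s)^{2r}] (the empty sum being 0). Then lim_{s→∞} (−ln P(s))/ln s = (K+1)(1−2r). -/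
open MeasureTheory ProbabilityTheory Filter Real
open scoped ENNReal

section AuxLemmas

lemma exp_cdf_lt' {Ω : Type*} [MeasurableSpace Ω] (μ : Measure Ω) {G : Ω → ℝ} {lam : ℝ}
    (hlam : 0 < lam) (hmeas : Measurable G) (hlaw : μ.map G = expMeasure lam)
    {x : ℝ} (hx : 0 ≤ x) :
    μ {ω | G ω < x} = ENNReal.ofReal (1 - Real.exp (-(lam * x))) := by
  have h1 : {ω | G ω < x} = G ⁻¹' (Set.Iio x) := rfl
  rw [h1, ← Measure.map_apply hmeas measurableSet_Iio, hlaw, expMeasure, gammaMeasure,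
    withDensity_apply _ measurableSet_Iio,
    setLIntegral_congr (Iio_ae_eq_Iic (a := x)),
    show gammaPDF 1 lam = exponentialPDF lam from rfl,
    lintegral_exponentialPDF_eq_antiDeriv hlam x, if_pos hx]

lemma exp_neg_null' {Ω : Type*} [MeasurableSpace Ω] (μ : Measure Ω) {G : Ω → ℝ} {lam : ℝ}
    (hmeas : Measurable G) (hlaw : μ.map G = expMeasure lam) :
    μ {ω | G ω < 0} = 0 := by
  rw [show {ω | G ω < 0} = G ⁻¹' (Set.Iio 0) from rfl, ← Measure.map_apply hmeas measurableSet_Iio,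
    hlaw, expMeasure, gammaMeasure, withDensity_apply _ measurableSet_Iio]
  exact lintegral_gammaPDF_of_nonpos le_rfl

lemma one_sub_exp_neg_le' (x : ℝ) : 1 - Real.exp (-x) ≤ x := by
  nlinarith [Real.add_one_le_exp (-x)]

lemma half_le_one_sub_exp_neg' {x : ℝ} (h0 : 0 ≤ x) (h1 : x ≤ 1) :
    x / 2 ≤ 1 - Real.exp (-x) := by
  have he := Real.add_one_le_exp x
  have hp := Real.exp_pos x
  have h2 : Real.exp (-x) = (Real.exp x)⁻¹ := Real.exp_neg x
  have h3 : Real.exp (-x) * Real.exp x = 1 := by rw [h2]; field_simp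
  nlinarith [Real.exp_pos (-x)]

lemma one_sub_exp_neg_nonneg' {x : ℝ} (h0 : 0 ≤ x) : 0 ≤ 1 - Real.exp (-x) := by
  have : Real.exp (-x) ≤ 1 := Real.exp_le_one_iff.mpr (by linarith)
  linarith

lemma one_le_t' {r s : ℝ} (hr0 : 0 ≤ r) (hs : 1 ≤ s) : (1:ℝ) ≤ (1+s)^(2*r) :=
  calc (1:ℝ) = 1 ^ (2*r) := (Real.one_rpow _).symm
  _ ≤ (1+s)^(2*r) := Real.rpow_le_rpow (by norm_num) (by linarith) (by linarith)

lemma eps_nonneg' {r s : ℝ} (hr0 : 0 ≤ r) (hs : 1 ≤ s) : 0 ≤ ((1+s)^(2*r) - 1)/s := by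
  have h1 := one_le_t' hr0 hs
  have hs0 : (0:ℝ) < s := lt_of_lt_of_le one_pos hs
  exact div_nonneg (by linarith) hs0.le

lemma t_eq' {r s : ℝ} (hs : 1 ≤ s) : (1+s)^(2*r) = 1 + s * (((1+s)^(2*r)-1)/s) := by
  have hs0 : s ≠ 0 := by intro h; rw [h] at hs; norm_num at hs
  field_simp
  ring

lemma eps_ub' {r s : ℝ} (hr0 : 0 < r) (hr2 : r < 1/2) (hs : 1 ≤ s) :
    ((1+s)^(2*r) - 1)/s ≤ 2 * s^(2*r-1) := by
  have hs0 : (0:ℝ) < s := lt_of_lt_of_le one_pos hs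
  have h1 : (1+s)^(2*r) ≤ (2*s)^(2*r) :=
    Real.rpow_le_rpow (by linarith) (by linarith) (by linarith)
  have h2 : (2*s)^(2*r) = 2^(2*r) * s^(2*r) := Real.mul_rpow (by norm_num) hs0.le
  have h3 : (2:ℝ)^(2*r) ≤ 2 := by
    calc (2:ℝ)^(2*r) ≤ 2^(1:ℝ) := Real.rpow_le_rpow_of_exponent_le (by norm_num) (by linarith)
    _ = 2 := Real.rpow_one 2
  have h4 : s^(2*r-1) = s^(2*r)/s := by
    rw [Real.rpow_sub hs0, Real.rpow_one]
  have h5 : (0:ℝ) ≤ s^(2*r) := Real.rpow_nonneg hs0.le _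
  rw [h4, show (2:ℝ) * (s^(2*r)/s) = (2*s^(2*r))/s by ring]
  gcongr
  nlinarith

lemma eps_lb' {r s : ℝ} (hr0 : 0 < r) (hs : 1 ≤ s) (h2 : 2 ≤ s^(2*r)) :
    s^(2*r-1)/2 ≤ ((1+s)^(2*r) - 1)/s := by
  have hs0 : (0:ℝ) < s := lt_of_lt_of_le one_pos hs
  have h1 : s^(2*r) ≤ (1+s)^(2*r) :=
    Real.rpow_le_rpow hs0.le (by linarith) (by positivity)
  have h4 : s^(2*r-1) = s^(2*r)/s := by
    rw [Real.rpow_sub hs0, Real.rpow_one]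
  rw [h4, div_div, div_le_div_iff₀ (by positivity) hs0]
  nlinarith

/-- The family of sets indexed by `Unit ⊕ (Fin K ⊕ Fin K)` used for the union bound. -/
def USet {Ω : Type*} {K : ℕ} (GSD : Ω → ℝ) (GSR GRD : Fin K → Ω → ℝ) (ε : ℝ)
    (f : Fin K → Bool) : (Unit ⊕ (Fin K ⊕ Fin K)) → Set Ω :=
  Sum.elim (fun _ => {ω | GSD ω < ε})
    (Sum.elim (fun j => if f j then {ω | GSR j ω < ε} else Set.univ)
              (fun j => if f j then Set.univ else {ω | GRD j ω < ε}))

/-- The family of sets used for the lower bound. -/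
def LSet {Ω : Type*} {K : ℕ} (GSD : Ω → ℝ) (GSR : Fin K → Ω → ℝ) (ε : ℝ) :
    (Unit ⊕ (Fin K ⊕ Fin K)) → Set Ω :=
  Sum.elim (fun _ => {ω | GSD ω < ε})
    (Sum.elim (fun j => {ω | GSR j ω < ε}) (fun _ => Set.univ))

/-- The negativity null set. -/
def NSet {Ω : Type*} {K : ℕ} (GSD : Ω → ℝ) (GSR GRD : Fin K → Ω → ℝ) : Set Ω :=
  {ω | GSD ω < 0} ∪ ((⋃ j, {ω | GSR j ω < 0}) ∪ ⋃ j, {ω | GRD j ω < 0})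

open scoped Classical in
lemma incl_upper {Ω : Type*} {K : ℕ} (GSD : Ω → ℝ) (GSR GRD : Fin K → Ω → ℝ)
    (s t ε : ℝ) (hs0 : 0 < s) (htε : t = 1 + s * ε) :
    {ω | (1 + s * GSD ω) *
        (1 + s * ∑ j ∈ Finset.univ.filter (fun j => (1:ℝ) + s * GSR j ω ≥ t), GRD j ω) < t}
      ⊆ NSet GSD GSR GRD ∪ ⋃ f : Fin K → Bool, ⋂ i, USet GSD GSR GRD ε f i := by
  intro ω hω
  by_cases hN : ω ∈ NSet GSD GSR GRD
  · exact Set.mem_union_left _ hN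
  right
  simp only [NSet, Set.mem_union, Set.mem_iUnion, Set.mem_setOf_eq, not_or, not_exists,
    not_lt] at hN
  obtain ⟨hSD0, hSR0, hRD0⟩ := hN
  simp only [Set.mem_setOf_eq] at hω
  set Sig := ∑ j ∈ Finset.univ.filter (fun j => (1:ℝ) + s * GSR j ω ≥ t), GRD j ω with hSig
  have hsum0 : 0 ≤ Sig := Finset.sum_nonneg fun j _ => hRD0 j
  have hA1 : (1:ℝ) ≤ 1 + s * GSD ω := by nlinarith [mul_nonneg hs0.le hSD0]
  have hB1 : (1:ℝ) ≤ 1 + s * Sig := by nlinarith [mul_nonneg hs0.le hsum0]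
  have hAt : 1 + s * GSD ω < t := by nlinarith
  have hBt : 1 + s * Sig < t := by nlinarith
  refine Set.mem_iUnion.mpr ⟨fun j => decide ((1:ℝ) + s * GSR j ω < t), Set.mem_iInter.mpr ?_⟩
  rintro (u | j | j)
  · show GSD ω < ε
    rw [htε] at hAt
    nlinarith
  · simp only [USet, Sum.elim_inr, Sum.elim_inl]
    by_cases h : (1:ℝ) + s * GSR j ω < t
    · rw [if_pos (decide_eq_true h)]
      rw [htε] at h
      show GSR j ω < ε
      nlinarith
    · rw [if_neg (by simp [h])]
      trivial
  · simp only [USet, Sum.elim_inr]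
    by_cases h : (1:ℝ) + s * GSR j ω < t
    · rw [if_pos (decide_eq_true h)]
      trivial
    · rw [if_neg (by simp [h])]
      have hjmem : j ∈ Finset.univ.filter (fun j => (1:ℝ) + s * GSR j ω ≥ t) :=
        Finset.mem_filter.mpr ⟨Finset.mem_univ j, not_lt.mp h⟩
      have hle : GRD j ω ≤ Sig := by
        rw [hSig]
        exact Finset.single_le_sum (fun i _ => hRD0 i) hjmem
      show GRD j ω < ε
      rw [htε] at hBt
      nlinarith

open scoped Classical in
lemma incl_lower {Ω : Type*} {K : ℕ} (GSD : Ω → ℝ) (GSR GRD : Fin K → Ω → ℝ)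
    (s t ε : ℝ) (hs0 : 0 < s) (htε : t = 1 + s * ε) :
    (⋂ i, LSet GSD GSR ε i) ⊆
      {ω | (1 + s * GSD ω) *
        (1 + s * ∑ j ∈ Finset.univ.filter (fun j => (1:ℝ) + s * GSR j ω ≥ t), GRD j ω) < t} := by
  intro ω hω
  rw [Set.mem_iInter] at hω
  have hSD : GSD ω < ε := hω (Sum.inl ())
  have hSR : ∀ j, GSR j ω < ε := fun j => hω (Sum.inr (Sum.inl j))
  have hfilter : Finset.univ.filter (fun j => (1:ℝ) + s * GSR j ω ≥ t) = ∅ := by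
    apply Finset.filter_eq_empty_iff.mpr
    intro j _
    have := hSR j
    rw [htε]
    simp only [ge_iff_le, not_le]
    nlinarith
  simp only [Set.mem_setOf_eq, hfilter, Finset.sum_empty, mul_zero, add_zero, mul_one]
  rw [htε]
  nlinarith

end AuxLemmas

/- STATEMENT 0: the diversity-multiplexing tradeoff of the synchronous distributed
space-time-coded cooperative diversity scheme with `K` relays equals `(K+1)(1-2r)`. -/
open scoped Classical in
theorem stmt_0
    {Ω : Type*} [MeasurableSpace Ω] (μ : Measure Ω) [IsProbabilityMeasure μ]
    (K : ℕ) (hK : 1 ≤ K)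
    (GSD : Ω → ℝ) (GSR GRD : Fin K → Ω → ℝ)
    (lamSD : ℝ) (lamSR lamRD : Fin K → ℝ)
    (hlamSD : 0 < lamSD) (hlamSR : ∀ j, 0 < lamSR j) (hlamRD : ∀ j, 0 < lamRD j)
    (hmeasSD : Measurable GSD) (hmeasSR : ∀ j, Measurable (GSR j))
    (hmeasRD : ∀ j, Measurable (GRD j))
    (hindep : iIndepFun
      (Sum.elim (fun _ : Unit => GSD) (Sum.elim GSR GRD)) μ)
    (hlawSD : μ.map GSD = expMeasure lamSD)
    (hlawSR : ∀ j, μ.map (GSR j) = expMeasure (lamSR j))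
    (hlawRD : ∀ j, μ.map (GRD j) = expMeasure (lamRD j))
    (r : ℝ) (hr : r ∈ Set.Ioo (0:ℝ) (1/2))
    (P : ℝ → ℝ)
    (hP : ∀ s : ℝ, P s = (μ {ω |
        (1 + s * GSD ω) *
          (1 + s * ∑ j ∈ Finset.univ.filter
            (fun j => (1:ℝ) + s * GSR j ω ≥ (1+s) ^ (2*r)), GRD j ω)
          < (1+s) ^ (2*r)}).toReal) :
    Tendsto (fun s : ℝ => -Real.log (P s) / Real.log s) atTop
      (nhds (((K : ℝ) + 1) * (1 - 2*r))) := by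
  obtain ⟨hr0, hr2⟩ := hr
  -- constants
  set Λ : ℝ := lamSD + (∑ j, (lamSR j + lamRD j)) + 1 with hΛdef
  have hsum_nonneg : 0 ≤ ∑ j, (lamSR j + lamRD j) :=
    Finset.sum_nonneg fun j _ => add_nonneg (hlamSR j).le (hlamRD j).le
  have hΛpos : 0 < Λ := by rw [hΛdef]; linarith
  have hΛSD : lamSD ≤ Λ := by rw [hΛdef]; linarith
  have hsingle : ∀ j, lamSR j + lamRD j ≤ ∑ i, (lamSR i + lamRD i) := fun j =>
    Finset.single_le_sum (fun i _ => add_nonneg (hlamSR i).le (hlamRD i).le)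
      (Finset.mem_univ j)
  have hΛSR : ∀ j, lamSR j ≤ Λ := fun j => by
    have := hsingle j; have := hlamRD j; rw [hΛdef]; linarith
  have hΛRD : ∀ j, lamRD j ≤ Λ := fun j => by
    have := hsingle j; have := hlamSR j; rw [hΛdef]; linarith
  set A : ℝ := ((K:ℝ)+1)*(1-2*r) with hA
  set card2 : ℝ := (Fintype.card (Fin K → Bool) : ℝ) with hcard2def
  have hcard2 : 0 < card2 := by
    rw [hcard2def]; exact_mod_cast Fintype.card_pos
  set c2 : ℝ := card2 * (2*Λ)^(K+1) with hc2def
  have hc2pos : 0 < c2 := by rw [hc2def]; positivity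
  set cl : ℝ := (lamSD/2) * ∏ j, (lamSR j/2) with hcldef
  have hclpos : 0 < cl := by
    rw [hcldef]
    exact mul_pos (by linarith) (Finset.prod_pos fun j _ => by have := hlamSR j; linarith)
  set c1 : ℝ := cl * (1/2:ℝ)^(K+1) with hc1def
  have hc1pos : 0 < c1 := by rw [hc1def]; positivity
  -- rpow exponent identity
  have hexp_id : ∀ s : ℝ, 0 < s → (s^(2*r-1))^(K+1) = s^(-A) := by
    intro s hs0
    rw [← Real.rpow_natCast (s^(2*r-1)) (K+1), ← Real.rpow_mul hs0.le]
    congr 1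
    rw [hA]; push_cast; ring
  -- UPPER BOUND
  have hub : ∀ s : ℝ, 1 ≤ s → P s ≤ c2 * s ^ (-A) := by
    intro s hs
    have hs0 : (0:ℝ) < s := lt_of_lt_of_le one_pos hs
    set ε : ℝ := ((1+s)^(2*r) - 1)/s with hεdef
    have hε0 : 0 ≤ ε := eps_nonneg' hr0.le hs
    have hεub : ε ≤ 2*s^(2*r-1) := eps_ub' hr0 hr2 hs
    have htε : (1+s)^(2*r) = 1 + s*ε := t_eq' hs
    -- the per-coordinate bound
    have hfac : ∀ (lam : ℝ) (G : Ω → ℝ), 0 < lam → lam ≤ Λ → Measurable G →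
        μ.map G = expMeasure lam → μ {ω | G ω < ε} ≤ ENNReal.ofReal (Λ*ε) := by
      intro lam G hlam hlamΛ hm hlaw
      rw [exp_cdf_lt' μ hlam hm hlaw hε0]
      exact ENNReal.ofReal_le_ofReal
        (le_trans (one_sub_exp_neg_le' _) (mul_le_mul_of_nonneg_right hlamΛ hε0))
    have hmeasS : ∀ (f : Fin K → Bool) i, MeasurableSet[MeasurableSpace.comap
        ((Sum.elim (fun _ : Unit => GSD) (Sum.elim GSR GRD)) i) inferInstance]
        (USet GSD GSR GRD ε f i) := by
      intro f i
      rcases i with u | j | j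
      · exact ⟨Set.Iio ε, measurableSet_Iio, rfl⟩
      · by_cases hfj : f j
        · simp only [USet, Sum.elim_inl, Sum.elim_inr, if_pos hfj]
          exact ⟨Set.Iio ε, measurableSet_Iio, rfl⟩
        · simp only [USet, Sum.elim_inl, Sum.elim_inr, if_neg hfj]
          exact MeasurableSet.univ
      · by_cases hfj : f j
        · simp only [USet, Sum.elim_inl, Sum.elim_inr, if_pos hfj]
          exact MeasurableSet.univ
        · simp only [USet, Sum.elim_inl, Sum.elim_inr, if_neg hfj]
          exact ⟨Set.Iio ε, measurableSet_Iio, rfl⟩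
    have hprod : ∀ f, μ (⋂ i, USet GSD GSR GRD ε f i) = ∏ i, μ (USet GSD GSR GRD ε f i) :=
      fun f => hindep.meas_iInter (hmeasS f)
    have hNnull : μ (NSet GSD GSR GRD) = 0 := by
      rw [NSet]
      refine measure_union_null (exp_neg_null' μ hmeasSD hlawSD) (measure_union_null ?_ ?_)
      · exact measure_iUnion_null fun j => exp_neg_null' μ (hmeasSR j) (hlawSR j)
      · exact measure_iUnion_null fun j => exp_neg_null' μ (hmeasRD j) (hlawRD j)
    -- bound each product
    have hfactor : ∀ f : Fin K → Bool,
        (∏ i, μ (USet GSD GSR GRD ε f i)) ≤ ENNReal.ofReal (Λ*ε) ^ (K+1) := by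
      intro f
      have hhead : μ (USet GSD GSR GRD ε f (Sum.inl ())) ≤ ENNReal.ofReal (Λ*ε) :=
        hfac lamSD GSD hlamSD hΛSD hmeasSD hlawSD
      have hpair : ∀ j, μ (USet GSD GSR GRD ε f (Sum.inr (Sum.inl j))) *
          μ (USet GSD GSR GRD ε f (Sum.inr (Sum.inr j))) ≤ ENNReal.ofReal (Λ*ε) := by
        intro j
        by_cases hfj : f j
        · simp only [USet, Sum.elim_inr, Sum.elim_inl, if_pos hfj, measure_univ, mul_one]
          exact hfac (lamSR j) (GSR j) (hlamSR j) (hΛSR j) (hmeasSR j) (hlawSR j)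
        · simp only [USet, Sum.elim_inr, Sum.elim_inl, if_neg hfj, measure_univ, one_mul]
          exact hfac (lamRD j) (GRD j) (hlamRD j) (hΛRD j) (hmeasRD j) (hlawRD j)
      calc (∏ i, μ (USet GSD GSR GRD ε f i))
          = (∏ u : Unit, μ (USet GSD GSR GRD ε f (Sum.inl u))) *
            ((∏ j, μ (USet GSD GSR GRD ε f (Sum.inr (Sum.inl j)))) *
             ∏ j, μ (USet GSD GSR GRD ε f (Sum.inr (Sum.inr j)))) := by
            rw [Fintype.prod_sum_type, Fintype.prod_sum_type]
        _ = μ (USet GSD GSR GRD ε f (Sum.inl ())) *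
            ∏ j, (μ (USet GSD GSR GRD ε f (Sum.inr (Sum.inl j))) *
              μ (USet GSD GSR GRD ε f (Sum.inr (Sum.inr j)))) := by
            rw [← Finset.prod_mul_distrib]; simp
        _ ≤ ENNReal.ofReal (Λ*ε) * ∏ _j : Fin K, ENNReal.ofReal (Λ*ε) :=
            mul_le_mul' hhead (Finset.prod_le_prod' fun j _ => hpair j)
        _ = ENNReal.ofReal (Λ*ε) ^ (K+1) := by
            rw [Finset.prod_const, Finset.card_univ, Fintype.card_fin, pow_succ']
    -- measure bound
    have hμE : μ {ω | (1 + s * GSD ω) *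
          (1 + s * ∑ j ∈ Finset.univ.filter
            (fun j => (1:ℝ) + s * GSR j ω ≥ (1+s) ^ (2*r)), GRD j ω)
          < (1+s) ^ (2*r)}
        ≤ (Fintype.card (Fin K → Bool) : ℝ≥0∞) * ENNReal.ofReal (Λ*ε) ^ (K+1) := by
      refine le_trans (measure_mono (incl_upper GSD GSR GRD s _ ε hs0 htε)) ?_
      refine le_trans (measure_union_le _ _) ?_
      rw [hNnull, zero_add]
      refine le_trans (measure_iUnion_le _) ?_
      rw [tsum_fintype]
      calc ∑ f : Fin K → Bool, μ (⋂ i, USet GSD GSR GRD ε f i)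
          ≤ ∑ _f : Fin K → Bool, ENNReal.ofReal (Λ*ε) ^ (K+1) :=
            Finset.sum_le_sum fun f _ => le_of_le_of_eq (le_of_eq (hprod f))
              (by rfl) |>.trans (hfactor f)
        _ = (Fintype.card (Fin K → Bool) : ℝ≥0∞) * ENNReal.ofReal (Λ*ε) ^ (K+1) := by
            rw [Finset.sum_const, Finset.card_univ, nsmul_eq_mul]
    -- conclude
    rw [hP s]
    have hRHSne : (Fintype.card (Fin K → Bool) : ℝ≥0∞) * ENNReal.ofReal (Λ*ε) ^ (K+1) ≠ ⊤ := by
      exact ENNReal.mul_ne_top (ENNReal.natCast_ne_top _)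
        (ENNReal.pow_ne_top ENNReal.ofReal_ne_top)
    calc (μ _).toReal ≤ ((Fintype.card (Fin K → Bool) : ℝ≥0∞) *
          ENNReal.ofReal (Λ*ε) ^ (K+1)).toReal := ENNReal.toReal_mono hRHSne hμE
      _ = card2 * (Λ*ε)^(K+1) := by
          rw [ENNReal.toReal_mul, ENNReal.toReal_pow, ENNReal.toReal_ofReal (by positivity),
            ENNReal.toReal_natCast, hcard2def]
      _ ≤ card2 * (Λ*(2*s^(2*r-1)))^(K+1) := by
          gcongr
      _ = c2 * s^(-A) := by
          rw [show Λ*(2*s^(2*r-1)) = (2*Λ)*s^(2*r-1) by ring, mul_pow, hexp_id s hs0, hc2def]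
          ring
  -- LOWER BOUND
  have hlb : ∀ s : ℝ, 1 ≤ s → 2 ≤ s^(2*r) → Λ * (2*s^(2*r-1)) ≤ 1 →
      c1 * s ^ (-A) ≤ P s := by
    intro s hs h2 hΛsmall
    have hs0 : (0:ℝ) < s := lt_of_lt_of_le one_pos hs
    set ε : ℝ := ((1+s)^(2*r) - 1)/s with hεdef
    have hε0 : 0 ≤ ε := eps_nonneg' hr0.le hs
    have hεub : ε ≤ 2*s^(2*r-1) := eps_ub' hr0 hr2 hs
    have hεlb : s^(2*r-1)/2 ≤ ε := eps_lb' hr0 hs h2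
    have htε : (1+s)^(2*r) = 1 + s*ε := t_eq' hs
    have hΛε1 : Λ*ε ≤ 1 :=
      le_trans (mul_le_mul_of_nonneg_left hεub hΛpos.le) hΛsmall
    have hmeasT : ∀ i, MeasurableSet[MeasurableSpace.comap
        ((Sum.elim (fun _ : Unit => GSD) (Sum.elim GSR GRD)) i) inferInstance]
        (LSet GSD GSR ε i) := by
      intro i
      rcases i with u | j | j
      · exact ⟨Set.Iio ε, measurableSet_Iio, rfl⟩
      · exact ⟨Set.Iio ε, measurableSet_Iio, rfl⟩
      · exact MeasurableSet.univ
    have hprodL : μ (⋂ i, LSet GSD GSR ε i) = ∏ i, μ (LSet GSD GSR ε i) :=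
      hindep.meas_iInter hmeasT
    have hLval : μ (⋂ i, LSet GSD GSR ε i) =
        ENNReal.ofReal (1 - Real.exp (-(lamSD*ε))) *
          ∏ j, ENNReal.ofReal (1 - Real.exp (-(lamSR j*ε))) := by
      rw [hprodL, Fintype.prod_sum_type, Fintype.prod_sum_type]
      have h1 : ∀ u : Unit, μ (LSet GSD GSR ε (Sum.inl u)) =
          ENNReal.ofReal (1 - Real.exp (-(lamSD*ε))) := fun u =>
        exp_cdf_lt' μ hlamSD hmeasSD hlawSD hε0
      have h2 : ∀ j, μ (LSet (K := K) GSD GSR ε (Sum.inr (Sum.inl j))) =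
          ENNReal.ofReal (1 - Real.exp (-(lamSR j*ε))) := fun j =>
        exp_cdf_lt' μ (hlamSR j) (hmeasSR j) (hlawSR j) hε0
      have h3 : ∀ j, μ (LSet (K := K) GSD GSR ε (Sum.inr (Sum.inr j))) = 1 := fun j =>
        measure_univ
      simp only [h1, h2, h3, Finset.prod_const_one, mul_one]
      simp
    -- P s is at least the measure of the lower event
    rw [hP s]
    have hmono : μ (⋂ i, LSet GSD GSR ε i) ≤ μ {ω | (1 + s * GSD ω) *
          (1 + s * ∑ j ∈ Finset.univ.filter
            (fun j => (1:ℝ) + s * GSR j ω ≥ (1+s) ^ (2*r)), GRD j ω)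
          < (1+s) ^ (2*r)} :=
      measure_mono (incl_lower GSD GSR GRD s _ ε hs0 htε)
    have hlow : c1 * s^(-A) ≤ (μ (⋂ i, LSet GSD GSR ε i)).toReal := by
      rw [hLval, ENNReal.toReal_mul, ENNReal.toReal_ofReal
        (one_sub_exp_neg_nonneg' (by positivity)), ENNReal.toReal_prod]
      have hterm : ∀ j : Fin K, (ENNReal.ofReal (1 - Real.exp (-(lamSR j*ε)))).toReal =
          1 - Real.exp (-(lamSR j*ε)) := fun j =>
        ENNReal.toReal_ofReal (one_sub_exp_neg_nonneg' (mul_nonneg (hlamSR j).le hε0))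
      simp only [hterm]
      have hSDlb : lamSD*ε/2 ≤ 1 - Real.exp (-(lamSD*ε)) :=
        half_le_one_sub_exp_neg' (mul_nonneg hlamSD.le hε0)
          (le_trans (mul_le_mul_of_nonneg_right hΛSD hε0) hΛε1)
      have hSRlb : ∀ j : Fin K, lamSR j*ε/2 ≤ 1 - Real.exp (-(lamSR j*ε)) := fun j =>
        half_le_one_sub_exp_neg' (mul_nonneg (hlamSR j).le hε0)
          (le_trans (mul_le_mul_of_nonneg_right (hΛSR j) hε0) hΛε1)
      calc c1 * s^(-A) = cl * ((1/2:ℝ)^(K+1) * s^(-A)) := by rw [hc1def]; ring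
        _ ≤ cl * ε^(K+1) := by
            have heq2 : ((1/2:ℝ))^(K+1) * s^(-A) = (s^(2*r-1)/2)^(K+1) := by
              rw [← hexp_id s hs0]; ring
            rw [heq2]
            gcongr
        _ = (lamSD*ε/2) * ∏ j, (lamSR j*ε/2) := by
            have hpr : ∏ j : Fin K, (lamSR j*ε/2) = (∏ j, (lamSR j/2)) * ε^K := by
              rw [Finset.prod_congr rfl (fun j _ => show lamSR j*ε/2 = (lamSR j/2)*ε by ring),
                Finset.prod_mul_distrib, Finset.prod_const, Finset.card_univ, Fintype.card_fin]
            rw [hcldef, hpr]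
            ring
        _ ≤ (1 - Real.exp (-(lamSD*ε))) * ∏ j, (1 - Real.exp (-(lamSR j*ε))) := by
            refine mul_le_mul hSDlb (Finset.prod_le_prod
              (fun j _ => by have := hlamSR j; positivity) (fun j _ => hSRlb j))
              (Finset.prod_nonneg fun j _ => by have := hlamSR j; positivity)
              (one_sub_exp_neg_nonneg' (mul_nonneg hlamSD.le hε0))
    exact le_trans hlow (ENNReal.toReal_mono (measure_ne_top μ _) hmono)
  -- EVENTUAL BOUNDS AND SQUEEZE
  have hevent : ∀ᶠ s : ℝ in atTop,
      c1 * s^(-A) ≤ P s ∧ P s ≤ c2 * s^(-A) ∧ 1 < s := by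
    have h1 : ∀ᶠ s : ℝ in atTop, (2:ℝ) ≤ s^(2*r) :=
      (tendsto_rpow_atTop (by linarith : (0:ℝ) < 2*r)).eventually_ge_atTop 2
    have h2 : ∀ᶠ s : ℝ in atTop, Λ * (2*s^(2*r-1)) ≤ 1 := by
      have ht0 : Tendsto (fun s : ℝ => s^(2*r-1)) atTop (nhds 0) := by
        have := tendsto_rpow_neg_atTop (y := 1-2*r) (by linarith)
        simpa only [show -(1-2*r) = 2*r-1 by ring] using this
      have ht : Tendsto (fun s : ℝ => Λ * (2*s^(2*r-1))) atTop (nhds (Λ * (2*0))) :=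
        (ht0.const_mul 2).const_mul Λ
      simp only [mul_zero] at ht
      exact (ht.eventually_lt_const (by norm_num : (0:ℝ) < 1)).mono fun s hs => hs.le
    filter_upwards [h1, h2, eventually_ge_atTop (1:ℝ), eventually_gt_atTop (1:ℝ)]
      with s hs1 hs2 hs3 hs4
    exact ⟨hlb s hs3 hs1 hs2, hub s hs3, hs4⟩
  -- squeeze
  have hlogtop : Tendsto (fun s : ℝ => Real.log s) atTop atTop := Real.tendsto_log_atTop
  have hinv : Tendsto (fun s : ℝ => (Real.log s)⁻¹) atTop (nhds 0) :=
    hlogtop.inv_tendsto_atTop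
  have hg : Tendsto (fun s : ℝ => A - Real.log c2 * (Real.log s)⁻¹) atTop (nhds A) := by
    have := tendsto_const_nhds (x := A) (f := atTop (α := ℝ)) |>.sub
      (hinv.const_mul (Real.log c2))
    simpa using this
  have hh : Tendsto (fun s : ℝ => A - Real.log c1 * (Real.log s)⁻¹) atTop (nhds A) := by
    have := tendsto_const_nhds (x := A) (f := atTop (α := ℝ)) |>.sub
      (hinv.const_mul (Real.log c1))
    simpa using this
  refine tendsto_of_tendsto_of_tendsto_of_le_of_le' hg hh ?_ ?_
  · filter_upwards [hevent] with s hsall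
    obtain ⟨hl, hu, hs1⟩ := hsall
    have hlogs : 0 < Real.log s := Real.log_pos hs1
    have hs0 : (0:ℝ) < s := lt_trans one_pos hs1
    have hPpos : 0 < P s := lt_of_lt_of_le (by positivity) hl
    have hlogP : Real.log (P s) ≤ Real.log c2 + (-A) * Real.log s := by
      have h := Real.log_le_log hPpos hu
      rwa [Real.log_mul (ne_of_gt hc2pos) (by positivity), Real.log_rpow hs0] at h
    have h' : (A * Real.log s - Real.log c2) / Real.log s ≤
        (-Real.log (P s)) / Real.log s := by
      gcongr
      linarith
    have heq : (A * Real.log s - Real.log c2) / Real.log s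
        = A - Real.log c2 * (Real.log s)⁻¹ := by
      field_simp
    linarith [heq ▸ h']
  · filter_upwards [hevent] with s hsall
    obtain ⟨hl, hu, hs1⟩ := hsall
    have hlogs : 0 < Real.log s := Real.log_pos hs1
    have hs0 : (0:ℝ) < s := lt_trans one_pos hs1
    have hPpos : 0 < P s := lt_of_lt_of_le (by positivity) hl
    have hlogP : Real.log c1 + (-A) * Real.log s ≤ Real.log (P s) := by
      have h := Real.log_le_log (by positivity) hl
      rwa [Real.log_mul (ne_of_gt hc1pos) (by positivity), Real.log_rpow hs0] at h
    have h' : (-Real.log (P s)) / Real.log s ≤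
        (A * Real.log s - Real.log c1) / Real.log s := by
      gcongr
      linarith
    have heq : (A * Real.log s - Real.log c1) / Real.log s
        = A - Real.log c1 * (Real.log s)⁻¹ := by
      field_simp
    linarith [heq ▸ h']
end

section
/- Fix r ∈ (0, 1/2) and let à = {(β₁, β₂) ∈ ℝ² : β₁ ≥ 0, β₂ ≥ 0, max(1−β₁, 0) + max(1−β₂, 0) < 2r}. Then as s → ∞, the integral ∬_{Ã} (ln s)² · s^{−β₁−β₂} dβ₁ dβ₂ is asymptotically equivalent to (2r·ln s)·s^{−(2−2r)}, i.e. the ratio of the integral to (2r·ln s)·s^{−(2−2r)} tends to 1. -/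
open MeasureTheory Filter Asymptotics Real
open scoped Topology

open Set Topology in
private lemma exp_Ioi_int {L : ℝ} (hL : 0 < L) (a : ℝ) :
    ∫ x in Set.Ioi a, Real.exp (-L * x) = Real.exp (-L * a) / L := by
  have hderiv : ∀ x ∈ Set.Ici a,
      HasDerivAt (fun x => -Real.exp (-L * x) / L) (Real.exp (-L * x)) x := by
    intro x _
    have h1 : HasDerivAt (fun x : ℝ => -L * x) (-L * 1) x := (hasDerivAt_id x).const_mul (-L)
    have h2 := (h1.exp).neg.div_const L
    convert h2 using 1
    · rfl
    · rfl
    · rfl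
    · rw [eq_div_iff hL.ne']; ring
  have ht : Tendsto (fun x => -Real.exp (-L * x) / L) atTop (𝓝 (-0 / L)) := by
    refine Tendsto.div_const (Tendsto.neg ?_) _
    exact tendsto_exp_atBot.comp (tendsto_id.const_mul_atTop_of_neg (by linarith))
  have := integral_Ioi_of_hasDerivAt_of_tendsto' hderiv (exp_neg_integrableOn_Ioi a hL) ht
  rw [this]; ring

open Set in
private lemma calc2 {r L : ℝ} (hr0 : 0 < r) (hr2 : r < 1/2) (hL : 0 < L) :
    (∫ p in {p : ℝ × ℝ | 1 - 2*r < p.1 ∧ max (2 - 2*r - p.1) (1 - 2*r) < p.2},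
      Real.exp (-L * p.1) * Real.exp (-L * p.2))
    = 2*r * Real.exp (-L * (2 - 2*r)) / L + Real.exp (-L * (2 - 2*r)) / L^2 := by
  set g : ℝ → ℝ := fun x => max (2 - 2*r - x) (1 - 2*r) with hg
  set T : Set (ℝ × ℝ) := {p : ℝ × ℝ | 1 - 2*r < p.1 ∧ g p.1 < p.2} with hT
  have hgc : Continuous g := (continuous_const.sub continuous_id).max continuous_const
  have hTm : MeasurableSet T := by
    have : T = {p : ℝ × ℝ | 1 - 2*r < p.1} ∩ {p : ℝ × ℝ | g p.1 < p.2} := by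
      ext p; simp [hT, Set.mem_setOf_eq, Set.mem_inter_iff]
    rw [this]
    exact (measurableSet_lt measurable_const measurable_fst).inter
      (measurableSet_lt (hgc.measurable.comp measurable_fst) measurable_snd)
  set f : ℝ × ℝ → ℝ := fun p => Real.exp (-L * p.1) * Real.exp (-L * p.2) with hf
  have hfc : Continuous f := ((continuous_exp.comp (continuous_const.mul continuous_fst)).mul
      (continuous_exp.comp (continuous_const.mul continuous_snd)))
  set F : ℝ × ℝ → ℝ := T.indicator f with hF
  -- integrability
  have hone : IntegrableOn (fun x : ℝ => Real.exp (-L * x)) (Ioi (1 - 2*r)) :=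
    exp_neg_integrableOn_Ioi _ hL
  have hGint : Integrable (fun p : ℝ × ℝ =>
      (Ioi (1 - 2*r)).indicator (fun x => Real.exp (-L * x)) p.1 *
      (Ioi (1 - 2*r)).indicator (fun y => Real.exp (-L * y)) p.2) (volume.prod volume) :=
    Integrable.mul_prod (hone.integrable_indicator measurableSet_Ioi)
      (hone.integrable_indicator measurableSet_Ioi)
  have hFint : Integrable F (volume.prod volume) := by
    refine hGint.mono' ((hfc.measurable.indicator hTm).aestronglyMeasurable) ?_
    refine Filter.Eventually.of_forall fun p => ?_
    by_cases hp : p ∈ T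
    · have hp' : 1 - 2*r < p.1 ∧ g p.1 < p.2 := hp
      obtain ⟨h1, h2⟩ := hp'
      have hp2 : 1 - 2*r < p.2 := lt_of_le_of_lt (le_max_right _ _) h2
      rw [hF, Set.indicator_of_mem hp, Set.indicator_of_mem (show p.1 ∈ Ioi (1-2*r) from h1),
        Set.indicator_of_mem (show p.2 ∈ Ioi (1-2*r) from hp2)]
      rw [Real.norm_eq_abs, abs_of_nonneg (by positivity)]
    · rw [hF, Set.indicator_of_notMem hp, norm_zero]
      exact mul_nonneg (Set.indicator_nonneg (fun x _ => (exp_pos _).le) _)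
        (Set.indicator_nonneg (fun x _ => (exp_pos _).le) _)
  -- Fubini
  rw [← MeasureTheory.integral_indicator hTm, ← hF]
  rw [MeasureTheory.Measure.volume_eq_prod, MeasureTheory.integral_prod _ hFint]
  have hinner : ∀ x : ℝ, (∫ y, F (x, y)) =
      (Ioi (1 - 2*r)).indicator (fun x => Real.exp (-L * x) * Real.exp (-L * g x) / L) x := by
    intro x
    by_cases hx : 1 - 2*r < x
    · rw [Set.indicator_of_mem (show x ∈ Ioi (1-2*r) from hx)]
      have hFy : (fun y => F (x, y)) = (Ioi (g x)).indicator
          (fun y => Real.exp (-L * x) * Real.exp (-L * y)) := by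
        funext y
        by_cases hy : g x < y
        · rw [hF, Set.indicator_of_mem (show (x, y) ∈ T from ⟨hx, hy⟩),
            Set.indicator_of_mem (show y ∈ Ioi (g x) from hy)]
        · rw [hF, Set.indicator_of_notMem (show (x, y) ∉ T from fun h => hy h.2),
            Set.indicator_of_notMem (show y ∉ Ioi (g x) from hy)]
      rw [hFy, MeasureTheory.integral_indicator measurableSet_Ioi,
        MeasureTheory.integral_const_mul, exp_Ioi_int hL, mul_div_assoc]
    · rw [Set.indicator_of_notMem (show x ∉ Ioi (1 - 2*r) from hx)]
      have hFy : (fun y => F (x, y)) = fun _ => (0:ℝ) :=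
        funext fun y => Set.indicator_of_notMem (fun h => hx h.1) _
      rw [hFy, integral_zero]
  simp_rw [hinner]
  rw [MeasureTheory.integral_indicator measurableSet_Ioi]
  -- split the outer integral at 1
  have hsplit : Ioc (1 - 2*r) 1 ∪ Ioi (1:ℝ) = Ioi (1 - 2*r) :=
    Set.Ioc_union_Ioi_eq_Ioi (by linarith)
  set h : ℝ → ℝ := fun x => Real.exp (-L * x) * Real.exp (-L * g x) / L with hh
  have hhc : Continuous h := ((continuous_exp.comp (continuous_const.mul continuous_id)).mul
      (continuous_exp.comp (continuous_const.mul hgc))).div_const L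
  have hB' : IntegrableOn h (Ioi (1:ℝ)) := by
    have base : IntegrableOn (fun x => Real.exp (-L * x) * (Real.exp (-L * (1 - 2*r)) / L))
        (Ioi (1:ℝ)) := (exp_neg_integrableOn_Ioi 1 hL).mul_const _
    refine MeasureTheory.IntegrableOn.congr_fun base ?_ measurableSet_Ioi
    intro x hx
    have hgx : g x = 1 - 2*r := max_eq_right (by simp only [Set.mem_Ioi] at hx; linarith)
    rw [hh]; simp only [hgx]; ring
  rw [← hsplit, MeasureTheory.setIntegral_union (Set.Ioc_disjoint_Ioi le_rfl) measurableSet_Ioi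
    (hhc.integrableOn_Ioc) hB']
  have hA : (∫ x in Ioc (1 - 2*r) 1, h x) = 2*r * Real.exp (-L * (2 - 2*r)) / L := by
    rw [MeasureTheory.setIntegral_congr_fun measurableSet_Ioc
      (g := fun _ => Real.exp (-L * (2 - 2*r)) / L) ?_]
    · rw [MeasureTheory.setIntegral_const, measureReal_def, Real.volume_Ioc,
        ENNReal.toReal_ofReal (by linarith), smul_eq_mul]
      ring
    · intro x hx
      have hgx : g x = 2 - 2*r - x := max_eq_left (by
        simp only [Set.mem_Ioc] at hx; linarith [hx.2])
      rw [hh]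
      simp only [hgx, ← Real.exp_add, show -L*x + -L*(2-2*r-x) = -L*(2-2*r) by ring]
  have hB : (∫ x in Ioi (1:ℝ), h x) = Real.exp (-L * (2 - 2*r)) / L^2 := by
    rw [MeasureTheory.setIntegral_congr_fun measurableSet_Ioi
      (g := fun x => Real.exp (-L * x) * (Real.exp (-L * (1 - 2*r)) / L)) ?_]
    · rw [MeasureTheory.integral_mul_const, exp_Ioi_int hL, div_mul_div_comm, ← Real.exp_add,
        show -L*1 + -L*(1-2*r) = -L*(2-2*r) by ring]
      ring
    · intro x hx
      have hgx : g x = 1 - 2*r := max_eq_right (by simp only [Set.mem_Ioi] at hx; linarith)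
      rw [hh]; simp only [hgx]; ring
  rw [hA, hB]

private lemma main_eq (r : ℝ) (hr : r ∈ Set.Ioo (0:ℝ) (1/2)) {s : ℝ} (hs : 1 < s) :
    (∫ β in {p : ℝ × ℝ | 0 ≤ p.1 ∧ 0 ≤ p.2 ∧
        max (1 - p.1) 0 + max (1 - p.2) 0 < 2*r},
        (Real.log s)^2 * s ^ (-(β.1 + β.2)))
    = (2*r*Real.log s + 1) * s ^ (-(2-2*r)) := by
  obtain ⟨hr0, hr2⟩ := hr
  have hL : 0 < Real.log s := Real.log_pos hs
  have hs0 : 0 < s := by linarith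
  set L := Real.log s with hLdef
  have hset : {p : ℝ × ℝ | 0 ≤ p.1 ∧ 0 ≤ p.2 ∧ max (1 - p.1) 0 + max (1 - p.2) 0 < 2*r}
      = {p : ℝ × ℝ | 1 - 2*r < p.1 ∧ max (2 - 2*r - p.1) (1 - 2*r) < p.2} := by
    ext p
    simp only [Set.mem_setOf_eq, max_lt_iff]
    constructor
    · rintro ⟨h1, h2, h3⟩
      have a1 : 1 - p.1 ≤ max (1 - p.1) 0 := le_max_left _ _
      have a2 : 1 - p.2 ≤ max (1 - p.2) 0 := le_max_left _ _
      have b1 : (0:ℝ) ≤ max (1 - p.1) 0 := le_max_right _ _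
      have b2 : (0:ℝ) ≤ max (1 - p.2) 0 := le_max_right _ _
      exact ⟨by linarith, by linarith, by linarith⟩
    · rintro ⟨h1, h2, h3⟩
      refine ⟨by linarith, by linarith, ?_⟩
      rcases max_cases (1 - p.1) 0 with ⟨e1, _⟩ | ⟨e1, _⟩ <;>
        rcases max_cases (1 - p.2) 0 with ⟨e2, _⟩ | ⟨e2, _⟩ <;>
        rw [e1, e2] <;> linarith
  have hint : ∀ p : ℝ × ℝ, (Real.log s)^2 * s ^ (-(p.1 + p.2)) =
      L^2 * (Real.exp (-L * p.1) * Real.exp (-L * p.2)) := by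
    intro p
    rw [Real.rpow_def_of_pos hs0, ← Real.exp_add, ← hLdef,
      show L * -(p.1 + p.2) = -L * p.1 + -L * p.2 by ring]
  rw [hset, integral_congr_ae (Filter.Eventually.of_forall hint)]
  rw [MeasureTheory.integral_const_mul, calc2 hr0 hr2 hL]
  rw [Real.rpow_def_of_pos hs0, ← hLdef, show L * -(2 - 2*r) = -L * (2 - 2*r) by ring]
  field_simp

/-- asymptotic equivalence of the normalized outage integral
`∬_Ã (ln s)² s^{-β₁-β₂} dβ₁ dβ₂ ~ (2r ln s) s^{-(2-2r)}` as `s → ∞`. -/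
theorem stmt_2 (r : ℝ) (hr : r ∈ Set.Ioo (0:ℝ) (1/2)) :
    (fun s : ℝ => ∫ β in {p : ℝ × ℝ | 0 ≤ p.1 ∧ 0 ≤ p.2 ∧
        max (1 - p.1) 0 + max (1 - p.2) 0 < 2*r},
        (Real.log s)^2 * s ^ (-(β.1 + β.2)))
      ~[atTop] (fun s : ℝ => (2*r*Real.log s) * s ^ (-(2-2*r))) := by
  obtain ⟨hr0, hr2⟩ := hr
  rw [isEquivalent_iff_tendsto_one ?hnz]
  case hnz =>
    filter_upwards [eventually_gt_atTop (1:ℝ)] with s hs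
    have hL : 0 < Real.log s := Real.log_pos hs
    have hs0 : 0 < s := by linarith
    positivity
  have key : Tendsto (fun s : ℝ => 1 + (2*r*Real.log s)⁻¹) atTop (𝓝 1) := by
    have h1 : Tendsto (fun s : ℝ => 2*r*Real.log s) atTop atTop :=
      Real.tendsto_log_atTop.const_mul_atTop (by linarith)
    simpa using tendsto_const_nhds.add h1.inv_tendsto_atTop
  refine key.congr' ?_
  filter_upwards [eventually_gt_atTop (1:ℝ)] with s hs
  have hL : 0 < Real.log s := Real.log_pos hs
  have hs0 : 0 < s := by linarith
  have hX : 0 < s ^ (-(2-2*r)) := Real.rpow_pos_of_pos hs0 _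
  simp only [Pi.div_apply]
  rw [main_eq r ⟨hr0, hr2⟩ hs]
  rw [eq_div_iff (by positivity)]
  field_simp
end

section
/- Let G_{S,D}, G_{S,R_1}, G_{S,R_2}, G_{R_1,D} be independent random variables, each exponentially distributed with rates λ_{S,D}, λ_{S,R_1}, λ_{S,R_2}, λ_{R_1,D} > 0 respectively, and fix r ∈ (0, 1/2). Then as s → ∞, Pr[{1+sG_{S,R_1} ≥ (1+s)^{2r}} ∩ {1+sG_{S,R_2} < (1+s)^{2r}} ∩ {(1+sG_{S,D})·(1+sG_{R_1,D}) < (1+s)^{2r}}] is asymptotically equivalent to λ_{S,R_2}·λ_{S,D}·λ_{R_1,D}·(2r·ln s)·s^{−(3−4r)}. -/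
set_option maxHeartbeats 1000000

open MeasureTheory ProbabilityTheory Filter Asymptotics Real Set
open scoped ENNReal Topology

section Aux

lemma expM_Iic {r : ℝ} (hr : 0 < r) (x : ℝ) :
    expMeasure r (Iic x) = ENNReal.ofReal (1 - rexp (-(r*x))) := by
  rw [expMeasure, gammaMeasure, withDensity_apply _ measurableSet_Iic]
  have : (∫⁻ y in Iic x, gammaPDF 1 r y) = ∫⁻ y in Iic x, exponentialPDF r y := rfl
  rw [this, lintegral_exponentialPDF_eq_antiDeriv hr x]
  split_ifs with h
  · rfl
  · rw [ENNReal.ofReal_zero, eq_comm, ENNReal.ofReal_eq_zero]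
    have : (1:ℝ) ≤ rexp (-(r*x)) := by
      rw [← Real.exp_zero, Real.exp_le_exp]
      nlinarith [le_of_not_ge h]
    linarith

lemma expM_singleton {r : ℝ} (x : ℝ) : expMeasure r {x} = 0 := by
  rw [expMeasure, gammaMeasure, withDensity_apply _ (measurableSet_singleton x)]
  rw [setLIntegral_measure_zero _ _ (measure_singleton x)]

lemma expM_Iio {r : ℝ} (hr : 0 < r) (x : ℝ) :
    expMeasure r (Iio x) = ENNReal.ofReal (1 - rexp (-(r*x))) := by
  have h : Iic x = Iio x ∪ {x} := by
    ext y; simp [le_iff_lt_or_eq]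
  have h2 := expM_Iic hr x
  rw [h, measure_congr (union_ae_eq_left_of_ae_eq_empty
    (by rw [ae_eq_empty]; exact expM_singleton x))] at h2
  exact h2

lemma expM_Ici {r : ℝ} (hr : 0 < r) {x : ℝ} (hx : 0 ≤ x) :
    expMeasure r (Ici x) = ENNReal.ofReal (rexp (-(r*x))) := by
  have : IsProbabilityMeasure (expMeasure r) := isProbabilityMeasure_expMeasure hr
  have hc : Ici x = (Iio x)ᶜ := by simp
  rw [hc, measure_compl measurableSet_Iio (measure_ne_top _ _), expM_Iio hr,
    measure_univ]
  have he : rexp (-(r*x)) ≤ 1 := by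
    rw [← Real.exp_zero, Real.exp_le_exp]; nlinarith
  rw [show (1:ℝ≥0∞) = ENNReal.ofReal 1 by simp, ← ENNReal.ofReal_sub _ (by linarith)]
  norm_num

lemma prod_outage {l0 l3 : ℝ} (hl0 : 0 < l0) (hl3 : 0 < l3) {s T : ℝ} (hs : 0 < s) (hT : 1 < T) :
    ((expMeasure l0).prod (expMeasure l3)) {p : ℝ × ℝ | (1 + s * p.1) * (1 + s * p.2) < T}
    = ENNReal.ofReal (∫ x in Ioc 0 ((T-1)/s),
        l0 * rexp (-(l0 * x)) * (1 - rexp (-(l3 * ((T / (1 + s*x) - 1) / s))))) := by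
  have hprob0 : IsProbabilityMeasure (expMeasure l0) := isProbabilityMeasure_expMeasure hl0
  have hprob3 : IsProbabilityMeasure (expMeasure l3) := isProbabilityMeasure_expMeasure hl3
  set a : ℝ := (T-1)/s with ha
  have ha0 : 0 < a := div_pos (by linarith) hs
  set g : ℝ → ℝ := fun x => l0 * rexp (-(l0 * x)) * (1 - rexp (-(l3 * ((T / (1 + s*x) - 1) / s)))) with hg
  have hSmeas : MeasurableSet {p : ℝ × ℝ | (1 + s * p.1) * (1 + s * p.2) < T} := by
    apply measurableSet_lt _ measurable_const
    fun_prop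
  rw [Measure.prod_apply hSmeas]
  rw [show expMeasure l0 = Measure.withDensity volume (exponentialPDF l0) from rfl]
  have hpdfmeas : Measurable (exponentialPDF l0) :=
    (measurable_exponentialPDFReal l0).ennreal_ofReal
  rw [lintegral_withDensity_eq_lintegral_mul volume hpdfmeas
    (measurable_measure_prodMk_left hSmeas)]
  have hkey : ∀ᵐ x ∂volume,
      ((fun x => exponentialPDF l0 x) * fun x =>
        (expMeasure l3) (Prod.mk x ⁻¹' {p : ℝ × ℝ | (1 + s * p.1) * (1 + s * p.2) < T})) x
      = (Ioc 0 a).indicator (fun x => ENNReal.ofReal (g x)) x := by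
    filter_upwards [compl_mem_ae_iff.mpr (volume_singleton (a := (0:ℝ)))] with x hx0
    simp only [Pi.mul_apply]
    rcases lt_trichotomy x 0 with hx | hx | hx
    · rw [exponentialPDF_of_neg hx, zero_mul, indicator_of_notMem (by simp [ha]; intro h; linarith)]
    · exact absurd hx (by simpa using hx0)
    · have h1sx : (0:ℝ) < 1 + s * x := by nlinarith
      have hslice : Prod.mk x ⁻¹' {p : ℝ × ℝ | (1 + s * p.1) * (1 + s * p.2) < T}
          = Iio ((T / (1 + s*x) - 1) / s) := by
        ext y
        simp only [mem_preimage, mem_setOf_eq, mem_Iio]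
        rw [lt_div_iff₀ hs, ← lt_div_iff₀' h1sx]
        constructor <;> intro h <;> linarith
      rw [hslice, expM_Iio hl3, exponentialPDF_of_nonneg hx.le,
        ← ENNReal.ofReal_mul (by positivity)]
      by_cases hxa : x ≤ a
      · rw [indicator_of_mem (by exact ⟨hx, hxa⟩)]
      · rw [indicator_of_notMem (by simp [hxa])]
        rw [ENNReal.ofReal_eq_zero]
        have hcneg : (T / (1 + s*x) - 1) / s < 0 := by
          apply div_neg_of_neg_of_pos _ hs
          push_neg at hxa
          rw [ha, div_lt_iff₀ hs] at hxa
          have : T < 1 + s * x := by linarith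
          have := (div_lt_one h1sx).mpr this
          linarith
        have h1E : (1:ℝ) ≤ rexp (-(l3 * ((T / (1 + s*x) - 1) / s))) :=
          Real.one_le_exp_iff.mpr (by nlinarith)
        exact mul_nonpos_of_nonneg_of_nonpos (by positivity) (by linarith)
  rw [lintegral_congr_ae hkey, lintegral_indicator measurableSet_Ioc _]
  have hcont : ContinuousOn g (Icc 0 a) := by
    apply ContinuousOn.mul (by fun_prop)
    apply ContinuousOn.sub continuousOn_const
    apply ContinuousOn.rexp
    apply ContinuousOn.neg
    apply ContinuousOn.mul continuousOn_const
    apply ContinuousOn.div_const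
    apply ContinuousOn.sub _ continuousOn_const
    apply ContinuousOn.div continuousOn_const (by fun_prop)
    intro x hx
    have : (0:ℝ) ≤ x := hx.1
    nlinarith
  have hint : IntegrableOn g (Ioc 0 a) volume :=
    (hcont.integrableOn_Icc).mono_set Ioc_subset_Icc_self
  have hnn : 0 ≤ᵐ[volume.restrict (Ioc 0 a)] g := by
    rw [EventuallyLE, ae_restrict_iff' measurableSet_Ioc]
    apply ae_of_all
    intro x hx
    have hx0 : 0 < x := hx.1
    have hxa : x ≤ a := hx.2
    have h1sx : (0:ℝ) < 1 + s * x := by nlinarith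
    have hc : 0 ≤ (T / (1 + s*x) - 1) / s := by
      apply div_nonneg _ hs.le
      have h1 : 1 + s * x ≤ T := by
        rw [ha, le_div_iff₀ hs] at hxa
        linarith
      have := (one_le_div h1sx).mpr h1
      linarith
    have : rexp (-(l3 * ((T / (1 + s*x) - 1) / s))) ≤ 1 :=
      Real.exp_le_one_iff.mpr (by nlinarith)
    simp only [Pi.zero_apply, hg]
    exact mul_nonneg (by positivity) (by linarith)
  rw [← ofReal_integral_eq_lintegral_ofReal hint hnn]


lemma integral_c {s T : ℝ} (hs : 0 < s) (hT : 1 < T) :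
    ∫ x in Ioc 0 ((T-1)/s), (T / (1 + s*x) - 1)
    = (T/s) * Real.log T - (T-1)/s := by
  set a : ℝ := (T-1)/s with ha
  have ha0 : 0 < a := div_pos (by linarith) hs
  have hpos : ∀ x ∈ Icc (0:ℝ) a, (0:ℝ) < 1 + s * x := fun x hx => by nlinarith [hx.1]
  rw [← intervalIntegral.integral_of_le ha0.le]
  have hderiv : ∀ x ∈ uIcc (0:ℝ) a,
      HasDerivAt (fun y => (T/s) * Real.log (1 + s*y) - y) (T / (1 + s*x) - 1) x := by
    intro x hx
    rw [uIcc_of_le ha0.le] at hx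
    have h1 : (0:ℝ) < 1 + s * x := hpos x hx
    have : HasDerivAt (fun y => 1 + s*y) s x := by
      simpa using (hasDerivAt_id x).const_mul s |>.const_add 1
    have hlog := this.log h1.ne'
    have := (hlog.const_mul (T/s)).sub (hasDerivAt_id x)
    rw [show T / (1 + s*x) = T/s * (s/(1+s*x)) by
      rw [div_mul_div_comm, mul_comm T s, mul_div_mul_left _ _ hs.ne']]
    exact this
  have hcont : ContinuousOn (fun x => T / (1 + s*x) - 1) (uIcc (0:ℝ) a) := by
    rw [uIcc_of_le ha0.le]
    apply ContinuousOn.sub _ continuousOn_const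
    exact ContinuousOn.div continuousOn_const (by fun_prop) (fun x hx => (hpos x hx).ne')
  rw [intervalIntegral.integral_eq_sub_of_hasDerivAt hderiv hcont.intervalIntegrable]
  have h1 : 1 + s * a = T := by rw [ha]; field_simp; ring
  rw [h1]
  norm_num

lemma g_contOn {l0 l3 s T : ℝ} (hs : 0 < s) :
    ContinuousOn (fun x => l0 * rexp (-(l0 * x)) * (1 - rexp (-(l3 * ((T / (1 + s*x) - 1) / s)))))
      (Icc 0 ((T-1)/s)) := by
  apply ContinuousOn.mul (by fun_prop)
  apply ContinuousOn.sub continuousOn_const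
  apply ContinuousOn.rexp
  apply ContinuousOn.neg
  apply ContinuousOn.mul continuousOn_const
  apply ContinuousOn.div_const
  apply ContinuousOn.sub _ continuousOn_const
  apply ContinuousOn.div continuousOn_const (by fun_prop)
  intro x hx
  have : (0:ℝ) ≤ x := hx.1
  nlinarith

lemma c_contOn {s T : ℝ} (hs : 0 < s) :
    ContinuousOn (fun x => T / (1 + s*x) - 1) (Icc 0 ((T-1)/s)) := by
  apply ContinuousOn.sub _ continuousOn_const
  apply ContinuousOn.div continuousOn_const (by fun_prop)
  intro x hx
  have : (0:ℝ) ≤ x := hx.1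
  nlinarith

lemma P3_bounds {l0 l3 s T : ℝ} (hl0 : 0 < l0) (hl3 : 0 < l3) (hs : 0 < s) (hT : 1 < T)
    (h0 : l0 * ((T-1)/s) ≤ 1) (h3 : l3 * ((T-1)/s) ≤ 1) :
    (1 - l0*((T-1)/s)) * (1 - l3*((T-1)/s)) * (l0*l3/s * ((T/s)*Real.log T - (T-1)/s))
      ≤ (∫ x in Ioc 0 ((T-1)/s),
          l0 * rexp (-(l0 * x)) * (1 - rexp (-(l3 * ((T / (1 + s*x) - 1) / s)))))
    ∧ (∫ x in Ioc 0 ((T-1)/s),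
          l0 * rexp (-(l0 * x)) * (1 - rexp (-(l3 * ((T / (1 + s*x) - 1) / s)))))
      ≤ l0*l3/s * ((T/s)*Real.log T - (T-1)/s) := by
  set t : ℝ := (T-1)/s with hta
  have ht0 : 0 < t := div_pos (by linarith) hs
  have hgi : IntegrableOn (fun x =>
      l0 * rexp (-(l0 * x)) * (1 - rexp (-(l3 * ((T / (1 + s*x) - 1) / s))))) (Ioc 0 t) volume :=
    ((g_contOn (l0 := l0) (l3 := l3) hs).integrableOn_Icc).mono_set Ioc_subset_Icc_self
  have hci : IntegrableOn (fun x => l0*l3/s * (T / (1 + s*x) - 1)) (Ioc 0 t) volume :=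
    (((c_contOn (T := T) hs).integrableOn_Icc).mono_set Ioc_subset_Icc_self).const_mul _
  have hcieq : (∫ x in Ioc 0 t, l0*l3/s * (T / (1 + s*x) - 1))
      = l0*l3/s * ((T/s)*Real.log T - t) := by
    rw [integral_const_mul _ _, integral_c hs hT]
  -- pointwise facts
  have hfacts : ∀ x ∈ Ioc (0:ℝ) t,
      0 ≤ (T / (1 + s*x) - 1) / s ∧ (T / (1 + s*x) - 1) / s ≤ t ∧ (0:ℝ) < 1 + s * x := by
    intro x hx
    have hx0 : 0 < x := hx.1
    have hxt : x ≤ t := hx.2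
    have h1sx : (0:ℝ) < 1 + s * x := by nlinarith
    refine ⟨div_nonneg ?_ hs.le, ?_, h1sx⟩
    · have h1 : 1 + s * x ≤ T := by
        rw [hta, le_div_iff₀ hs] at hxt; linarith
      have := (one_le_div h1sx).mpr h1
      linarith
    · rw [hta, div_le_div_iff₀ hs hs]
      have hTx : T / (1 + s*x) ≤ T := by
        apply div_le_self (by linarith) (by nlinarith)
      nlinarith
  constructor
  · calc (1 - l0*t) * (1 - l3*t) * (l0*l3/s * ((T/s)*Real.log T - t))
        = ∫ x in Ioc 0 t, (1 - l0*t) * (1 - l3*t) * (l0*l3/s * (T / (1 + s*x) - 1)) := by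
          rw [integral_const_mul _ _, hcieq]
      _ ≤ _ := by
          apply setIntegral_mono_on (hci.const_mul _) hgi measurableSet_Ioc
          intro x hx
          obtain ⟨hc0, hct, h1sx⟩ := hfacts x hx
          have hx0 : 0 < x := hx.1
          have hxt : x ≤ t := hx.2
          set c : ℝ := (T / (1 + s*x) - 1) / s with hc
          have hcs : l0*l3/s * (T / (1 + s*x) - 1) = l0 * (l3 * c) := by
            rw [hc]; field_simp
          rw [hcs]
          have hA : 1 - l0 * t ≤ rexp (-(l0 * x)) := by
            have := Real.add_one_le_exp (-(l0 * x))
            nlinarith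
          have hA0 : 0 ≤ 1 - l0 * t := by linarith
          have hB : (l3 * c) * (1 - l3 * t) ≤ 1 - rexp (-(l3 * c)) := by
            have h1 := Real.add_one_le_exp (l3 * c)
            have h2 := Real.add_one_le_exp (-(l3 * c))
            have hE : rexp (-(l3 * c)) = (rexp (l3 * c))⁻¹ := by
              rw [← Real.exp_neg]
            have hEpos := exp_pos (l3 * c)
            have hu0 : 0 ≤ l3 * c := mul_nonneg hl3.le hc0
            have hut : l3 * c ≤ l3 * t := by nlinarith
            -- 1 - e^{-u} ≥ u e^{-u} ≥ u (1 - u) ≥ u (1 - l3 t)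
            have key : (l3 * c) * rexp (-(l3 * c)) ≤ 1 - rexp (-(l3 * c)) := by
              rw [hE]
              rw [mul_inv_le_iff₀ hEpos, sub_mul, one_mul, inv_mul_cancel₀ hEpos.ne']
              nlinarith
            nlinarith
          have hB0 : 0 ≤ (l3 * c) * (1 - l3 * t) := by
            have hu0 : 0 ≤ l3 * c := mul_nonneg hl3.le hc0
            nlinarith
          calc (1 - l0*t) * (1 - l3*t) * (l0 * (l3 * c))
              = l0 * ((1 - l0*t) * ((l3 * c) * (1 - l3 * t))) := by ring
            _ ≤ l0 * (rexp (-(l0 * x)) * (1 - rexp (-(l3 * c)))) := by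
                apply mul_le_mul_of_nonneg_left _ hl0.le
                apply mul_le_mul hA hB hB0 (exp_pos _).le
            _ = _ := by ring
  · calc (∫ x in Ioc 0 t, l0 * rexp (-(l0 * x)) * (1 - rexp (-(l3 * ((T / (1 + s*x) - 1) / s)))))
        ≤ ∫ x in Ioc 0 t, l0*l3/s * (T / (1 + s*x) - 1) := by
          apply setIntegral_mono_on hgi hci measurableSet_Ioc
          intro x hx
          obtain ⟨hc0, hct, h1sx⟩ := hfacts x hx
          have hx0 : 0 < x := hx.1
          set c : ℝ := (T / (1 + s*x) - 1) / s with hc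
          have hcs : l0*l3/s * (T / (1 + s*x) - 1) = l0 * (l3 * c) := by
            rw [hc]; field_simp
          rw [hcs]
          have hE1 : rexp (-(l0 * x)) ≤ 1 := Real.exp_le_one_iff.mpr (by nlinarith)
          have hB : 1 - rexp (-(l3 * c)) ≤ l3 * c := by
            have := Real.add_one_le_exp (-(l3 * c))
            nlinarith
          have hBnn : 0 ≤ 1 - rexp (-(l3 * c)) := by
            have : rexp (-(l3 * c)) ≤ 1 := Real.exp_le_one_iff.mpr (by nlinarith)
            linarith
          calc l0 * rexp (-(l0 * x)) * (1 - rexp (-(l3 * c)))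
              ≤ l0 * 1 * (l3 * c) := by
                apply mul_le_mul _ hB hBnn (by nlinarith [exp_pos (-(l0*x))])
                nlinarith [exp_pos (-(l0*x))]
            _ = l0 * (l3 * c) := by ring
      _ = l0*l3/s * ((T/s)*Real.log T - t) := hcieq


lemma lim_ratio' : Tendsto (fun s : ℝ => (1+s)/s) atTop (𝓝 1) := by
  have h0 : Tendsto (fun s : ℝ => s⁻¹) atTop (𝓝 0) := tendsto_inv_atTop_zero
  have h : Tendsto (fun s : ℝ => s⁻¹ + 1) atTop (𝓝 (0+1)) := h0.add tendsto_const_nhds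
  rw [zero_add] at h
  apply h.congr'
  filter_upwards [eventually_gt_atTop (0:ℝ)] with s hs
  field_simp

-- ((1+s)/s)^ρ → 1
lemma lim_rpow_ratio {ρ : ℝ} : Tendsto (fun s : ℝ => ((1+s)/s) ^ ρ) atTop (𝓝 1) := by
  have hc : ContinuousAt (fun x : ℝ => x ^ ρ) 1 :=
    Real.continuousAt_rpow_const 1 ρ (Or.inl one_ne_zero)
  have := hc.tendsto.comp lim_ratio'
  simpa [Function.comp_def] using this

-- log(1+s)/log s → 1
lemma lim_log_ratio : Tendsto (fun s : ℝ => Real.log (1+s) / Real.log s) atTop (𝓝 1) := by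
  have h1 : Tendsto (fun s : ℝ => Real.log (1 + s⁻¹)) atTop (𝓝 0) := by
    have hc : ContinuousAt Real.log 1 := Real.continuousAt_log one_ne_zero
    have h : Tendsto (fun s : ℝ => 1 + s⁻¹) atTop (𝓝 (1+0)) :=
      tendsto_const_nhds.add tendsto_inv_atTop_zero
    rw [add_zero] at h
    simpa [Function.comp_def] using hc.tendsto.comp h
  have h2 : Tendsto (fun s : ℝ => (Real.log s)⁻¹) atTop (𝓝 0) :=
    Real.tendsto_log_atTop.inv_tendsto_atTop
  have h : Tendsto (fun s : ℝ => 1 + Real.log (1 + s⁻¹) * (Real.log s)⁻¹) atTop (𝓝 (1 + 0*0)) :=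
    tendsto_const_nhds.add (h1.mul h2)
  norm_num at h
  apply h.congr'
  filter_upwards [eventually_gt_atTop (1:ℝ)] with s hs
  have hs0 : (0:ℝ) < s := by linarith
  have hls : Real.log s ≠ 0 := (Real.log_pos hs).ne'
  have : (1:ℝ) + s = s * (1 + s⁻¹) := by field_simp; ring
  rw [this, Real.log_mul hs0.ne' (by positivity)]
  field_simp

-- ((1+s)^ρ - 1)/s^ρ → 1, for ρ > 0
lemma lim_one {ρ : ℝ} (hρ : 0 < ρ) :
    Tendsto (fun s : ℝ => ((1+s) ^ ρ - 1) / s ^ ρ) atTop (𝓝 1) := by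
  have h2 : Tendsto (fun s : ℝ => (s ^ ρ)⁻¹) atTop (𝓝 0) :=
    (tendsto_rpow_atTop hρ).inv_tendsto_atTop
  have h : Tendsto (fun s : ℝ => ((1+s)/s) ^ ρ - (s ^ ρ)⁻¹) atTop (𝓝 (1 - 0)) :=
    lim_rpow_ratio.sub h2
  norm_num at h
  apply h.congr'
  filter_upwards [eventually_gt_atTop (0:ℝ)] with s hs
  rw [Real.div_rpow (by linarith) hs.le]
  have : s ^ ρ ≠ 0 := (Real.rpow_pos_of_pos hs ρ).ne'
  field_simp

-- t s → 0
lemma lim_t0 {ρ : ℝ} (hρ0 : 0 < ρ) (hρ1 : ρ < 1) :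
    Tendsto (fun s : ℝ => ((1+s) ^ ρ - 1) / s) atTop (𝓝 0) := by
  have h2 : Tendsto (fun s : ℝ => s ^ (ρ - 1)) atTop (𝓝 0) := by
    have := tendsto_rpow_neg_atTop (y := 1 - ρ) (by linarith)
    apply this.congr'
    filter_upwards [eventually_gt_atTop (0:ℝ)] with s hs
    norm_num
  have h : Tendsto (fun s : ℝ => (((1+s) ^ ρ - 1) / s ^ ρ) * s ^ (ρ - 1)) atTop (𝓝 (1 * 0)) :=
    (lim_one hρ0).mul h2
  norm_num at h
  apply h.congr'
  filter_upwards [eventually_gt_atTop (0:ℝ)] with s hs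
  have hsρ : s ^ ρ ≠ 0 := (Real.rpow_pos_of_pos hs ρ).ne'
  have key : s ^ (ρ - 1) * s = s ^ ρ := by
    rw [← Real.rpow_add_one hs.ne' (ρ - 1)]; ring_nf
  field_simp
  rw [← key]; ring

-- (1 - exp(-v))/v → 1 as v → 0, v ≠ 0
lemma lim_one_sub_exp : Tendsto (fun v : ℝ => (1 - rexp (-v)) / v) (𝓝[≠] (0:ℝ)) (𝓝 1) := by
  have h := Real.hasDerivAt_exp 0
  rw [hasDerivAt_iff_tendsto_slope] at h
  rw [Real.exp_zero] at h
  have hneg : Tendsto (fun v : ℝ => -v) (𝓝[≠] (0:ℝ)) (𝓝[≠] (0:ℝ)) := by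
    rw [tendsto_nhdsWithin_iff]
    constructor
    · have h0 : Tendsto (fun v : ℝ => -v) (𝓝 (0:ℝ)) (𝓝 (-0 : ℝ)) := continuous_neg.tendsto 0
      rw [neg_zero] at h0
      exact h0.mono_left nhdsWithin_le_nhds
    · filter_upwards [self_mem_nhdsWithin] with v hv
      simp only [mem_compl_iff, mem_singleton_iff] at hv ⊢
      exact neg_ne_zero.mpr hv
  have := h.comp hneg
  apply this.congr'
  filter_upwards [self_mem_nhdsWithin] with v hv
  simp only [mem_compl_iff, mem_singleton_iff] at hv
  simp only [Function.comp_apply, slope_def_field, Real.exp_zero]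
  rw [sub_zero, div_neg, eq_comm, div_eq_iff hv, neg_mul, div_mul_cancel₀ _ hv]
  ring

end Aux

lemma g_int_nonneg {l0 l3 s T : ℝ} (hl0 : 0 < l0) (hl3 : 0 < l3) (hs : 0 < s) :
    0 ≤ ∫ x in Ioc 0 ((T-1)/s),
        l0 * rexp (-(l0 * x)) * (1 - rexp (-(l3 * ((T / (1 + s*x) - 1) / s)))) := by
  apply setIntegral_nonneg measurableSet_Ioc
  intro x hx
  have hx0 : 0 < x := hx.1
  have hxa : x ≤ (T-1)/s := hx.2
  have h1sx : (0:ℝ) < 1 + s*x := by nlinarith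
  have hc : 0 ≤ (T / (1 + s*x) - 1) / s := by
    apply div_nonneg _ hs.le
    have h1 : 1 + s*x ≤ T := by rw [le_div_iff₀ hs] at hxa; linarith
    have := (one_le_div h1sx).mpr h1
    linarith
  have hE : rexp (-(l3 * ((T / (1 + s*x) - 1) / s))) ≤ 1 :=
    Real.exp_le_one_iff.mpr (by nlinarith)
  exact mul_nonneg (by positivity) (by linarith)

/-- the probability that exactly relay 1 decodes and the resulting
two-branch channel is in outage is asymptotically
`λ_{S,R₂} λ_{S,D} λ_{R₁,D} (2r ln s) s^{-(3-4r)}` as `s → ∞`. -/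
theorem stmt_4
    {Ω : Type*} [MeasurableSpace Ω] (μ : Measure Ω) [IsProbabilityMeasure μ]
    (G : Fin 4 → Ω → ℝ) (lamSD lamSR1 lamSR2 lamRD1 : ℝ)
    (hlamSD : 0 < lamSD) (hlamSR1 : 0 < lamSR1) (hlamSR2 : 0 < lamSR2)
    (hlamRD1 : 0 < lamRD1)
    (hmeas : ∀ i, Measurable (G i))
    (hindep : iIndepFun G μ)
    (hlaw0 : μ.map (G 0) = expMeasure lamSD)
    (hlaw1 : μ.map (G 1) = expMeasure lamSR1)
    (hlaw2 : μ.map (G 2) = expMeasure lamSR2)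
    (hlaw3 : μ.map (G 3) = expMeasure lamRD1)
    (r : ℝ) (hr : r ∈ Set.Ioo (0:ℝ) (1/2)) :
    (fun s : ℝ => (μ ({ω | 1 + s * G 1 ω ≥ (1+s) ^ (2*r)}
        ∩ {ω | 1 + s * G 2 ω < (1+s) ^ (2*r)}
        ∩ {ω | (1 + s * G 0 ω) * (1 + s * G 3 ω) < (1+s) ^ (2*r)})).toReal)
      ~[atTop]
      (fun s : ℝ => lamSR2 * lamSD * lamRD1 * (2*r*Real.log s) * s ^ (-(3-4*r))) := by
  obtain ⟨hr0, hr1⟩ := hr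
  have hρ0 : 0 < 2*r := by linarith
  have hρ1 : 2*r < 1 := by linarith
  set p1 : ℝ → ℝ := fun s => rexp (-(lamSR1 * (((1+s) ^ (2*r) - 1)/s))) with hp1
  set p2 : ℝ → ℝ := fun s => 1 - rexp (-(lamSR2 * (((1+s) ^ (2*r) - 1)/s))) with hp2
  set P3 : ℝ → ℝ := fun s => ∫ x in Ioc 0 ((((1+s) ^ (2*r)) - 1)/s),
      lamSD * rexp (-(lamSD * x)) *
        (1 - rexp (-(lamRD1 * (((1+s) ^ (2*r) / (1 + s*x) - 1) / s)))) with hP3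
  set W : ℝ → ℝ := fun s => lamSD*lamRD1/s *
      ((1+s) ^ (2*r)/s * Real.log ((1+s) ^ (2*r)) - ((1+s) ^ (2*r) - 1)/s) with hW
  set d2 : ℝ → ℝ := fun s => lamSD*lamRD1*(2*r*Real.log s) * s ^ (2*r-2) with hd2
  set K : ℝ → ℝ := fun s => (1 - lamSD * (((1+s) ^ (2*r) - 1)/s))
      * (1 - lamRD1 * (((1+s) ^ (2*r) - 1)/s)) with hK
  have hTgt : ∀ s : ℝ, 0 < s → 1 < (1+s) ^ (2*r) := by
    intro s hs
    exact (Real.one_lt_rpow_iff_of_pos (by linarith)).mpr (Or.inl ⟨by linarith, hρ0⟩)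
  have htt0 : ∀ s : ℝ, 0 < s → 0 < ((1+s) ^ (2*r) - 1)/s := by
    intro s hs
    exact div_pos (by linarith [hTgt s hs]) hs
  -- Step 1: factorization of the probability
  have hev : ∀ᶠ s in atTop, (μ ({ω | 1 + s * G 1 ω ≥ (1+s) ^ (2*r)}
        ∩ {ω | 1 + s * G 2 ω < (1+s) ^ (2*r)}
        ∩ {ω | (1 + s * G 0 ω) * (1 + s * G 3 ω) < (1+s) ^ (2*r)})).toReal
      = p1 s * p2 s * P3 s := by
    filter_upwards [eventually_gt_atTop (0:ℝ)] with s hs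
    haveI := isProbabilityMeasure_expMeasure hlamSD
    haveI := isProbabilityMeasure_expMeasure hlamSR1
    haveI := isProbabilityMeasure_expMeasure hlamSR2
    haveI := isProbabilityMeasure_expMeasure hlamRD1
    have hT1 : 1 < (1+s) ^ (2*r) := hTgt s hs
    have htt : 0 < ((1+s) ^ (2*r) - 1)/s := htt0 s hs
    have hBmeas : MeasurableSet {p : ℝ × ℝ | (1 + s * p.1) * (1 + s * p.2) < (1+s) ^ (2*r)} :=
      measurableSet_lt (by fun_prop) measurable_const
    have hABmeas : MeasurableSet
        (Ici (((1+s) ^ (2*r) - 1)/s) ×ˢ Iio (((1+s) ^ (2*r) - 1)/s)) :=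
      measurableSet_Ici.prod measurableSet_Iio
    have hE : {ω | 1 + s * G 1 ω ≥ (1+s) ^ (2*r)}
        ∩ {ω | 1 + s * G 2 ω < (1+s) ^ (2*r)}
        ∩ {ω | (1 + s * G 0 ω) * (1 + s * G 3 ω) < (1+s) ^ (2*r)}
        = ((fun ω => (G 1 ω, G 2 ω)) ⁻¹'
            (Ici (((1+s) ^ (2*r) - 1)/s) ×ˢ Iio (((1+s) ^ (2*r) - 1)/s)))
          ∩ ((fun ω => (G 0 ω, G 3 ω)) ⁻¹'
            {p : ℝ × ℝ | (1 + s * p.1) * (1 + s * p.2) < (1+s) ^ (2*r)}) := by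
      ext ω
      simp only [mem_inter_iff, mem_setOf_eq, mem_preimage, mem_prod, mem_Ici, mem_Iio, ge_iff_le]
      have h1 : (((1+s) ^ (2*r) - 1)/s ≤ G 1 ω ↔ (1+s) ^ (2*r) ≤ 1 + s * G 1 ω) := by
        rw [div_le_iff₀ hs]
        constructor <;> intro h <;> nlinarith
      have h2 : (G 2 ω < ((1+s) ^ (2*r) - 1)/s ↔ 1 + s * G 2 ω < (1+s) ^ (2*r)) := by
        rw [lt_div_iff₀ hs]
        constructor <;> intro h <;> nlinarith
      rw [h1, h2]
    have hpair : IndepFun (fun ω => (G 1 ω, G 2 ω)) (fun ω => (G 0 ω, G 3 ω)) μ :=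
      hindep.indepFun_prodMk_prodMk hmeas 1 2 0 3
        (by decide) (by decide) (by decide) (by decide)
    have hmap12 : μ.map (fun ω => (G 1 ω, G 2 ω))
        = (expMeasure lamSR1).prod (expMeasure lamSR2) := by
      rw [← hlaw1, ← hlaw2]
      exact (indepFun_iff_map_prod_eq_prod_map_map (hmeas 1).aemeasurable
        (hmeas 2).aemeasurable).mp (hindep.indepFun (show (1 : Fin 4) ≠ 2 by decide))
    have hmap03 : μ.map (fun ω => (G 0 ω, G 3 ω))
        = (expMeasure lamSD).prod (expMeasure lamRD1) := by
      rw [← hlaw0, ← hlaw3]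
      exact (indepFun_iff_map_prod_eq_prod_map_map (hmeas 0).aemeasurable
        (hmeas 3).aemeasurable).mp (hindep.indepFun (show (0 : Fin 4) ≠ 3 by decide))
    rw [hE, indepFun_iff_measure_inter_preimage_eq_mul.mp hpair _ _ hABmeas hBmeas,
      ← Measure.map_apply ((hmeas 1).prodMk (hmeas 2)) hABmeas,
      ← Measure.map_apply ((hmeas 0).prodMk (hmeas 3)) hBmeas,
      hmap12, hmap03, Measure.prod_prod, expM_Ici hlamSR1 htt.le, expM_Iio hlamSR2,
      prod_outage hlamSD hlamRD1 hs hT1]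
    rw [ENNReal.toReal_mul, ENNReal.toReal_mul,
      ENNReal.toReal_ofReal (exp_pos _).le,
      ENNReal.toReal_ofReal (by
        have h : rexp (-(lamSR2 * (((1+s) ^ (2*r) - 1)/s))) ≤ 1 :=
          Real.exp_le_one_iff.mpr (by nlinarith)
        linarith),
      ENNReal.toReal_ofReal (g_int_nonneg hlamSD hlamRD1 hs)]
  -- Step 2: limits
  have hlim_t : Tendsto (fun s : ℝ => ((1+s) ^ (2*r) - 1)/s) atTop (𝓝 0) := lim_t0 hρ0 hρ1
  have hlim_p1 : Tendsto p1 atTop (𝓝 1) := by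
    have h' : Tendsto (fun s : ℝ => -(lamSR1 * (((1+s) ^ (2*r) - 1)/s))) atTop
        (𝓝 (-(lamSR1 * 0))) := (hlim_t.const_mul lamSR1).neg
    rw [mul_zero, neg_zero] at h'
    have h2 := (Real.continuous_exp.tendsto 0).comp h'
    rw [Real.exp_zero] at h2
    exact h2
  have hKlow : Tendsto K atTop (𝓝 1) := by
    have h1 : Tendsto (fun s : ℝ => 1 - lamSD * (((1+s) ^ (2*r) - 1)/s)) atTop
        (𝓝 (1 - lamSD * 0)) := tendsto_const_nhds.sub (hlim_t.const_mul lamSD)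
    have h3 : Tendsto (fun s : ℝ => 1 - lamRD1 * (((1+s) ^ (2*r) - 1)/s)) atTop
        (𝓝 (1 - lamRD1 * 0)) := tendsto_const_nhds.sub (hlim_t.const_mul lamRD1)
    have h := h1.mul h3
    norm_num at h
    exact h
  have hlim_p2 : Tendsto (fun s : ℝ => p2 s / (lamSR2 * s ^ (2*r-1))) atTop (𝓝 1) := by
    have hcomp : Tendsto (fun s : ℝ => lamSR2 * (((1+s) ^ (2*r) - 1)/s)) atTop (𝓝[≠] 0) := by
      rw [tendsto_nhdsWithin_iff]
      constructor
      · simpa using hlim_t.const_mul lamSR2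
      · filter_upwards [eventually_gt_atTop (0:ℝ)] with s hs
        exact (mul_pos hlamSR2 (htt0 s hs)).ne'
    have h1 := lim_one_sub_exp.comp hcomp
    have h2 := lim_one hρ0
    have hmul := h1.mul h2
    rw [one_mul] at hmul
    apply hmul.congr'
    filter_upwards [eventually_gt_atTop (0:ℝ)] with s hs
    have htt : 0 < ((1+s) ^ (2*r) - 1)/s := htt0 s hs
    have hX : 0 < (1+s) ^ (2*r) - 1 := by
      have h := htt0 s hs
      by_contra hcon
      push_neg at hcon
      have : ((1+s) ^ (2*r) - 1)/s ≤ 0 := div_nonpos_of_nonpos_of_nonneg hcon hs.le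
      linarith
    have hsρ : (0:ℝ) < s ^ (2*r) := Real.rpow_pos_of_pos hs _
    have hsρ1 : (0:ℝ) < s ^ (2*r-1) := Real.rpow_pos_of_pos hs _
    have hb : s ^ (2*r-1) * s = s ^ (2*r) := by
      rw [← Real.rpow_add_one hs.ne' (2*r-1)]; ring_nf
    simp only [Function.comp_apply, hp2]
    rw [div_mul_div_comm, div_eq_div_iff (by positivity) (by positivity), ← hb]
    field_simp
  -- main-term ratio W/d2 → 1
  have hlimW : Tendsto (fun s : ℝ => W s / d2 s) atTop (𝓝 1) := by
    have hA : Tendsto (fun s : ℝ => ((1+s)/s) ^ (2*r) * (Real.log (1+s)/Real.log s)) atTop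
        (𝓝 (1*1)) := lim_rpow_ratio.mul lim_log_ratio
    have hBlim : Tendsto (fun s : ℝ => (((1+s) ^ (2*r) - 1)/s ^ (2*r)) * (2*r*Real.log s)⁻¹)
        atTop (𝓝 (1*0)) :=
      (lim_one hρ0).mul (Real.tendsto_log_atTop.const_mul_atTop hρ0).inv_tendsto_atTop
    have hmain := hA.sub hBlim
    norm_num at hmain
    apply hmain.congr'
    filter_upwards [eventually_gt_atTop (1:ℝ)] with s hs1
    have hs : (0:ℝ) < s := by linarith
    have hlogs : 0 < Real.log s := Real.log_pos hs1
    have hsρ : (0:ℝ) < s ^ (2*r) := Real.rpow_pos_of_pos hs _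
    have hsρ2 : (0:ℝ) < s ^ (2*r-2) := Real.rpow_pos_of_pos hs _
    have hdiv : ((1+s)/s) ^ (2*r) = (1+s) ^ (2*r) / s ^ (2*r) :=
      Real.div_rpow (by linarith) hs.le _
    have hlogT : Real.log ((1+s) ^ (2*r)) = 2*r * Real.log (1+s) :=
      Real.log_rpow (by linarith) _
    have ha : s ^ (2*r) = s ^ (2*r-2) * s * s := by
      rw [← Real.rpow_add_one hs.ne' (2*r-2), ← Real.rpow_add_one hs.ne' (2*r-2+1)]
      ring_nf
    simp only [hW, hd2]
    rw [hdiv, hlogT, ha]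
    field_simp
  -- positivity of d2
  have hd2pos : ∀ᶠ s in atTop, 0 < d2 s := by
    filter_upwards [eventually_gt_atTop (1:ℝ)] with s hs1
    have hs : (0:ℝ) < s := by linarith
    have hlogs : 0 < Real.log s := Real.log_pos hs1
    have hrp := Real.rpow_pos_of_pos hs (2*r-2)
    simp only [hd2]
    positivity
  -- squeeze for P3/d2
  have hlim_P3 : Tendsto (fun s : ℝ => P3 s / d2 s) atTop (𝓝 1) := by
    have hlower : ∀ᶠ s in atTop, K s * (W s / d2 s) ≤ P3 s / d2 s := by
      filter_upwards [eventually_gt_atTop (1:ℝ), hd2pos,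
        hlim_t.eventually_lt_const (show (0:ℝ) < 1/lamSD by positivity),
        hlim_t.eventually_lt_const (show (0:ℝ) < 1/lamRD1 by positivity)]
        with s hs1 hd2p h0 h3
      have hs : (0:ℝ) < s := by linarith
      have hT1 : 1 < (1+s) ^ (2*r) := hTgt s hs
      have hc0 : lamSD * (((1+s) ^ (2*r) - 1)/s) ≤ 1 := by
        rw [lt_div_iff₀ hlamSD] at h0; nlinarith
      have hc3 : lamRD1 * (((1+s) ^ (2*r) - 1)/s) ≤ 1 := by
        rw [lt_div_iff₀ hlamRD1] at h3; nlinarith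
      have hlo := (P3_bounds hlamSD hlamRD1 hs hT1 hc0 hc3).1
      rw [← mul_div_assoc]
      exact (div_le_div_iff_of_pos_right hd2p).mpr hlo
    have hupper : ∀ᶠ s in atTop, P3 s / d2 s ≤ W s / d2 s := by
      filter_upwards [eventually_gt_atTop (1:ℝ), hd2pos,
        hlim_t.eventually_lt_const (show (0:ℝ) < 1/lamSD by positivity),
        hlim_t.eventually_lt_const (show (0:ℝ) < 1/lamRD1 by positivity)]
        with s hs1 hd2p h0 h3
      have hs : (0:ℝ) < s := by linarith
      have hT1 : 1 < (1+s) ^ (2*r) := hTgt s hs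
      have hc0 : lamSD * (((1+s) ^ (2*r) - 1)/s) ≤ 1 := by
        rw [lt_div_iff₀ hlamSD] at h0; nlinarith
      have hc3 : lamRD1 * (((1+s) ^ (2*r) - 1)/s) ≤ 1 := by
        rw [lt_div_iff₀ hlamRD1] at h3; nlinarith
      have hhi := (P3_bounds hlamSD hlamRD1 hs hT1 hc0 hc3).2
      exact (div_le_div_iff_of_pos_right hd2p).mpr hhi
    have hlowlim : Tendsto (fun s : ℝ => K s * (W s / d2 s)) atTop (𝓝 (1*1)) :=
      hKlow.mul hlimW
    rw [one_mul] at hlowlim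
    exact tendsto_of_tendsto_of_tendsto_of_le_of_le' hlowlim hlimW hlower hupper
  -- Step 3: assemble
  have hz : ∀ᶠ s in atTop,
      lamSR2 * lamSD * lamRD1 * (2*r*Real.log s) * s ^ (-(3-4*r)) ≠ 0 := by
    filter_upwards [eventually_gt_atTop (1:ℝ)] with s hs1
    have hs : (0:ℝ) < s := by linarith
    have hlogs : 0 < Real.log s := Real.log_pos hs1
    have hrp := Real.rpow_pos_of_pos hs (-(3-4*r))
    positivity
  rw [Asymptotics.isEquivalent_iff_tendsto_one hz]
  have hfull : Tendsto (fun s : ℝ => p1 s * ((p2 s / (lamSR2 * s ^ (2*r-1))) * (P3 s / d2 s)))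
      atTop (𝓝 (1 * (1 * 1))) := hlim_p1.mul (hlim_p2.mul hlim_P3)
  norm_num at hfull
  apply hfull.congr'
  filter_upwards [hev, eventually_gt_atTop (1:ℝ)] with s hevs hs1
  have hs : (0:ℝ) < s := by linarith
  have hlogs : 0 < Real.log s := Real.log_pos hs1
  have hsρ1 : (0:ℝ) < s ^ (2*r-1) := Real.rpow_pos_of_pos hs _
  have hsρ2 : (0:ℝ) < s ^ (2*r-2) := Real.rpow_pos_of_pos hs _
  have hpow : s ^ (2*r-1) * s ^ (2*r-2) = s ^ (-(3-4*r)) := by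
    rw [← Real.rpow_add hs]; ring_nf
  rw [Pi.div_apply, hevs]
  simp only [hd2]
  rw [← hpow]
  field_simp
end

section
/- Let G_{S,D}, G_{S,R_1}, G_{S,R_2}, G_{R_1,D}, G_{R_2,D} be independent random variables, each exponentially distributed with rates λ_{S,D}, λ_{S,R_1}, λ_{S,R_2}, λ_{R_1,D}, λ_{R_2,D} > 0 respectively, and fix r ∈ (0, 1/2). Then as s → ∞, Pr[{1+sG_{S,R_1} ≥ (1+s)^{2r}} ∩ {1+sG_{S,R_2} ≥ (1+s)^{2r}} ∩ {(1+sG_{S,D})·(1+s(G_{R_1,D}+G_{R_2,D})) < (1+s)^{2r}}] is asymptotically equivalent to (1/2)·λ_{S,D}·λ_{R_1,D}·λ_{R_2,D}·s^{−(3−4r)}. -/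
open MeasureTheory ProbabilityTheory Filter Asymptotics Real Set
open scoped Topology ENNReal

namespace Stmt5Aux

lemma expMeasure_withDensity (l : ℝ) :
    expMeasure l = volume.withDensity (exponentialPDF l) := rfl

lemma expMeasure_Iio {l : ℝ} (hl : 0 < l) (c : ℝ) :
    expMeasure l (Iio c) = ENNReal.ofReal (1 - rexp (-(l * c))) := by
  have h1 : expMeasure l {c} = 0 := by
    rw [expMeasure_withDensity, withDensity_apply _ (measurableSet_singleton c)]
    exact setLIntegral_measure_zero _ _ (measure_singleton c)
  have h2 : expMeasure l (Iic c) = expMeasure l (Iio c) := by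
    rw [← Set.Iio_union_right]
    refine le_antisymm ((measure_union_le _ _).trans ?_) (measure_mono subset_union_left)
    rw [h1, add_zero]
  have h3 : expMeasure l (Iic c) = ENNReal.ofReal (if 0 ≤ c then 1 - rexp (-(l * c)) else 0) := by
    rw [expMeasure_withDensity, withDensity_apply _ measurableSet_Iic]
    exact lintegral_exponentialPDF_eq_antiDeriv hl c
  rw [← h2, h3]
  split_ifs with h
  · rfl
  · symm
    rw [ENNReal.ofReal_zero, ENNReal.ofReal_eq_zero]
    have : (1:ℝ) ≤ rexp (-(l * c)) := by
      rw [← Real.exp_zero]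
      exact Real.exp_le_exp.2 (by nlinarith)
    linarith

lemma expMeasure_Ici {l : ℝ} (hl : 0 < l) {a : ℝ} (ha : 0 ≤ a) :
    expMeasure l (Ici a) = ENNReal.ofReal (rexp (-(l * a))) := by
  haveI := isProbabilityMeasure_expMeasure hl
  have h := measure_compl (μ := expMeasure l) (s := Iio a) measurableSet_Iio (measure_ne_top _ _)
  rw [compl_Iio] at h
  have he : rexp (-(l * a)) ≤ 1 := by
    rw [← Real.exp_zero]
    exact Real.exp_le_exp.2 (by nlinarith)
  rw [h, measure_univ, expMeasure_Iio hl, ← ENNReal.ofReal_one,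
    ← ENNReal.ofReal_sub 1 (by linarith [Real.exp_pos (-(l * a))])]
  norm_num

lemma expMeasure_Iio_le {l : ℝ} (hl : 0 < l) (c : ℝ) :
    expMeasure l (Iio c) ≤ ENNReal.ofReal (l * c) := by
  rw [expMeasure_Iio hl]
  apply ENNReal.ofReal_le_ofReal
  nlinarith [Real.add_one_le_exp (-(l * c))]

lemma expMeasure_Iio_ge {l : ℝ} (hl : 0 < l) {c w : ℝ} (hc : 0 ≤ c) (hcw : c ≤ w) :
    ENNReal.ofReal (l * c * rexp (-(l * w))) ≤ expMeasure l (Iio c) := by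
  rw [expMeasure_Iio hl]
  apply ENNReal.ofReal_le_ofReal
  have h1 : rexp (l * c) * rexp (-(l * c)) = 1 := by
    rw [← Real.exp_add]; simp
  have h2 : l * c + 1 ≤ rexp (l * c) := Real.add_one_le_exp _
  have h3 : rexp (-(l * w)) ≤ rexp (-(l * c)) := Real.exp_le_exp.2 (by nlinarith)
  have h4 : (0:ℝ) < rexp (-(l * c)) := Real.exp_pos _
  have h5 := mul_le_mul_of_nonneg_right h2 h4.le
  have h6 := mul_le_mul_of_nonneg_left h3 (mul_nonneg hl.le hc)
  nlinarith



lemma exponentialPDF_measurable (l : ℝ) : Measurable (exponentialPDF l) :=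
  ENNReal.measurable_ofReal.comp (measurable_exponentialPDFReal l)

lemma sum_slice (w x : ℝ) : Prod.mk x ⁻¹' {p : ℝ × ℝ | p.1 + p.2 < w} = Iio (w - x) := by
  ext b
  simp [lt_sub_iff_add_lt']

lemma conv_eq {l3 l4 : ℝ} (hl3 : 0 < l3) (hl4 : 0 < l4) (w : ℝ) :
    ((expMeasure l3).prod (expMeasure l4)) {p : ℝ × ℝ | p.1 + p.2 < w}
      = ∫⁻ a, exponentialPDF l3 a * ENNReal.ofReal (1 - rexp (-(l4 * (w - a)))) ∂volume := by
  haveI := isProbabilityMeasure_expMeasure hl3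
  haveI := isProbabilityMeasure_expMeasure hl4
  rw [Measure.prod_apply (s := {p : ℝ × ℝ | p.1 + p.2 < w}) (measurableSet_lt (measurable_fst.add measurable_snd) measurable_const)]
  simp only [sum_slice, expMeasure_Iio hl4]
  rw [expMeasure_withDensity,
    lintegral_withDensity_eq_lintegral_mul _ (exponentialPDF_measurable l3) (by fun_prop)]
  rfl

lemma conv_zero {l3 l4 : ℝ} (hl3 : 0 < l3) (hl4 : 0 < l4) {w : ℝ} (hw : w ≤ 0) :
    ((expMeasure l3).prod (expMeasure l4)) {p : ℝ × ℝ | p.1 + p.2 < w} = 0 := by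
  haveI := isProbabilityMeasure_expMeasure hl3
  haveI := isProbabilityMeasure_expMeasure hl4
  have hsub : {p : ℝ × ℝ | p.1 + p.2 < w} ⊆ (Iio 0 ×ˢ univ) ∪ (univ ×ˢ Iio 0) := by
    rintro ⟨a, b⟩ hp
    simp only [mem_setOf_eq] at hp
    by_cases ha : a < 0
    · exact Or.inl ⟨ha, trivial⟩
    · exact Or.inr ⟨trivial, by push_neg at ha; simp only [mem_Iio]; linarith⟩
  refine measure_mono_null hsub (measure_union_null ?_ ?_)
  · rw [Measure.prod_prod, expMeasure_Iio hl3]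
    simp
  · rw [Measure.prod_prod, expMeasure_Iio hl4]
    simp

lemma integral_linear (c w : ℝ) (hw : 0 ≤ w) :
    ∫ a in Icc (0:ℝ) w, c * (w - a) = c * (w ^ 2 / 2) := by
  rw [integral_Icc_eq_integral_Ioc, ← intervalIntegral.integral_of_le hw,
    intervalIntegral.integral_const_mul,
    intervalIntegral.integral_sub intervalIntegrable_const intervalIntegral.intervalIntegrable_id,
    integral_id, intervalIntegral.integral_const]
  simp only [sub_zero, smul_eq_mul]
  ring

lemma conv_upper {l3 l4 : ℝ} (hl3 : 0 < l3) (hl4 : 0 < l4) (w : ℝ) :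
    ((expMeasure l3).prod (expMeasure l4)) {p : ℝ × ℝ | p.1 + p.2 < w}
      ≤ ENNReal.ofReal (l3 * l4 * w ^ 2 / 2) := by
  rcases le_or_gt w 0 with hw | hw
  · rw [conv_zero hl3 hl4 hw]
    exact zero_le
  rw [conv_eq hl3 hl4]
  have hint : IntegrableOn (fun a : ℝ => l3 * l4 * (w - a)) (Icc 0 w) volume :=
    (Continuous.integrableOn_Icc (by fun_prop))
  calc ∫⁻ a, exponentialPDF l3 a * ENNReal.ofReal (1 - rexp (-(l4 * (w - a)))) ∂volume
      ≤ ∫⁻ a, (Icc (0:ℝ) w).indicator (fun a => ENNReal.ofReal (l3 * l4 * (w - a))) a ∂volume := by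
        refine lintegral_mono fun a => ?_
        show exponentialPDF l3 a * ENNReal.ofReal (1 - rexp (-(l4 * (w - a))))
          ≤ (Icc (0:ℝ) w).indicator (fun a => ENNReal.ofReal (l3 * l4 * (w - a))) a
        by_cases ha : 0 ≤ a
        · by_cases haw : a ≤ w
          · have hmem : a ∈ Icc (0:ℝ) w := ⟨ha, haw⟩
            rw [indicator_of_mem hmem, exponentialPDF_of_nonneg ha]
            have h1 : ENNReal.ofReal (l3 * rexp (-(l3 * a))) ≤ ENNReal.ofReal l3 := by
              apply ENNReal.ofReal_le_ofReal
              nlinarith [Real.exp_le_one_iff.2 (by nlinarith : -(l3*a) ≤ 0), Real.exp_pos (-(l3*a))]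
            have h2 : ENNReal.ofReal (1 - rexp (-(l4 * (w - a)))) ≤ ENNReal.ofReal (l4 * (w - a)) := by
              apply ENNReal.ofReal_le_ofReal
              nlinarith [Real.add_one_le_exp (-(l4 * (w - a)))]
            calc ENNReal.ofReal (l3 * rexp (-(l3 * a))) * ENNReal.ofReal (1 - rexp (-(l4 * (w - a))))
                ≤ ENNReal.ofReal l3 * ENNReal.ofReal (l4 * (w - a)) := mul_le_mul' h1 h2
              _ = ENNReal.ofReal (l3 * (l4 * (w - a))) := (ENNReal.ofReal_mul hl3.le).symm
              _ = ENNReal.ofReal (l3 * l4 * (w - a)) := by rw [mul_assoc]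
          · push_neg at haw
            have h2 : ENNReal.ofReal (1 - rexp (-(l4 * (w - a)))) = 0 := by
              rw [ENNReal.ofReal_eq_zero]
              have : (1:ℝ) ≤ rexp (-(l4 * (w - a))) := by
                rw [← Real.exp_zero]
                exact Real.exp_le_exp.2 (by nlinarith)
              linarith
            rw [h2, mul_zero]
            exact zero_le
        · rw [exponentialPDF_of_neg (lt_of_not_ge ha), zero_mul]
          exact zero_le
    _ = ENNReal.ofReal (∫ a in Icc (0:ℝ) w, l3 * l4 * (w - a)) := by
        rw [lintegral_indicator measurableSet_Icc,
          ← ofReal_integral_eq_lintegral_ofReal hint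
            ((ae_restrict_iff' measurableSet_Icc).2 (ae_of_all _ fun a ha => by
              simp only [Pi.zero_apply]
              nlinarith [ha.1, ha.2, mul_pos hl3 hl4]))]
    _ = ENNReal.ofReal (l3 * l4 * w ^ 2 / 2) := by
        rw [integral_linear _ _ hw.le]
        ring_nf

lemma conv_lower {l3 l4 : ℝ} (hl3 : 0 < l3) (hl4 : 0 < l4) {w : ℝ} (hw : 0 ≤ w) :
    ENNReal.ofReal (l3 * l4 * w ^ 2 / 2 * rexp (-((l3 + l4) * w)))
      ≤ ((expMeasure l3).prod (expMeasure l4)) {p : ℝ × ℝ | p.1 + p.2 < w} := by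
  rw [conv_eq hl3 hl4]
  set c1 : ℝ := l3 * rexp (-(l3 * w)) with hc1
  set c2 : ℝ := l4 * rexp (-(l4 * w)) with hc2
  have hc1p : 0 < c1 := mul_pos hl3 (Real.exp_pos _)
  have hc2p : 0 < c2 := mul_pos hl4 (Real.exp_pos _)
  have hint : IntegrableOn (fun a : ℝ => (c1 * c2) * (w - a)) (Icc 0 w) volume :=
    (Continuous.integrableOn_Icc (by fun_prop))
  calc ENNReal.ofReal (l3 * l4 * w ^ 2 / 2 * rexp (-((l3 + l4) * w)))
      = ENNReal.ofReal (∫ a in Icc (0:ℝ) w, (c1 * c2) * (w - a)) := by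
        rw [integral_linear _ _ hw]
        congr 1
        have hee : rexp (-(l3 * w)) * rexp (-(l4 * w)) = rexp (-((l3 + l4) * w)) := by
          rw [← Real.exp_add]
          ring_nf
        rw [hc1, hc2, ← hee]
        ring
    _ = ∫⁻ a, (Icc (0:ℝ) w).indicator (fun a => ENNReal.ofReal ((c1 * c2) * (w - a))) a ∂volume := by
        rw [lintegral_indicator measurableSet_Icc,
          ← ofReal_integral_eq_lintegral_ofReal hint
            ((ae_restrict_iff' measurableSet_Icc).2 (ae_of_all _ fun a ha => by
              simp only [Pi.zero_apply]
              nlinarith [ha.1, ha.2, mul_pos hc1p hc2p]))]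
    _ ≤ ∫⁻ a, exponentialPDF l3 a * ENNReal.ofReal (1 - rexp (-(l4 * (w - a)))) ∂volume := by
        refine lintegral_mono fun a => ?_
        show (Icc (0:ℝ) w).indicator (fun a => ENNReal.ofReal ((c1 * c2) * (w - a))) a
          ≤ exponentialPDF l3 a * ENNReal.ofReal (1 - rexp (-(l4 * (w - a))))
        by_cases hmem : a ∈ Icc (0:ℝ) w
        · rw [indicator_of_mem hmem]
          obtain ⟨ha0, haw⟩ := hmem
          have e1 : ENNReal.ofReal c1 ≤ exponentialPDF l3 a := by
            rw [exponentialPDF_of_nonneg ha0]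
            apply ENNReal.ofReal_le_ofReal
            have : rexp (-(l3 * w)) ≤ rexp (-(l3 * a)) := Real.exp_le_exp.2 (by nlinarith)
            nlinarith
          have e2 : ENNReal.ofReal (c2 * (w - a)) ≤ ENNReal.ofReal (1 - rexp (-(l4 * (w - a)))) := by
            rw [← expMeasure_Iio hl4]
            have := expMeasure_Iio_ge hl4 (c := w - a) (w := w) (by linarith) (by linarith)
            convert this using 2
            ring
          calc ENNReal.ofReal ((c1 * c2) * (w - a))
              = ENNReal.ofReal c1 * ENNReal.ofReal (c2 * (w - a)) := by
                rw [← ENNReal.ofReal_mul hc1p.le]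
                ring_nf
            _ ≤ _ := mul_le_mul' e1 e2
        · rw [indicator_of_notMem hmem]
          exact zero_le



lemma K_eq {s t : ℝ} (hs : 0 < s) (ht : 1 < t) :
    ∫ x in (0:ℝ)..((t - 1) / s), ((t / (1 + s * x) - 1) / s) ^ 2
      = (t ^ 2 - 2 * t * Real.log t - 1) / s ^ 3 := by
  have hε : (0:ℝ) ≤ (t - 1) / s := div_nonneg (by linarith) hs.le
  set F : ℝ → ℝ := fun x =>
    (1 / s ^ 2) * ((-(t ^ 2) / s) * (1 + s * x)⁻¹ - (2 * t / s) * Real.log (1 + s * x) + x)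
    with hF
  have hpos : ∀ x ∈ Set.uIcc (0:ℝ) ((t - 1) / s), 0 < 1 + s * x := by
    intro x hx
    rw [Set.uIcc_of_le hε] at hx
    nlinarith [hx.1]
  have hderiv : ∀ x ∈ Set.uIcc (0:ℝ) ((t - 1) / s),
      HasDerivAt F (((t / (1 + s * x) - 1) / s) ^ 2) x := by
    intro x hx
    have hp := hpos x hx
    have h1 : HasDerivAt (fun x : ℝ => 1 + s * x) s x := by
      simpa using ((hasDerivAt_id x).const_mul s).const_add 1
    have h2 : HasDerivAt (fun x : ℝ => (1 + s * x)⁻¹) (-s / (1 + s * x) ^ 2) x := by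
      exact h1.inv (ne_of_gt hp)
    have h3 : HasDerivAt (fun x : ℝ => Real.log (1 + s * x)) (s / (1 + s * x)) x := by
      simpa using h1.log (ne_of_gt hp)
    have h4 := (((h2.const_mul ((-(t ^ 2) / s))).sub (h3.const_mul (2 * t / s))).add
      (hasDerivAt_id x)).const_mul (1 / s ^ 2)
    refine h4.congr_deriv ?_
    field_simp
    ring
  have hint : IntervalIntegrable (fun x => ((t / (1 + s * x) - 1) / s) ^ 2) volume 0 ((t - 1) / s) := by
    apply ContinuousOn.intervalIntegrable
    apply ContinuousOn.pow
    apply ContinuousOn.div_const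
    apply ContinuousOn.sub _ continuousOn_const
    exact continuousOn_const.div (by fun_prop) (fun x hx => ne_of_gt (hpos x hx))
  rw [intervalIntegral.integral_eq_sub_of_hasDerivAt hderiv hint]
  have h1ε : 1 + s * ((t - 1) / s) = t := by field_simp; ring
  rw [hF]
  simp only [h1ε, mul_zero, add_zero, Real.log_one]
  have ht0 : t ≠ 0 := by linarith
  field_simp
  ring

lemma int_c_gsq {s t : ℝ} (hs : 0 < s) (ht : 1 < t) (c : ℝ) :
    ∫ x in Icc (0:ℝ) ((t - 1) / s), c * ((t / (1 + s * x) - 1) / s) ^ 2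
      = c * ((t ^ 2 - 2 * t * Real.log t - 1) / s ^ 3) := by
  have hε : (0:ℝ) ≤ (t - 1) / s := div_nonneg (by linarith) hs.le
  rw [integral_Icc_eq_integral_Ioc, ← intervalIntegral.integral_of_le hε,
    intervalIntegral.integral_const_mul, K_eq hs ht]

lemma gsq_contOn {s t : ℝ} (hs : 0 < s) (ht : 1 < t) (c : ℝ) :
    ContinuousOn (fun x => c * ((t / (1 + s * x) - 1) / s) ^ 2) (Icc (0:ℝ) ((t - 1) / s)) := by
  apply ContinuousOn.mul continuousOn_const
  apply ContinuousOn.pow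
  apply ContinuousOn.div_const
  apply ContinuousOn.sub _ continuousOn_const
  exact continuousOn_const.div (by fun_prop) (fun x hx => by nlinarith [hx.1])

lemma N_nonneg {s t : ℝ} (hs : 0 < s) (ht : 1 < t) :
    0 ≤ (t ^ 2 - 2 * t * Real.log t - 1) / s ^ 3 := by
  rw [← K_eq hs ht]
  apply intervalIntegral.integral_nonneg (div_nonneg (by linarith) hs.le)
  intro x _
  positivity


lemma Q_bounds {l0 l3 l4 s t : ℝ} (h0 : 0 < l0) (h3 : 0 < l3) (h4 : 0 < l4)
    (hs : 0 < s) (ht : 1 < t) :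
    ENNReal.ofReal (rexp (-((l0 + l3 + l4) * ((t - 1) / s))) * (l0 * l3 * l4 / 2) *
        ((t ^ 2 - 2 * t * Real.log t - 1) / s ^ 3))
      ≤ ((expMeasure l0).prod
          (((expMeasure l3).prod (expMeasure l4)).map (fun p : ℝ × ℝ => p.1 + p.2)))
          {p : ℝ × ℝ | (1 + s * p.1) * (1 + s * p.2) < t} ∧
    ((expMeasure l0).prod
        (((expMeasure l3).prod (expMeasure l4)).map (fun p : ℝ × ℝ => p.1 + p.2)))
        {p : ℝ × ℝ | (1 + s * p.1) * (1 + s * p.2) < t}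
      ≤ ENNReal.ofReal ((l0 * l3 * l4 / 2) * ((t ^ 2 - 2 * t * Real.log t - 1) / s ^ 3)) := by
  haveI := isProbabilityMeasure_expMeasure h0
  haveI := isProbabilityMeasure_expMeasure h3
  haveI := isProbabilityMeasure_expMeasure h4
  haveI : IsProbabilityMeasure (((expMeasure l3).prod (expMeasure l4)).map
      (fun p : ℝ × ℝ => p.1 + p.2)) := Measure.isProbabilityMeasure_map (by fun_prop)
  set ε : ℝ := (t - 1) / s with hεdef
  have hε : (0:ℝ) ≤ ε := div_nonneg (by linarith) hs.le
  set g : ℝ → ℝ := fun x => (t / (1 + s * x) - 1) / s with hg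
  set νY := ((expMeasure l3).prod (expMeasure l4)).map (fun p : ℝ × ℝ => p.1 + p.2) with hνY
  set A : Set (ℝ × ℝ) := {p : ℝ × ℝ | (1 + s * p.1) * (1 + s * p.2) < t} with hA
  have hAmeas : MeasurableSet A := measurableSet_lt (by fun_prop) measurable_const
  have hνY_Iio : ∀ w : ℝ, νY (Iio w)
      = ((expMeasure l3).prod (expMeasure l4)) {p : ℝ × ℝ | p.1 + p.2 < w} := by
    intro w
    rw [hνY, Measure.map_apply (by fun_prop) measurableSet_Iio]
    rfl
  have hslice : ∀ x : ℝ, 0 ≤ x → (Prod.mk x ⁻¹' A) = Iio (g x) := by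
    intro x hx
    have hpos : 0 < 1 + s * x := by nlinarith
    ext y
    simp only [hA, mem_preimage, mem_setOf_eq, mem_Iio, hg]
    rw [lt_div_iff₀ hs, lt_sub_iff_add_lt, lt_div_iff₀ hpos]
    constructor <;> intro h <;> linear_combination h
  have hQ : ((expMeasure l0).prod νY) A
      = ∫⁻ x, exponentialPDF l0 x * νY (Prod.mk x ⁻¹' A) ∂volume := by
    rw [Measure.prod_apply hAmeas, expMeasure_withDensity,
      lintegral_withDensity_eq_lintegral_mul _ (exponentialPDF_measurable l0)
        (measurable_measure_prodMk_left hAmeas)]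
    rfl
  have hgnonneg : ∀ x ∈ Icc (0:ℝ) ε, 0 ≤ g x := by
    intro x hx
    have hpos : 0 < 1 + s * x := by nlinarith [hx.1]
    have h1 : 1 + s * x ≤ t := by
      have h2 := hx.2
      rw [hεdef, le_div_iff₀ hs] at h2
      nlinarith
    have : (1:ℝ) ≤ t / (1 + s * x) := (one_le_div hpos).2 h1
    rw [hg]
    apply div_nonneg _ hs.le
    linarith
  have hgle : ∀ x ∈ Icc (0:ℝ) ε, g x ≤ ε := by
    intro x hx
    have hpos : 0 < 1 + s * x := by nlinarith [hx.1]
    have h1 : t / (1 + s * x) ≤ t := div_le_self (by linarith) (by nlinarith [hx.1])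
    rw [hg, hεdef, div_le_div_iff_of_pos_right hs]
    linarith
  constructor
  · -- lower bound
    set cL : ℝ := rexp (-((l0 + l3 + l4) * ε)) * (l0 * l3 * l4 / 2) with hcL
    have hcLpos : (0:ℝ) ≤ cL := by positivity
    calc ENNReal.ofReal (cL * ((t ^ 2 - 2 * t * Real.log t - 1) / s ^ 3))
        = ENNReal.ofReal (∫ x in Icc (0:ℝ) ε, cL * (g x) ^ 2) := by
          rw [int_c_gsq hs ht]
      _ = ∫⁻ x, (Icc (0:ℝ) ε).indicator (fun x => ENNReal.ofReal (cL * (g x) ^ 2)) x ∂volume := by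
          rw [lintegral_indicator measurableSet_Icc,
            ← ofReal_integral_eq_lintegral_ofReal ((gsq_contOn hs ht cL).integrableOn_Icc)
              (ae_of_all _ fun x => by
                simp only [Pi.zero_apply]
                exact mul_nonneg hcLpos (sq_nonneg _))]
      _ ≤ ∫⁻ x, exponentialPDF l0 x * νY (Prod.mk x ⁻¹' A) ∂volume := by
          refine lintegral_mono fun x => ?_
          show (Icc (0:ℝ) ε).indicator (fun x => ENNReal.ofReal (cL * (g x) ^ 2)) x
            ≤ exponentialPDF l0 x * νY (Prod.mk x ⁻¹' A)
          by_cases hmem : x ∈ Icc (0:ℝ) ε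
          · rw [indicator_of_mem hmem]
            have hx0 := hmem.1
            have e1 : ENNReal.ofReal (l0 * rexp (-(l0 * ε))) ≤ exponentialPDF l0 x := by
              rw [exponentialPDF_of_nonneg hx0]
              apply ENNReal.ofReal_le_ofReal
              have : rexp (-(l0 * ε)) ≤ rexp (-(l0 * x)) :=
                Real.exp_le_exp.2 (by nlinarith [hmem.2])
              nlinarith
            have e2 : ENNReal.ofReal (l3 * l4 * (g x) ^ 2 / 2 * rexp (-((l3 + l4) * ε)))
                ≤ νY (Prod.mk x ⁻¹' A) := by
              rw [hslice x hx0, hνY_Iio]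
              refine le_trans (ENNReal.ofReal_le_ofReal ?_) (conv_lower h3 h4 (hgnonneg x hmem))
              refine mul_le_mul_of_nonneg_left (Real.exp_le_exp.2 ?_) (by positivity)
              nlinarith [mul_le_mul_of_nonneg_left (hgle x hmem)
                (by linarith : (0:ℝ) ≤ l3 + l4)]
            have key : cL * (g x) ^ 2
                = (l0 * rexp (-(l0 * ε))) * (l3 * l4 * (g x) ^ 2 / 2 * rexp (-((l3 + l4) * ε))) := by
              have hee : rexp (-((l0 + l3 + l4) * ε)) = rexp (-(l0 * ε)) * rexp (-((l3 + l4) * ε)) := by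
                rw [← Real.exp_add]
                ring_nf
              rw [hcL, hee]
              ring
            rw [key, ENNReal.ofReal_mul (by positivity)]
            exact mul_le_mul' e1 e2
          · rw [indicator_of_notMem hmem]
            exact zero_le
      _ = ((expMeasure l0).prod νY) A := hQ.symm
  · -- upper bound
    calc ((expMeasure l0).prod νY) A
        = ∫⁻ x, exponentialPDF l0 x * νY (Prod.mk x ⁻¹' A) ∂volume := hQ
      _ ≤ ∫⁻ x, (Icc (0:ℝ) ε).indicator
            (fun x => ENNReal.ofReal ((l0 * l3 * l4 / 2) * (g x) ^ 2)) x ∂volume := by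
          refine lintegral_mono fun x => ?_
          show exponentialPDF l0 x * νY (Prod.mk x ⁻¹' A)
            ≤ (Icc (0:ℝ) ε).indicator (fun x => ENNReal.ofReal ((l0 * l3 * l4 / 2) * (g x) ^ 2)) x
          by_cases hx0 : 0 ≤ x
          · by_cases hxε : x ≤ ε
            · have hmem : x ∈ Icc (0:ℝ) ε := ⟨hx0, hxε⟩
              rw [indicator_of_mem hmem, hslice x hx0, hνY_Iio, exponentialPDF_of_nonneg hx0]
              have e1 : ENNReal.ofReal (l0 * rexp (-(l0 * x))) ≤ ENNReal.ofReal l0 := by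
                apply ENNReal.ofReal_le_ofReal
                nlinarith [Real.exp_le_one_iff.2 (by nlinarith : -(l0 * x) ≤ 0),
                  Real.exp_pos (-(l0 * x))]
              calc ENNReal.ofReal (l0 * rexp (-(l0 * x)))
                    * ((expMeasure l3).prod (expMeasure l4)) {p : ℝ × ℝ | p.1 + p.2 < g x}
                  ≤ ENNReal.ofReal l0 * ENNReal.ofReal (l3 * l4 * (g x) ^ 2 / 2) :=
                    mul_le_mul' e1 (conv_upper h3 h4 (g x))
                _ = ENNReal.ofReal (l0 * (l3 * l4 * (g x) ^ 2 / 2)) :=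
                    (ENNReal.ofReal_mul h0.le).symm
                _ = ENNReal.ofReal ((l0 * l3 * l4 / 2) * (g x) ^ 2) := by ring_nf
            · push_neg at hxε
              have hgneg : g x ≤ 0 := by
                have hpos : 0 < 1 + s * x := by nlinarith
                have h1 : t ≤ 1 + s * x := by
                  rw [hεdef, div_lt_iff₀ hs] at hxε
                  nlinarith
                have h2 : t / (1 + s * x) ≤ 1 := (div_le_one hpos).2 h1
                rw [hg]
                apply div_nonpos_of_nonpos_of_nonneg _ hs.le
                linarith
              rw [hslice x hx0, hνY_Iio, conv_zero h3 h4 hgneg, mul_zero]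
              exact zero_le
          · rw [exponentialPDF_of_neg (lt_of_not_ge hx0), zero_mul]
            exact zero_le
      _ = ENNReal.ofReal (∫ x in Icc (0:ℝ) ε, (l0 * l3 * l4 / 2) * (g x) ^ 2) := by
          rw [lintegral_indicator measurableSet_Icc,
            ← ofReal_integral_eq_lintegral_ofReal ((gsq_contOn hs ht (l0 * l3 * l4 / 2)).integrableOn_Icc)
              (ae_of_all _ fun x => by
                simp only [Pi.zero_apply]
                positivity)]
      _ = ENNReal.ofReal ((l0 * l3 * l4 / 2) * ((t ^ 2 - 2 * t * Real.log t - 1) / s ^ 3)) := by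
          rw [int_c_gsq hs ht]


lemma main_estimate
    {Ω : Type*} [MeasurableSpace Ω] (μ : Measure Ω) [IsProbabilityMeasure μ]
    (G : Fin 5 → Ω → ℝ) (l0 l1 l2 l3 l4 : ℝ)
    (h0 : 0 < l0) (h1 : 0 < l1) (h2 : 0 < l2) (h3 : 0 < l3) (h4 : 0 < l4)
    (hmeas : ∀ i, Measurable (G i))
    (hindep : iIndepFun G μ)
    (hlaw0 : μ.map (G 0) = expMeasure l0)
    (hlaw1 : μ.map (G 1) = expMeasure l1)
    (hlaw2 : μ.map (G 2) = expMeasure l2)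
    (hlaw3 : μ.map (G 3) = expMeasure l3)
    (hlaw4 : μ.map (G 4) = expMeasure l4)
    {s t : ℝ} (hs : 0 < s) (ht : 1 < t) :
    ∃ q : ℝ,
      (μ ({ω | 1 + s * G 1 ω ≥ t} ∩ {ω | 1 + s * G 2 ω ≥ t}
        ∩ {ω | (1 + s * G 0 ω) * (1 + s * (G 3 ω + G 4 ω)) < t})).toReal
        = rexp (-(l1 * ((t - 1) / s))) * rexp (-(l2 * ((t - 1) / s))) * q ∧
      rexp (-((l0 + l3 + l4) * ((t - 1) / s))) * (l0 * l3 * l4 / 2) *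
        ((t ^ 2 - 2 * t * Real.log t - 1) / s ^ 3) ≤ q ∧
      q ≤ (l0 * l3 * l4 / 2) * ((t ^ 2 - 2 * t * Real.log t - 1) / s ^ 3) := by
  classical
  haveI := isProbabilityMeasure_expMeasure h0
  haveI := isProbabilityMeasure_expMeasure h3
  haveI := isProbabilityMeasure_expMeasure h4
  haveI : IsProbabilityMeasure (((expMeasure l3).prod (expMeasure l4)).map
      (fun p : ℝ × ℝ => p.1 + p.2)) := Measure.isProbabilityMeasure_map (by fun_prop)
  set ε : ℝ := (t - 1) / s with hεdef
  have hε : (0:ℝ) ≤ ε := div_nonneg (by linarith) hs.le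
  set W0 : Ω → ℝ × ℝ := fun ω => (G 0 ω, G 3 ω + G 4 ω) with hW0
  have hW0meas : Measurable W0 := (hmeas 0).prodMk ((hmeas 3).add (hmeas 4))
  set A : Set (ℝ × ℝ) := {p : ℝ × ℝ | (1 + s * p.1) * (1 + s * p.2) < t} with hA
  have hAmeas : MeasurableSet A := measurableSet_lt (by fun_prop) measurable_const
  -- laws
  have hI34 : IndepFun (G 3) (G 4) μ := hindep.indepFun (by decide)
  have hmap34 : μ.map (fun ω => (G 3 ω, G 4 ω)) = (expMeasure l3).prod (expMeasure l4) := by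
    rw [← hlaw3, ← hlaw4]
    exact (indepFun_iff_map_prod_eq_prod_map_map
      (hmeas 3).aemeasurable (hmeas 4).aemeasurable).1 hI34
  have hνY : μ.map (fun ω => G 3 ω + G 4 ω)
      = ((expMeasure l3).prod (expMeasure l4)).map (fun p : ℝ × ℝ => p.1 + p.2) := by
    rw [← hmap34, Measure.map_map (by fun_prop) ((hmeas 3).prodMk (hmeas 4))]
    rfl
  have hI0Y : IndepFun (G 0) (fun ω => G 3 ω + G 4 ω) μ := by
    have h := (hindep.indepFun_prodMk hmeas 3 4 0 (by decide) (by decide)).symm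
    exact h.comp measurable_id (measurable_fst.add measurable_snd)
  have hmapW0 : μ.map W0
      = (expMeasure l0).prod
          (((expMeasure l3).prod (expMeasure l4)).map (fun p : ℝ × ℝ => p.1 + p.2)) := by
    rw [← hνY, ← hlaw0]
    exact (indepFun_iff_map_prod_eq_prod_map_map
      (hmeas 0).aemeasurable ((hmeas 3).add (hmeas 4)).aemeasurable).1 hI0Y
  -- sets
  have hIci : ∀ i : Fin 5, {ω | 1 + s * G i ω ≥ t} = G i ⁻¹' (Ici ε) := by
    intro i
    ext ω
    simp only [mem_setOf_eq, mem_preimage, mem_Ici, ge_iff_le, hεdef]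
    rw [div_le_iff₀ hs]
    constructor <;> intro h <;> nlinarith [mul_comm s (G i ω)]
  -- independence splits
  have hInd1 : IndepFun (G 1) (fun ω => (G 2 ω, G 0 ω, G 3 ω + G 4 ω)) μ := by
    have h := hindep.indepFun_finset {1} {0,2,3,4} (by decide) hmeas
    have hφ : Measurable fun v : (({1} : Finset (Fin 5)) : Type) → ℝ => v ⟨1, by decide⟩ :=
      measurable_pi_apply _
    have hψ : Measurable fun v : (({0,2,3,4} : Finset (Fin 5)) : Type) → ℝ =>
        ((v ⟨2, by decide⟩, v ⟨0, by decide⟩, v ⟨3, by decide⟩ + v ⟨4, by decide⟩) : ℝ × ℝ × ℝ) :=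
      (measurable_pi_apply _).prodMk ((measurable_pi_apply _).prodMk
        ((measurable_pi_apply _).add (measurable_pi_apply _)))
    exact h.comp hφ hψ
  have hInd2 : IndepFun (G 2) W0 μ := by
    have h := hindep.indepFun_finset {2} {0,3,4} (by decide) hmeas
    have hφ : Measurable fun v : (({2} : Finset (Fin 5)) : Type) → ℝ => v ⟨2, by decide⟩ :=
      measurable_pi_apply _
    have hψ : Measurable fun v : (({0,3,4} : Finset (Fin 5)) : Type) → ℝ =>
        ((v ⟨0, by decide⟩, v ⟨3, by decide⟩ + v ⟨4, by decide⟩) : ℝ × ℝ) :=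
      (measurable_pi_apply _).prodMk ((measurable_pi_apply _).add (measurable_pi_apply _))
    exact h.comp hφ hψ
  set B : Set (ℝ × ℝ × ℝ) := {v : ℝ × ℝ × ℝ | t ≤ 1 + s * v.1 ∧ (1 + s * v.2.1) * (1 + s * v.2.2) < t}
    with hB
  have hBmeas : MeasurableSet B := by
    rw [hB, setOf_and]
    exact (measurableSet_le measurable_const (by fun_prop)).inter
      (measurableSet_lt (by fun_prop) measurable_const)
  have hsplit1 : μ ({ω | 1 + s * G 1 ω ≥ t} ∩ {ω | 1 + s * G 2 ω ≥ t}
        ∩ {ω | (1 + s * G 0 ω) * (1 + s * (G 3 ω + G 4 ω)) < t})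
      = μ {ω | 1 + s * G 1 ω ≥ t} * μ ({ω | 1 + s * G 2 ω ≥ t}
        ∩ {ω | (1 + s * G 0 ω) * (1 + s * (G 3 ω + G 4 ω)) < t}) := by
    rw [inter_assoc]
    have key := hInd1.measure_inter_preimage_eq_mul {x : ℝ | t ≤ 1 + s * x} B
      (measurableSet_le measurable_const (by fun_prop)) hBmeas
    exact key
  have hsplit2 : μ ({ω | 1 + s * G 2 ω ≥ t}
        ∩ {ω | (1 + s * G 0 ω) * (1 + s * (G 3 ω + G 4 ω)) < t})
      = μ {ω | 1 + s * G 2 ω ≥ t} * μ {ω | (1 + s * G 0 ω) * (1 + s * (G 3 ω + G 4 ω)) < t} := by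
    have key := hInd2.measure_inter_preimage_eq_mul {x : ℝ | t ≤ 1 + s * x} A
      (measurableSet_le measurable_const (by fun_prop)) hAmeas
    exact key
  -- evaluate marginals
  have hm1 : μ {ω | 1 + s * G 1 ω ≥ t} = ENNReal.ofReal (rexp (-(l1 * ε))) := by
    rw [hIci 1, ← Measure.map_apply (hmeas 1) measurableSet_Ici, hlaw1, expMeasure_Ici h1 hε]
  have hm2 : μ {ω | 1 + s * G 2 ω ≥ t} = ENNReal.ofReal (rexp (-(l2 * ε))) := by
    rw [hIci 2, ← Measure.map_apply (hmeas 2) measurableSet_Ici, hlaw2, expMeasure_Ici h2 hε]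
  have hm3 : μ {ω | (1 + s * G 0 ω) * (1 + s * (G 3 ω + G 4 ω)) < t}
      = ((expMeasure l0).prod
          (((expMeasure l3).prod (expMeasure l4)).map (fun p : ℝ × ℝ => p.1 + p.2))) A := by
    rw [show {ω | (1 + s * G 0 ω) * (1 + s * (G 3 ω + G 4 ω)) < t} = W0 ⁻¹' A from rfl,
      ← Measure.map_apply hW0meas hAmeas, hmapW0]
  obtain ⟨hlow, hup⟩ := Q_bounds h0 h3 h4 hs ht (l0 := l0) (l3 := l3) (l4 := l4)
  set Q := ((expMeasure l0).prod
      (((expMeasure l3).prod (expMeasure l4)).map (fun p : ℝ × ℝ => p.1 + p.2))) A with hQdef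
  refine ⟨Q.toReal, ?_, ?_, ?_⟩
  · rw [hsplit1, hsplit2, hm1, hm2, hm3, ENNReal.toReal_mul, ENNReal.toReal_mul,
      ENNReal.toReal_ofReal (Real.exp_pos _).le, ENNReal.toReal_ofReal (Real.exp_pos _).le,
      mul_assoc]
  · exact (ENNReal.ofReal_le_iff_le_toReal (measure_ne_top _ _)).1 hlow
  · exact ENNReal.toReal_le_of_le_ofReal
      (mul_nonneg (by positivity) (N_nonneg hs ht)) hup


lemma ratio_one_tendsto : Tendsto (fun s : ℝ => (1 + s) / s) atTop (𝓝 1) := by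
  have h : Tendsto (fun s : ℝ => s⁻¹ + 1) atTop (𝓝 (0 + 1)) :=
    (tendsto_inv_atTop_zero).add tendsto_const_nhds
  rw [zero_add] at h
  refine Tendsto.congr' ?_ h
  filter_upwards [eventually_gt_atTop 0] with s hs
  field_simp

lemma ratio_rpow_tendsto (p : ℝ) :
    Tendsto (fun s : ℝ => ((1 + s) / s) ^ p) atTop (𝓝 1) := by
  have := ratio_one_tendsto.rpow_const (p := p) (Or.inl one_ne_zero)
  rwa [Real.one_rpow] at this

lemma eps_tendsto {r : ℝ} (hr0 : 0 < r) (hr2 : r < 1/2) :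
    Tendsto (fun s : ℝ => ((1 + s) ^ (2*r) - 1) / s) atTop (𝓝 0) := by
  have h2 : Tendsto (fun s : ℝ => s ^ (2*r - 1)) atTop (𝓝 0) := by
    rw [show 2*r - 1 = -(1 - 2*r) by ring]
    exact tendsto_rpow_neg_atTop (by linarith)
  have h3 : Tendsto (fun s : ℝ => 1 / s) atTop (𝓝 0) := by
    simpa using (tendsto_inv_atTop_zero (𝕜 := ℝ))
  have h := ((ratio_rpow_tendsto (2*r)).mul h2).sub h3
  rw [one_mul, sub_zero] at h
  refine Tendsto.congr' ?_ h
  filter_upwards [eventually_gt_atTop 0] with s hs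
  have h1s : (0:ℝ) < 1 + s := by linarith
  have hp : (0:ℝ) < s ^ (2*r) := Real.rpow_pos_of_pos hs _
  rw [Real.div_rpow h1s.le hs.le, Real.rpow_sub hs, Real.rpow_one]
  field_simp

lemma log_ratio_tendsto {r : ℝ} (hr0 : 0 < r) :
    Tendsto (fun s : ℝ => Real.log (1 + s) / (1 + s) ^ (2*r)) atTop (𝓝 0) := by
  have h : Tendsto (fun u : ℝ => Real.log u / u ^ (2*r)) atTop (𝓝 0) :=
    (isLittleO_log_rpow_atTop (by linarith)).tendsto_div_nhds_zero
  have hcomp : Tendsto (fun s : ℝ => 1 + s) atTop atTop :=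
    tendsto_atTop_add_const_left atTop 1 tendsto_id
  exact h.comp hcomp

lemma Phi_tendsto {r : ℝ} (hr0 : 0 < r) (hr2 : r < 1/2) :
    Tendsto (fun s : ℝ =>
      (((1 + s) ^ (2*r)) ^ 2 - 2 * ((1 + s) ^ (2*r)) * Real.log ((1 + s) ^ (2*r)) - 1)
        / s ^ (4*r)) atTop (𝓝 1) := by
  have hT1 : Tendsto (fun s : ℝ => ((1 + s) / s) ^ (4*r)) atTop (𝓝 1) := ratio_rpow_tendsto _
  have hT2 : Tendsto (fun s : ℝ =>
      4*r * (((1 + s) / s) ^ (4*r) * (Real.log (1 + s) / (1 + s) ^ (2*r)))) atTop (𝓝 0) := by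
    have := (hT1.mul (log_ratio_tendsto hr0)).const_mul (4*r)
    simpa using this
  have hT3 : Tendsto (fun s : ℝ => (s ^ (4*r))⁻¹) atTop (𝓝 0) := by
    have h := tendsto_rpow_neg_atTop (y := 4*r) (by linarith)
    refine Tendsto.congr' ?_ h
    filter_upwards [eventually_gt_atTop 0] with s hs
    rw [Real.rpow_neg hs.le]
  have h := (hT1.sub hT2).sub hT3
  rw [sub_zero, sub_zero] at h
  refine Tendsto.congr' ?_ h
  filter_upwards [eventually_gt_atTop 0] with s hs
  have h1s : (0:ℝ) < 1 + s := by linarith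
  have ha : (0:ℝ) < (1 + s) ^ (2*r) := Real.rpow_pos_of_pos h1s _
  have hb : (0:ℝ) < s ^ (4*r) := Real.rpow_pos_of_pos hs _
  have h4 : (1 + s) ^ (4*r) = (1 + s) ^ (2*r) * (1 + s) ^ (2*r) := by
    rw [← Real.rpow_add h1s]
    ring_nf
  have hlog : Real.log ((1 + s) ^ (2*r)) = 2*r * Real.log (1 + s) := Real.log_rpow h1s _
  have hdiv : ((1 + s) / s) ^ (4*r) = (1 + s) ^ (4*r) / s ^ (4*r) :=
    Real.div_rpow h1s.le hs.le _
  rw [hlog, hdiv, h4]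
  field_simp
  ring


lemma ratio_eq {l0 l3 l4 s N r : ℝ} (h0 : 0 < l0) (h3 : 0 < l3) (h4 : 0 < l4) (hs : 0 < s) :
    l0 * l3 * l4 / 2 * (N / s ^ 3) / (1/2 * l0 * l3 * l4 * s ^ (-(3 - 4*r))) = N / s ^ (4*r) := by
  have hpow : s ^ (-(3 - 4*r)) = s ^ (4*r) / s ^ (3:ℕ) := by
    rw [← Real.rpow_natCast s 3, ← Real.rpow_sub hs]
    congr 1
    push_cast
    ring
  have hNden : (0:ℝ) < s ^ (4*r) := Real.rpow_pos_of_pos hs _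
  have h3p : (0:ℝ) < s ^ (3:ℕ) := by positivity
  rw [hpow]
  field_simp

end Stmt5Aux

/-- the probability that both relays decode and the synchronous
space-time-coded channel is in outage is asymptotically
`(1/2) λ_{S,D} λ_{R₁,D} λ_{R₂,D} s^{-(3-4r)}` as `s → ∞`. -/
theorem stmt_5
    {Ω : Type*} [MeasurableSpace Ω] (μ : Measure Ω) [IsProbabilityMeasure μ]
    (G : Fin 5 → Ω → ℝ) (lamSD lamSR1 lamSR2 lamRD1 lamRD2 : ℝ)
    (hlamSD : 0 < lamSD) (hlamSR1 : 0 < lamSR1) (hlamSR2 : 0 < lamSR2)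
    (hlamRD1 : 0 < lamRD1) (hlamRD2 : 0 < lamRD2)
    (hmeas : ∀ i, Measurable (G i))
    (hindep : iIndepFun G μ)
    (hlaw0 : μ.map (G 0) = expMeasure lamSD)
    (hlaw1 : μ.map (G 1) = expMeasure lamSR1)
    (hlaw2 : μ.map (G 2) = expMeasure lamSR2)
    (hlaw3 : μ.map (G 3) = expMeasure lamRD1)
    (hlaw4 : μ.map (G 4) = expMeasure lamRD2)
    (r : ℝ) (hr : r ∈ Set.Ioo (0:ℝ) (1/2)) :
    (fun s : ℝ => (μ ({ω | 1 + s * G 1 ω ≥ (1+s) ^ (2*r)}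
        ∩ {ω | 1 + s * G 2 ω ≥ (1+s) ^ (2*r)}
        ∩ {ω | (1 + s * G 0 ω) * (1 + s * (G 3 ω + G 4 ω)) < (1+s) ^ (2*r)})).toReal)
      ~[atTop]
      (fun s : ℝ => (1/2) * lamSD * lamRD1 * lamRD2 * s ^ (-(3-4*r))) := by
  obtain ⟨hr0, hr2⟩ := hr
  have hr2' : r < 1/2 := hr2
  set F : ℝ → ℝ := fun s => (μ ({ω | 1 + s * G 1 ω ≥ (1+s) ^ (2*r)}
      ∩ {ω | 1 + s * G 2 ω ≥ (1+s) ^ (2*r)}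
      ∩ {ω | (1 + s * G 0 ω) * (1 + s * (G 3 ω + G 4 ω)) < (1+s) ^ (2*r)})).toReal with hF
  set v : ℝ → ℝ := fun s => (1/2) * lamSD * lamRD1 * lamRD2 * s ^ (-(3-4*r)) with hv
  have hvpos : ∀ s : ℝ, 0 < s → 0 < v s := by
    intro s hs
    have h := Real.rpow_pos_of_pos hs (-(3-4*r))
    rw [hv]
    positivity
  set E : ℝ → ℝ := fun s => ((1 + s) ^ (2*r) - 1) / s with hE
  set Φ : ℝ → ℝ := fun s =>
    (((1 + s) ^ (2*r)) ^ 2 - 2 * ((1 + s) ^ (2*r)) * Real.log ((1 + s) ^ (2*r)) - 1)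
      / s ^ (4*r) with hΦ
  have hElim : Tendsto E atTop (𝓝 0) := Stmt5Aux.eps_tendsto hr0 hr2'
  have hΦlim : Tendsto Φ atTop (𝓝 1) := Stmt5Aux.Phi_tendsto hr0 hr2'
  have hexp : ∀ c : ℝ, Tendsto (fun s => rexp (-(c * E s))) atTop (𝓝 1) := by
    intro c
    have h1 : Tendsto (fun s => -(c * E s)) atTop (𝓝 0) := by
      have := (hElim.const_mul c).neg
      simpa using this
    have h2 := (Real.continuous_exp.tendsto 0).comp h1
    simpa [Function.comp_def] using h2
  have hup : Tendsto (fun s => rexp (-((lamSR1 + lamSR2) * E s)) * Φ s) atTop (𝓝 1) := by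
    simpa using (hexp (lamSR1 + lamSR2)).mul hΦlim
  have hlow : Tendsto (fun s => rexp (-((lamSR1 + lamSR2) * E s)) *
      (rexp (-((lamSD + lamRD1 + lamRD2) * E s)) * Φ s)) atTop (𝓝 1) := by
    simpa using (hexp (lamSR1 + lamSR2)).mul
      ((hexp (lamSD + lamRD1 + lamRD2)).mul hΦlim)
  have hbounds : ∀ᶠ s in atTop,
      rexp (-((lamSR1 + lamSR2) * E s)) *
          (rexp (-((lamSD + lamRD1 + lamRD2) * E s)) * Φ s) ≤ F s / v s ∧
        F s / v s ≤ rexp (-((lamSR1 + lamSR2) * E s)) * Φ s := by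
    filter_upwards [eventually_ge_atTop 1] with s hs1
    have hs : (0:ℝ) < s := lt_of_lt_of_le one_pos hs1
    have h1s : (1:ℝ) < 1 + s := by linarith
    have ht : 1 < (1 + s) ^ (2*r) :=
      (Real.one_lt_rpow_iff_of_pos (by linarith)).2 (Or.inl ⟨h1s, by linarith⟩)
    obtain ⟨q, hq_eq, hq_lo, hq_hi⟩ :=
      Stmt5Aux.main_estimate μ G lamSD lamSR1 lamSR2 lamRD1 lamRD2
        hlamSD hlamSR1 hlamSR2 hlamRD1 hlamRD2 hmeas hindep
        hlaw0 hlaw1 hlaw2 hlaw3 hlaw4 hs ht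
    have hvp := hvpos s hs
    set t : ℝ := (1 + s) ^ (2*r) with hts
    set N : ℝ := t ^ 2 - 2 * t * Real.log t - 1 with hN
    have hF_eq : F s = rexp (-(lamSR1 * E s)) * rexp (-(lamSR2 * E s)) * q := hq_eq
    have hhi_eq : lamSD * lamRD1 * lamRD2 / 2 * (N / s ^ 3) / v s = Φ s := by
      rw [hv]
      exact Stmt5Aux.ratio_eq hlamSD hlamRD1 hlamRD2 hs
    have hA_eq : rexp (-(lamSR1 * E s)) * rexp (-(lamSR2 * E s))
        = rexp (-((lamSR1 + lamSR2) * E s)) := by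
      rw [← Real.exp_add]
      ring_nf
    have hApos : (0:ℝ) < rexp (-((lamSR1 + lamSR2) * E s)) := Real.exp_pos _
    rw [hF_eq, hA_eq]
    have h1 : rexp (-((lamSD + lamRD1 + lamRD2) * E s)) * (lamSD * lamRD1 * lamRD2 / 2) *
        (N / s ^ 3) / v s = rexp (-((lamSD + lamRD1 + lamRD2) * E s)) * Φ s := by
      rw [mul_assoc, mul_div_assoc, hhi_eq]
    constructor
    · calc rexp (-((lamSR1 + lamSR2) * E s)) *
            (rexp (-((lamSD + lamRD1 + lamRD2) * E s)) * Φ s)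
          = rexp (-((lamSR1 + lamSR2) * E s)) *
            (rexp (-((lamSD + lamRD1 + lamRD2) * E s)) * (lamSD * lamRD1 * lamRD2 / 2) *
              (N / s ^ 3)) / v s := by
            rw [← h1, ← mul_div_assoc]
        _ ≤ rexp (-((lamSR1 + lamSR2) * E s)) * q / v s := by
            apply (div_le_div_iff_of_pos_right hvp).2
            exact mul_le_mul_of_nonneg_left hq_lo hApos.le
    · calc rexp (-((lamSR1 + lamSR2) * E s)) * q / v s
          ≤ rexp (-((lamSR1 + lamSR2) * E s)) *
              (lamSD * lamRD1 * lamRD2 / 2 * (N / s ^ 3)) / v s := by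
            apply (div_le_div_iff_of_pos_right hvp).2
            exact mul_le_mul_of_nonneg_left hq_hi hApos.le
        _ = rexp (-((lamSR1 + lamSR2) * E s)) * Φ s := by
            rw [mul_div_assoc, hhi_eq]
  have hsq : Tendsto (fun s => F s / v s) atTop (𝓝 1) :=
    tendsto_of_tendsto_of_tendsto_of_le_of_le' hlow hup
      (hbounds.mono fun s h => h.1) (hbounds.mono fun s h => h.2)
  exact Asymptotics.isEquivalent_of_tendsto_one hsq
end

section
/- Let G_{S,D}, G_{S,R_1}, G_{S,R_2}, G_{R_1,D}, G_{R_2,D} be independent random variables, each exponentially distributed with rates λ_{S,D}, λ_{S,R_1}, λ_{S,R_2}, λ_{R_1,D}, λ_{R_2,D} > 0 respectively, and fix r ∈ (0, 1/2). For j ∈ {1,2} let E_j denote the event that relay j decodes and the other relay j' fails, i.e. E_j = {1+sG_{S,R_j} ≥ (1+s)^{2r}} ∩ {1+sG_{S,R_{j'}} < (1+s)^{2r}}. Then as s → ∞, Pr[ ∪_{j=1,2} ( E_j ∩ {1+s(G_{S,D}+G_{R_j,D}) < (1+s)^{2r}} ) ] is asymptotically equivalent to (1/2)·(λ_{S,R_2}·λ_{R_1,D}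 + λ_{S,R_1}·λ_{R_2,D})·λ_{S,D}·s^{−3(1−2r)}. -/
open MeasureTheory ProbabilityTheory Filter Asymptotics Real

section StmtSixAux
open Set


lemma myExp_apply {d : ℝ} (s : Set ℝ) (hs : MeasurableSet s) :
    expMeasure d s = ∫⁻ x in s, exponentialPDF d x := by
  rw [expMeasure, gammaMeasure, withDensity_apply _ hs]
  simp only [exponentialPDF, exponentialPDFReal, gammaPDF]

lemma myExp_Iic {d : ℝ} (hd : 0 < d) (v : ℝ) (hv : 0 ≤ v) :
    expMeasure d (Iic v) = ENNReal.ofReal (1 - rexp (-(d*v))) := by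
  rw [myExp_apply _ measurableSet_Iic, lintegral_exponentialPDF_eq_antiDeriv hd, if_pos hv]

lemma myExp_Iio {d : ℝ} (hd : 0 < d) (v : ℝ) :
    expMeasure d (Iio v) = ENNReal.ofReal (1 - rexp (-(d*v))) := by
  rcases le_or_gt v 0 with h | h
  · rw [myExp_apply _ measurableSet_Iio, lintegral_exponentialPDF_of_nonpos h,
      Eq.comm, ENNReal.ofReal_eq_zero, sub_nonpos]
    have : (0:ℝ) ≤ -(d*v) := by nlinarith
    calc (1:ℝ) = rexp 0 := by simp
    _ ≤ rexp (-(d*v)) := exp_le_exp.2 this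
  · have hsing : expMeasure d {v} = 0 := by
      rw [myExp_apply _ (measurableSet_singleton v)]
      exact setLIntegral_measure_zero _ _ (measure_singleton v)
    have h1 : expMeasure d (Iio v) ≤ expMeasure d (Iic v) := measure_mono Iio_subset_Iic_self
    have h2 : expMeasure d (Iic v) ≤ expMeasure d (Iio v) := by
      calc expMeasure d (Iic v) ≤ expMeasure d (Iio v ∪ {v}) := by
            apply measure_mono; intro z hz
            rcases lt_or_eq_of_le (show z ≤ v from hz) with h' | h'
            · exact Or.inl h'
            · exact Or.inr h'
      _ ≤ expMeasure d (Iio v) + expMeasure d {v} := measure_union_le _ _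
      _ = expMeasure d (Iio v) := by rw [hsing, add_zero]
    rw [le_antisymm h1 h2, myExp_Iic hd v h.le]

lemma myExp_Ici {d : ℝ} (hd : 0 < d) (v : ℝ) (hv : 0 ≤ v) :
    expMeasure d (Ici v) = ENNReal.ofReal (rexp (-(d*v))) := by
  haveI := isProbabilityMeasure_expMeasure hd
  have : Ici v = (Iio v)ᶜ := by simp
  rw [this, measure_compl measurableSet_Iio (measure_ne_top _ _), myExp_Iio hd v,
    measure_univ]
  have h1 : (0:ℝ) ≤ 1 - rexp (-(d*v)) := by
    have : rexp (-(d*v)) ≤ 1 := exp_le_one_iff.2 (by nlinarith)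
    linarith
  rw [← ENNReal.ofReal_one, ← ENNReal.ofReal_sub _ h1]
  norm_num


-- the density-style representation of P(X+Y < u)
lemma conv_repr {c d : ℝ} (hc : 0 < c) (hd : 0 < d) (u : ℝ) :
    ((expMeasure c).prod (expMeasure d)) {p : ℝ × ℝ | p.1 + p.2 < u}
      = ∫⁻ x in Icc 0 u, ENNReal.ofReal (c * rexp (-(c*x)) * (1 - rexp (-(d*(u-x))))) := by
  haveI := isProbabilityMeasure_expMeasure hc
  haveI := isProbabilityMeasure_expMeasure hd
  have hS : MeasurableSet {p : ℝ × ℝ | p.1 + p.2 < u} :=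
    measurableSet_lt (measurable_fst.add measurable_snd) measurable_const
  rw [Measure.prod_apply hS]
  have hslice : ∀ x : ℝ, (Prod.mk x ⁻¹' {p : ℝ × ℝ | p.1 + p.2 < u}) = Iio (u - x) := by
    intro x; ext y; simp [lt_sub_iff_add_lt']
  simp_rw [hslice]
  have hmeq : ∀ x : ℝ, expMeasure d (Iio (u - x)) = ENNReal.ofReal (1 - rexp (-(d*(u-x)))) :=
    fun x => myExp_Iio hd _
  simp_rw [hmeq]
  have hrepr : expMeasure c = MeasureTheory.volume.withDensity (exponentialPDF c) := by
    rw [expMeasure, gammaMeasure]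
    congr 1
  rw [hrepr, lintegral_withDensity_eq_lintegral_mul _ (show Measurable (exponentialPDF c) from (measurable_exponentialPDFReal c).ennreal_ofReal) (by fun_prop)]
  have hpt : ∀ x : ℝ, (exponentialPDF c * fun x => ENNReal.ofReal (1 - rexp (-(d*(u-x))))) x
      = (Icc 0 u).indicator (fun x => ENNReal.ofReal (c * rexp (-(c*x)) * (1 - rexp (-(d*(u-x)))))) x := by
    intro x
    simp only [Pi.mul_apply]
    rcases lt_or_ge x 0 with hx | hx
    · rw [exponentialPDF_of_neg hx, zero_mul, indicator_of_notMem (by simp [hx.not_ge])]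
    rcases le_or_gt x u with hxu | hxu
    · rw [exponentialPDF_of_nonneg hx, indicator_of_mem (by exact ⟨hx, hxu⟩),
        ← ENNReal.ofReal_mul (by positivity)]
    · have h1 : (1 : ℝ) - rexp (-(d*(u-x))) ≤ 0 := by
        have : (1:ℝ) ≤ rexp (-(d*(u-x))) := by
          rw [← Real.exp_zero, exp_le_exp]; nlinarith
        linarith
      rw [indicator_of_notMem (by simp [hxu.not_ge]), ENNReal.ofReal_eq_zero.2 h1, mul_zero]
  simp_rw [hpt]
  exact lintegral_indicator measurableSet_Icc _

lemma conv_toReal {c d : ℝ} (hc : 0 < c) (hd : 0 < d) (u : ℝ) :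
    (((expMeasure c).prod (expMeasure d)) {p : ℝ × ℝ | p.1 + p.2 < u}).toReal
      = ∫ x in Icc 0 u, c * rexp (-(c*x)) * (1 - rexp (-(d*(u-x)))) := by
  rw [conv_repr hc hd u]
  have hint : IntegrableOn (fun x => c * rexp (-(c*x)) * (1 - rexp (-(d*(u-x))))) (Icc 0 u) :=
    (by fun_prop : Continuous fun x => c * rexp (-(c*x)) * (1 - rexp (-(d*(u-x))))).integrableOn_Icc
  have hnn : 0 ≤ᶠ[ae (MeasureTheory.volume.restrict (Icc 0 u))]
      fun x => c * rexp (-(c*x)) * (1 - rexp (-(d*(u-x)))) := by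
    filter_upwards [ae_restrict_mem measurableSet_Icc] with x hx
    simp only [Pi.zero_apply]
    have h1 : rexp (-(d*(u-x))) ≤ 1 := exp_le_one_iff.2 (by nlinarith [hx.1, hx.2])
    have h2 := exp_pos (-(c*x))
    nlinarith [mul_pos hc h2]
  rw [← ofReal_integral_eq_lintegral_ofReal hint hnn, ENNReal.toReal_ofReal]
  exact integral_nonneg_of_ae hnn


-- pointwise bounds on the integrand
lemma pt_upper {c d x u : ℝ} (hc : 0 < c) (hd : 0 < d) (hx : 0 ≤ x) (hxu : x ≤ u) :
    c * rexp (-(c*x)) * (1 - rexp (-(d*(u-x)))) ≤ c * d * (u - x) := by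
  have hA : rexp (-(c*x)) ≤ 1 := exp_le_one_iff.2 (by nlinarith)
  have hA0 := exp_pos (-(c*x))
  have hB : 1 - rexp (-(d*(u-x))) ≤ d*(u-x) := by
    nlinarith [add_one_le_exp (-(d*(u-x)))]
  have hB0 : 0 ≤ 1 - rexp (-(d*(u-x))) := by
    have : rexp (-(d*(u-x))) ≤ 1 := exp_le_one_iff.2 (by nlinarith)
    linarith
  have h1 : rexp (-(c*x)) * (1 - rexp (-(d*(u-x)))) ≤ 1 - rexp (-(d*(u-x))) := by
    nlinarith
  have h2 : c * (1 - rexp (-(d*(u-x)))) ≤ c * (d*(u-x)) :=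
    mul_le_mul_of_nonneg_left hB hc.le
  nlinarith

lemma alg_lower {A B v w c d x u : ℝ} (hc : 0 < c) (hd : 0 < d) (hx : 0 ≤ x) (hxu : x ≤ u)
    (hcu : c*u ≤ 1) (hdu : d*u ≤ 1) (hv : v = d*(u-x)) (hw : w = c*x)
    (hA0 : 0 < A) (hB0 : 0 < B) (hAl : 1 - w ≤ A) (hkey : v * B ≤ 1 - B) (hBl : 1 - v ≤ B) :
    c * d * (u - x) - c * d * (c + d) * u^2 ≤ c * A * (1 - B) := by
  have hv0 : 0 ≤ v := by rw [hv]; nlinarith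
  have hv1 : v ≤ 1 := by nlinarith
  have hw0 : 0 ≤ w := by rw [hw]; positivity
  have hw1 : w ≤ 1 := by rw [hw]; nlinarith
  have key2 : v * (1 - v) ≤ 1 - B := by nlinarith
  have hfin : (1 - w) * (v*(1-v)) ≤ A * (1 - B) := by
    have h1 : (1 - w) * (v*(1-v)) ≤ A * (v*(1-v)) :=
      mul_le_mul_of_nonneg_right hAl (by nlinarith)
    have h2 : A * (v*(1-v)) ≤ A * (1 - B) := mul_le_mul_of_nonneg_left key2 hA0.le
    linarith
  have hvx : v ≤ d*u := by rw [hv]; nlinarith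
  have hc' := mul_le_mul_of_nonneg_left hfin hc.le
  have hring : c*((1 - w)*(v*(1-v))) = c*v - c*v^2 - c*(w*v) + c*w*v^2 := by ring
  have hdu0 : 0 ≤ d*u := by nlinarith
  have e1 : c*v^2 ≤ c*(d^2*u^2) := by
    nlinarith [mul_le_mul_of_nonneg_left (mul_self_le_mul_self hv0 hvx) hc.le]
  have hxx : x*(u-x) ≤ u^2 := by nlinarith [sq_nonneg (u - x), sq_nonneg x]
  have ewv : w*v ≤ c*(d*u^2) := by
    rw [hv, hw]
    nlinarith [mul_le_mul_of_nonneg_left hxx (mul_pos hc hd).le]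
  have e2 : c*(w*v) ≤ c*(c*(d*u^2)) := mul_le_mul_of_nonneg_left ewv hc.le
  have e3 : (0:ℝ) ≤ c*w*v^2 := by positivity
  have egoal1 : c*d*(u-x) = c*v := by rw [hv]; ring
  have egoal2 : c*d*(c+d)*u^2 = c*(c*(d*u^2)) + c*(d^2*u^2) := by ring
  linarith [hc', e1, e2, e3]

lemma pt_lower {c d x u : ℝ} (hc : 0 < c) (hd : 0 < d) (hx : 0 ≤ x) (hxu : x ≤ u)
    (hcu : c*u ≤ 1) (hdu : d*u ≤ 1) :
    c * d * (u - x) - c * d * (c + d) * u^2 ≤ c * rexp (-(c*x)) * (1 - rexp (-(d*(u-x)))) := by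
  have hA0 : 0 < rexp (-(c*x)) := exp_pos _
  have hB0 : 0 < rexp (-(d*(u-x))) := exp_pos _
  have hAl : 1 - c*x ≤ rexp (-(c*x)) := by nlinarith [add_one_le_exp (-(c*x))]
  have hBl : 1 - d*(u-x) ≤ rexp (-(d*(u-x))) := by nlinarith [add_one_le_exp (-(d*(u-x)))]
  have hBmul : rexp (-(d*(u-x))) * rexp (d*(u-x)) = 1 := by rw [← exp_add]; norm_num
  have hexpv : d*(u-x) + 1 ≤ rexp (d*(u-x)) := add_one_le_exp _
  have hkey : (d*(u-x)) * rexp (-(d*(u-x))) ≤ 1 - rexp (-(d*(u-x))) := by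
    nlinarith [mul_le_mul_of_nonneg_left hexpv hB0.le]
  exact alg_lower hc hd hx hxu hcu hdu rfl rfl hA0 hB0 hAl hkey hBl

-- integral computation: ∫_{Icc 0 u} (c*d*(u - x)) dx = c*d*u^2/2
lemma int_linear (c d u : ℝ) (hu : 0 ≤ u) :
    ∫ x in Icc 0 u, c * d * (u - x) = c * d * u^2 / 2 := by
  rw [integral_Icc_eq_integral_Ioc, ← intervalIntegral.integral_of_le hu,
    intervalIntegral.integral_const_mul]
  have : ∫ x in (0:ℝ)..u, (u - x) = u*u - u^2/2 := by
    rw [intervalIntegral.integral_sub intervalIntegrable_const intervalIntegral.intervalIntegrable_id,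
      intervalIntegral.integral_const, integral_id]
    norm_num
  rw [this]; ring

lemma int_const (K u : ℝ) (hu : 0 ≤ u) :
    ∫ _x in Icc 0 u, K = K * u := by
  simp [Real.volume_Icc, hu, mul_comm]
lemma tendsto_Ici_toReal {a : ℝ} (ha : 0 < a) :
    Tendsto (fun u => (expMeasure a (Ici u)).toReal) (nhdsWithin 0 (Ioi 0)) (nhds 1) := by
  have h1 : Tendsto (fun u : ℝ => rexp (-(a*u))) (nhdsWithin 0 (Ioi 0)) (nhds 1) := by
    have hc : Continuous fun u : ℝ => rexp (-(a*u)) := by fun_prop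
    have := hc.tendsto 0
    simp only [mul_zero, neg_zero, exp_zero] at this
    exact this.mono_left nhdsWithin_le_nhds
  refine h1.congr' ?_
  filter_upwards [self_mem_nhdsWithin] with u hu
  rw [myExp_Ici ha u (le_of_lt hu), ENNReal.toReal_ofReal (exp_pos _).le]

lemma tendsto_Iio_toReal_div {b : ℝ} (hb : 0 < b) :
    Tendsto (fun u => (expMeasure b (Iio u)).toReal / u) (nhdsWithin 0 (Ioi 0)) (nhds b) := by
  have hder : HasDerivAt (fun u : ℝ => 1 - rexp (-b*u)) b 0 := by
    have h1 : HasDerivAt (fun u : ℝ => (-b)*u) (-b) 0 := by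
      simpa using (hasDerivAt_id (0:ℝ)).const_mul (-b)
    have h2 := h1.exp
    simp only [mul_zero, exp_zero, mul_one] at h2
    have h3 := h2.const_sub 1
    simpa using h3
  have hslope := hasDerivAt_iff_tendsto_slope.1 hder
  have hmono : nhdsWithin (0:ℝ) (Ioi 0) ≤ nhdsWithin 0 {(0:ℝ)}ᶜ := by
    apply nhdsWithin_mono
    intro x hx
    exact (ne_of_gt hx)
  refine ((hslope.mono_left hmono).congr' ?_)
  filter_upwards [self_mem_nhdsWithin] with u hu
  rw [slope_def_field]
  have hu' : (0:ℝ) < u := hu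
  rw [myExp_Iio hb u, ENNReal.toReal_ofReal]
  · simp only [mul_zero, neg_zero, exp_zero, sub_self, sub_zero]
    field_simp
  · have : rexp (-(b*u)) ≤ 1 := exp_le_one_iff.2 (by nlinarith)
    linarith

lemma tendsto_conv_div {c d : ℝ} (hc : 0 < c) (hd : 0 < d) :
    Tendsto (fun u => (((expMeasure c).prod (expMeasure d)) {p : ℝ × ℝ | p.1 + p.2 < u}).toReal / u^2)
      (nhdsWithin 0 (Ioi 0)) (nhds (c*d/2)) := by
  set τ : ℝ := min (1/c) (1/d) with hτ
  have hτ0 : 0 < τ := lt_min (by positivity) (by positivity)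
  have hev : Ioc (0:ℝ) τ ∈ nhdsWithin (0:ℝ) (Ioi 0) :=
    Ioc_mem_nhdsGT_of_mem ⟨le_refl 0, hτ0⟩
  have hbound : ∀ u ∈ Ioc (0:ℝ) τ,
      c*d/2 - c*d*(c+d)*u ≤ (((expMeasure c).prod (expMeasure d)) {p : ℝ × ℝ | p.1 + p.2 < u}).toReal / u^2 ∧
      (((expMeasure c).prod (expMeasure d)) {p : ℝ × ℝ | p.1 + p.2 < u}).toReal / u^2 ≤ c*d/2 := by
    intro u hu
    obtain ⟨hu0, huτ⟩ := hu
    have hcu : c * u ≤ 1 := by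
      have h1 : u ≤ 1/c := le_trans huτ (min_le_left _ _)
      rw [mul_comm]
      simpa using (le_div_iff₀ hc).1 h1
    have hdu : d * u ≤ 1 := by
      have h1 : u ≤ 1/d := le_trans huτ (min_le_right _ _)
      rw [mul_comm]
      simpa using (le_div_iff₀ hd).1 h1
    rw [conv_toReal hc hd u]
    have hcont : Continuous fun x => c * rexp (-(c*x)) * (1 - rexp (-(d*(u-x)))) := by fun_prop
    have hupper : ∫ x in Icc 0 u, c * rexp (-(c*x)) * (1 - rexp (-(d*(u-x))))
        ≤ c * d * u^2/2 := by
      rw [← int_linear c d u hu0.le]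
      refine setIntegral_mono_on hcont.integrableOn_Icc (by fun_prop : Continuous fun x => c*d*(u-x)).integrableOn_Icc measurableSet_Icc ?_
      exact fun x hx => pt_upper hc hd hx.1 hx.2
    have hlower : c * d * u^2/2 - c*d*(c+d)*u^2 * u ≤ ∫ x in Icc 0 u, c * rexp (-(c*x)) * (1 - rexp (-(d*(u-x)))) := by
      have hint : ∫ x in Icc 0 u, (c * d * (u - x) - c*d*(c+d)*u^2)
          = c * d * u^2/2 - c*d*(c+d)*u^2 * u := by
        rw [integral_sub ((by fun_prop : Continuous fun x => c*d*(u-x)).integrableOn_Icc)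
          (integrableOn_const (by rw [Real.volume_Icc]; exact ENNReal.ofReal_ne_top))]
        rw [int_linear c d u hu0.le, setIntegral_const]
        rw [Real.volume_real_Icc_of_le hu0.le, sub_zero, smul_eq_mul]
        ring
      rw [← hint]
      refine setIntegral_mono_on ((by fun_prop : Continuous fun x => c*d*(u-x) - c*d*(c+d)*u^2).integrableOn_Icc)
        hcont.integrableOn_Icc measurableSet_Icc ?_
      exact fun x hx => pt_lower hc hd hx.1 hx.2 hcu hdu
    have hu2 : (0:ℝ) < u^2 := by positivity
    constructor
    · have h2 : (c*d*u^2/2 - c*d*(c+d)*u^2*u)/u^2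
          ≤ (∫ x in Icc 0 u, c * rexp (-(c*x)) * (1 - rexp (-(d*(u-x)))))/u^2 := by gcongr
      calc c*d/2 - c*d*(c+d)*u = (c*d*u^2/2 - c*d*(c+d)*u^2*u)/u^2 := by field_simp
      _ ≤ _ := h2
    · have h2 : (∫ x in Icc 0 u, c * rexp (-(c*x)) * (1 - rexp (-(d*(u-x)))))/u^2
          ≤ (c*d*u^2/2)/u^2 := by gcongr
      calc (∫ x in Icc 0 u, c * rexp (-(c*x)) * (1 - rexp (-(d*(u-x)))))/u^2
          ≤ (c*d*u^2/2)/u^2 := h2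
      _ = c*d/2 := by field_simp
  have hlowf : Tendsto (fun u : ℝ => c*d/2 - c*d*(c+d)*u) (nhdsWithin 0 (Ioi 0)) (nhds (c*d/2)) := by
    have hcont : Continuous fun u : ℝ => c*d/2 - c*d*(c+d)*u := by fun_prop
    have := hcont.tendsto 0
    simp only [mul_zero, sub_zero] at this
    exact this.mono_left nhdsWithin_le_nhds
  refine tendsto_of_tendsto_of_tendsto_of_le_of_le' hlowf tendsto_const_nhds ?_ ?_
  · filter_upwards [hev] with u hu
    exact (hbound u hu).1
  · filter_upwards [hev] with u hu
    exact (hbound u hu).2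


lemma div_one_add : Tendsto (fun s : ℝ => (1+s)/s) atTop (nhds 1) := by
  have h : Tendsto (fun s : ℝ => s⁻¹ + 1) atTop (nhds 1) := by
    simpa using tendsto_inv_atTop_zero.add (tendsto_const_nhds (x := (1:ℝ)))
  refine h.congr' ?_
  filter_upwards [eventually_gt_atTop 0] with s hs
  field_simp

section
variable (r : ℝ) (hr0 : 0 < 2*r) (hr1 : 2*r < 1)

include hr0 hr1 in
lemma hts_lemma : Tendsto (fun s : ℝ => (((1+s) ^ (2*r) - 1)/s) / s^(2*r-1)) atTop (nhds 1) := by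
  have h1 : Tendsto (fun s : ℝ => ((1+s)/s) ^ (2*r)) atTop (nhds 1) := by
    have hc := (Real.continuousAt_rpow_const 1 (2*r) (Or.inl one_ne_zero)).tendsto
    rw [Real.one_rpow] at hc
    exact hc.comp div_one_add
  have h2 : Tendsto (fun s : ℝ => s ^ (-(2*r))) atTop (nhds 0) := tendsto_rpow_neg_atTop hr0
  have h := h1.sub h2
  rw [sub_zero] at h
  refine h.congr' ?_
  filter_upwards [eventually_gt_atTop 0] with s hs
  have h1s : (0:ℝ) < 1 + s := by linarith
  have e1 : s^(2*r-1) = s^(2*r)/s := by rw [Real.rpow_sub hs, Real.rpow_one]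
  have e2 : (0:ℝ) < s^(2*r) := Real.rpow_pos_of_pos hs _
  rw [Real.div_rpow h1s.le hs.le, Real.rpow_neg hs.le, e1]
  field_simp

include hr0 hr1 in
lemma ht0_lemma : Tendsto (fun s : ℝ => ((1+s) ^ (2*r) - 1)/s) atTop (nhdsWithin 0 (Ioi 0)) := by
  rw [tendsto_nhdsWithin_iff]
  constructor
  · have hsm : Tendsto (fun s : ℝ => s^(2*r-1)) atTop (nhds 0) := by
      have := tendsto_rpow_neg_atTop (y := 1-2*r) (by linarith)
      simpa [show -(1-2*r) = 2*r-1 by ring] using this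
    have h := (hts_lemma r hr0 hr1).mul hsm
    rw [one_mul] at h
    refine h.congr' ?_
    filter_upwards [eventually_gt_atTop 0] with s hs
    have e2 : s^(2*r-1) ≠ 0 := (Real.rpow_pos_of_pos hs _).ne'
    field_simp
  · filter_upwards [eventually_gt_atTop 0] with s hs
    have h1 : (1:ℝ) < (1+s) ^ (2*r) :=
      (Real.one_lt_rpow_iff_of_pos (by linarith)).2 (Or.inl ⟨by linarith, by linarith⟩)
    exact div_pos (by linarith) hs

include hr0 hr1 in
lemma hcube_lemma : Tendsto (fun s : ℝ => (((1+s) ^ (2*r) - 1)/s)^3 / s^(-(3*(1-2*r)))) atTop (nhds 1) := by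
  have h := (hts_lemma r hr0 hr1).pow 3
  rw [one_pow] at h
  refine h.congr' ?_
  filter_upwards [eventually_gt_atTop 0] with s hs
  rw [div_pow, ← Real.rpow_natCast (s^(2*r-1)) 3, ← Real.rpow_mul hs.le]
  norm_num
  rw [show (2*r-1)*3 = -(3*(1-2*r)) by ring]
end
lemma tendsto_triple {a b c d : ℝ} (ha : 0 < a) (hb : 0 < b) (hc : 0 < c) (hd : 0 < d) :
    Tendsto (fun u => ((expMeasure a (Ici u)).toReal * (expMeasure b (Iio u)).toReal *
        (((expMeasure c).prod (expMeasure d)) {p : ℝ × ℝ | p.1 + p.2 < u}).toReal) / u^3)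
      (nhdsWithin 0 (Ioi 0)) (nhds (b*(c*d/2))) := by
  have h := ((tendsto_Ici_toReal ha).mul (tendsto_Iio_toReal_div hb)).mul (tendsto_conv_div hc hd)
  rw [show (1:ℝ)*b*(c*d/2) = b*(c*d/2) by ring] at h
  refine h.congr' ?_
  filter_upwards [self_mem_nhdsWithin] with u hu
  have hu' : (0:ℝ) < u := hu
  have hne : u ≠ 0 := ne_of_gt hu'
  show _ * (_ / u) * (_ / u^2) = _ / u^3
  field_simp

end StmtSixAux

section StmtSix
open Set

/-- for repetition-coding based distributed delay diversity, the
probability that exactly one relay decodes and the resulting repetition channel is in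
outage is asymptotically
`(1/2)(λ_{S,R₂} λ_{R₁,D} + λ_{S,R₁} λ_{R₂,D}) λ_{S,D} s^{-3(1-2r)}` as `s → ∞`. -/
theorem stmt_6
    {Ω : Type*} [MeasurableSpace Ω] (μ : Measure Ω) [IsProbabilityMeasure μ]
    (G : Fin 5 → Ω → ℝ) (lamSD lamSR1 lamSR2 lamRD1 lamRD2 : ℝ)
    (hlamSD : 0 < lamSD) (hlamSR1 : 0 < lamSR1) (hlamSR2 : 0 < lamSR2)
    (hlamRD1 : 0 < lamRD1) (hlamRD2 : 0 < lamRD2)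
    (hmeas : ∀ i, Measurable (G i))
    (hindep : iIndepFun G μ)
    (hlaw0 : μ.map (G 0) = expMeasure lamSD)
    (hlaw1 : μ.map (G 1) = expMeasure lamSR1)
    (hlaw2 : μ.map (G 2) = expMeasure lamSR2)
    (hlaw3 : μ.map (G 3) = expMeasure lamRD1)
    (hlaw4 : μ.map (G 4) = expMeasure lamRD2)
    (r : ℝ) (hr : r ∈ Set.Ioo (0:ℝ) (1/2)) :
    (fun s : ℝ => (μ (
        ({ω | 1 + s * G 1 ω ≥ (1+s) ^ (2*r)} ∩ {ω | 1 + s * G 2 ω < (1+s) ^ (2*r)}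
          ∩ {ω | 1 + s * (G 0 ω + G 3 ω) < (1+s) ^ (2*r)})
        ∪ ({ω | 1 + s * G 2 ω ≥ (1+s) ^ (2*r)} ∩ {ω | 1 + s * G 1 ω < (1+s) ^ (2*r)}
          ∩ {ω | 1 + s * (G 0 ω + G 4 ω) < (1+s) ^ (2*r)}))).toReal)
      ~[atTop]
      (fun s : ℝ =>
        (1/2) * (lamSR2 * lamRD1 + lamSR1 * lamRD2) * lamSD * s ^ (-(3*(1-2*r)))) := by

  obtain ⟨hr0, hr2⟩ := hr
  have hr1 : 2*r < 1 := by linarith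
  have hr0' : 0 < 2*r := by linarith
  set C' : ℝ := (1/2) * (lamSR2 * lamRD1 + lamSR1 * lamRD2) * lamSD with hC'def
  have hC' : 0 < C' := by positivity
  set t : ℝ → ℝ := fun s => ((1+s) ^ (2*r) - 1)/s with htdef
  have hS : ∀ u : ℝ, MeasurableSet {p : ℝ × ℝ | p.1 + p.2 < u} := fun u =>
    measurableSet_lt (measurable_fst.add measurable_snd) measurable_const
  -- factorization of one component
  have key : ∀ (i j l : Fin 5), i ≠ j → (0:Fin 5) ≠ i → (0:Fin 5) ≠ j → l ≠ i → l ≠ j →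
      l ≠ 0 → ∀ u : ℝ,
      μ ((G i ⁻¹' Ici u) ∩ (G j ⁻¹' Iio u) ∩ ((fun ω => (G 0 ω, G l ω)) ⁻¹' {p : ℝ × ℝ | p.1 + p.2 < u}))
      = (μ.map (G i)) (Ici u) * (μ.map (G j)) (Iio u)
        * (((μ.map (G 0)).prod (μ.map (G l))) {p : ℝ × ℝ | p.1 + p.2 < u}) := by
    intro i j l hij h0i h0j hli hlj hl0 u
    have hpair : IndepFun (fun ω => (G i ω, G j ω)) (fun ω => (G 0 ω, G l ω)) μ :=
      hindep.indepFun_prodMk_prodMk hmeas i j 0 l h0i.symm hli.symm h0j.symm hlj.symm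
    have h1 : (G i ⁻¹' Ici u) ∩ (G j ⁻¹' Iio u)
        = (fun ω => (G i ω, G j ω)) ⁻¹' (Ici u ×ˢ Iio u) := (Set.mk_preimage_prod _ _).symm
    rw [h1, hpair.measure_inter_preimage_eq_mul _ _ (measurableSet_Ici.prod measurableSet_Iio)
      (hS u), ← h1]
    have hij' : IndepFun (G i) (G j) μ := hindep.indepFun hij
    rw [hij'.measure_inter_preimage_eq_mul _ _ measurableSet_Ici measurableSet_Iio]
    have hmap : μ.map (fun ω => (G 0 ω, G l ω)) = (μ.map (G 0)).prod (μ.map (G l)) :=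
      (indepFun_iff_map_prod_eq_prod_map_map (hmeas 0).aemeasurable (hmeas l).aemeasurable).1
        (hindep.indepFun hl0.symm)
    rw [← Measure.map_apply ((hmeas 0).prodMk (hmeas l)) (hS u), hmap,
      Measure.map_apply (hmeas i) measurableSet_Ici, Measure.map_apply (hmeas j) measurableSet_Iio]
  -- the deterministic representation eventually
  have hform : ∀ᶠ s in atTop, (μ (
        ({ω | 1 + s * G 1 ω ≥ (1+s) ^ (2*r)} ∩ {ω | 1 + s * G 2 ω < (1+s) ^ (2*r)}
          ∩ {ω | 1 + s * (G 0 ω + G 3 ω) < (1+s) ^ (2*r)})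
        ∪ ({ω | 1 + s * G 2 ω ≥ (1+s) ^ (2*r)} ∩ {ω | 1 + s * G 1 ω < (1+s) ^ (2*r)}
          ∩ {ω | 1 + s * (G 0 ω + G 4 ω) < (1+s) ^ (2*r)}))).toReal
      = ((expMeasure lamSR1 (Ici (t s))).toReal * (expMeasure lamSR2 (Iio (t s))).toReal *
          (((expMeasure lamSD).prod (expMeasure lamRD1)) {p : ℝ × ℝ | p.1 + p.2 < t s}).toReal)
        + ((expMeasure lamSR2 (Ici (t s))).toReal * (expMeasure lamSR1 (Iio (t s))).toReal *
          (((expMeasure lamSD).prod (expMeasure lamRD2)) {p : ℝ × ℝ | p.1 + p.2 < t s}).toReal) := by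
    filter_upwards [eventually_gt_atTop 0] with s hs
    have hset1 : {ω | 1 + s * G 1 ω ≥ (1+s) ^ (2*r)} = G 1 ⁻¹' Ici (t s) := by
      ext ω; simp only [mem_setOf_eq, mem_preimage, mem_Ici, ge_iff_le, htdef]
      rw [div_le_iff₀ hs]
      constructor <;> intro h <;> linarith
    have hset1' : {ω | 1 + s * G 1 ω < (1+s) ^ (2*r)} = G 1 ⁻¹' Iio (t s) := by
      ext ω; simp only [mem_setOf_eq, mem_preimage, mem_Iio, htdef]
      rw [lt_div_iff₀ hs]
      constructor <;> intro h <;> linarith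
    have hset2 : {ω | 1 + s * G 2 ω ≥ (1+s) ^ (2*r)} = G 2 ⁻¹' Ici (t s) := by
      ext ω; simp only [mem_setOf_eq, mem_preimage, mem_Ici, ge_iff_le, htdef]
      rw [div_le_iff₀ hs]
      constructor <;> intro h <;> linarith
    have hset2' : {ω | 1 + s * G 2 ω < (1+s) ^ (2*r)} = G 2 ⁻¹' Iio (t s) := by
      ext ω; simp only [mem_setOf_eq, mem_preimage, mem_Iio, htdef]
      rw [lt_div_iff₀ hs]
      constructor <;> intro h <;> linarith
    have hset3 : {ω | 1 + s * (G 0 ω + G 3 ω) < (1+s) ^ (2*r)}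
        = (fun ω => (G 0 ω, G 3 ω)) ⁻¹' {p : ℝ × ℝ | p.1 + p.2 < t s} := by
      ext ω; simp only [mem_setOf_eq, mem_preimage, htdef]
      rw [lt_div_iff₀ hs]
      constructor <;> intro h <;> linarith
    have hset4 : {ω | 1 + s * (G 0 ω + G 4 ω) < (1+s) ^ (2*r)}
        = (fun ω => (G 0 ω, G 4 ω)) ⁻¹' {p : ℝ × ℝ | p.1 + p.2 < t s} := by
      ext ω; simp only [mem_setOf_eq, mem_preimage, htdef]
      rw [lt_div_iff₀ hs]
      constructor <;> intro h <;> linarith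
    rw [hset1, hset1', hset2, hset2', hset3, hset4]
    have hdisj : Disjoint
        ((G 1 ⁻¹' Ici (t s)) ∩ (G 2 ⁻¹' Iio (t s)) ∩ ((fun ω => (G 0 ω, G 3 ω)) ⁻¹' {p : ℝ × ℝ | p.1 + p.2 < t s}))
        ((G 2 ⁻¹' Ici (t s)) ∩ (G 1 ⁻¹' Iio (t s)) ∩ ((fun ω => (G 0 ω, G 4 ω)) ⁻¹' {p : ℝ × ℝ | p.1 + p.2 < t s})) := by
      rw [Set.disjoint_left]
      rintro ω ⟨⟨-, h2⟩, -⟩ ⟨⟨h2', -⟩, -⟩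
      exact absurd (lt_of_le_of_lt (show t s ≤ G 2 ω from h2') (show G 2 ω < t s from h2))
        (lt_irrefl _)
    have hmeas2 : MeasurableSet
        ((G 2 ⁻¹' Ici (t s)) ∩ (G 1 ⁻¹' Iio (t s)) ∩ ((fun ω => (G 0 ω, G 4 ω)) ⁻¹' {p : ℝ × ℝ | p.1 + p.2 < t s})) :=
      (((hmeas 2) measurableSet_Ici).inter ((hmeas 1) measurableSet_Iio)).inter
        (((hmeas 0).prodMk (hmeas 4)) (hS (t s)))
    rw [measure_union hdisj hmeas2]
    rw [key 1 2 3 (by decide) (by decide) (by decide) (by decide) (by decide) (by decide),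
      key 2 1 4 (by decide) (by decide) (by decide) (by decide) (by decide) (by decide)]
    rw [hlaw0, hlaw1, hlaw2, hlaw3, hlaw4]
    haveI h1 := isProbabilityMeasure_expMeasure hlamSD
    haveI h2 := isProbabilityMeasure_expMeasure hlamSR1
    haveI h3 := isProbabilityMeasure_expMeasure hlamSR2
    haveI h4 := isProbabilityMeasure_expMeasure hlamRD1
    haveI h5 := isProbabilityMeasure_expMeasure hlamRD2
    rw [ENNReal.toReal_add (by finiteness) (by finiteness), ENNReal.toReal_mul, ENNReal.toReal_mul,
      ENNReal.toReal_mul, ENNReal.toReal_mul]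
  -- asymptotics
  have hts := hts_lemma r hr0' hr1
  have ht0 := ht0_lemma r hr0' hr1
  have hcube := hcube_lemma r hr0' hr1
  have htpos : ∀ᶠ s in atTop, t s ∈ Ioi (0:ℝ) := (tendsto_nhdsWithin_iff.1 ht0).2
  have hT1 : Tendsto (fun s => ((expMeasure lamSR1 (Ici (t s))).toReal *
      (expMeasure lamSR2 (Iio (t s))).toReal *
      (((expMeasure lamSD).prod (expMeasure lamRD1)) {p : ℝ × ℝ | p.1 + p.2 < t s}).toReal)
      / (t s)^3) atTop (nhds (lamSR2*(lamSD*lamRD1/2))) :=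
    (tendsto_triple hlamSR1 hlamSR2 hlamSD hlamRD1).comp ht0
  have hT2 : Tendsto (fun s => ((expMeasure lamSR2 (Ici (t s))).toReal *
      (expMeasure lamSR1 (Iio (t s))).toReal *
      (((expMeasure lamSD).prod (expMeasure lamRD2)) {p : ℝ × ℝ | p.1 + p.2 < t s}).toReal)
      / (t s)^3) atTop (nhds (lamSR1*(lamSD*lamRD2/2))) :=
    (tendsto_triple hlamSR2 hlamSR1 hlamSD hlamRD2).comp ht0
  have hz : ∀ᶠ s in atTop, C' * s ^ (-(3*(1-2*r))) ≠ 0 := by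
    filter_upwards [eventually_gt_atTop 0] with s hs
    have := Real.rpow_pos_of_pos hs (-(3*(1-2*r)))
    positivity
  rw [isEquivalent_iff_tendsto_one hz]
  have hmain := ((hT1.add hT2).mul hcube).div_const C'
  have heq : ((lamSR2*(lamSD*lamRD1/2) + lamSR1*(lamSD*lamRD2/2)) * 1)/C' = 1 := by
    rw [mul_one, div_eq_one_iff_eq (ne_of_gt hC'), hC'def]
    ring
  rw [heq] at hmain
  refine hmain.congr' ?_
  filter_upwards [hform, eventually_gt_atTop 0, htpos] with s hfs hs htp
  have htp' : (0:ℝ) < t s := htp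
  have ht3 : (t s)^3 ≠ 0 := by positivity
  have hse : s ^ (-(3*(1-2*r))) ≠ 0 := (Real.rpow_pos_of_pos hs _).ne'
  have halg : ∀ (A B T E : ℝ), T ≠ 0 → E ≠ 0 →
      (A/T + B/T) * (T/E) / C' = (A+B)/(C'*E) := by
    intro A B T E h1 h2
    rw [← add_div, div_mul_div_comm, mul_comm (A+B) T, mul_div_mul_left _ _ h1,
      div_div, mul_comm E C']
  simp only [Pi.div_apply]
  rw [hfs]
  simp only [htdef]
  exact halg _ _ _ _ (pow_ne_zero 3 (ne_of_gt htp')) hse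

end StmtSix
end

section
/- Let a₁, a₂ ∈ ℂ, ρ > 0, and let B, T₀ > 0 be reals with B·T₀ ≥ 1. Set Δ₁ = ⌊BT₀⌋/⌈BT₀⌉. Then (1/(4πBT₀))·∫_{−πBT₀}^{πBT₀} ln(1 + ρ·|a₁ + a₂e^{iu}|²) du ≥ (Δ₁/2)·ln((1 + ρ(|a₁|² + |a₂|²))/2). -/
open MeasureTheory Real

/-- Mean value property: the average of `log ‖1 + v e^{iθ}‖` over a period is zero
when `‖v‖ < 1`. -/
lemma circle_log_norm_integral {v : ℂ} (hv : ‖v‖ < 1) :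
    ∫ θ in (0:ℝ)..(2*π), Real.log ‖1 + v * Complex.exp (θ * Complex.I)‖ = 0 := by
  have hpos : ∀ z : ℂ, ‖z‖ ≤ 1 → (0:ℝ) < (1 + v * z).re := by
    intro z hz
    have h1 : ‖v * z‖ < 1 := by
      rw [norm_mul]
      nlinarith [norm_nonneg v, norm_nonneg z]
    have h2 : |(v * z).re| ≤ ‖v * z‖ := Complex.abs_re_le_norm (v * z)
    have : (1 + v * z).re = 1 + (v * z).re := by simp
    rw [this]
    cases abs_le.1 h2 with
    | intro hl hr => linarith
  have hslit : ∀ z : ℂ, ‖z‖ ≤ 1 → (1 + v * z) ∈ Complex.slitPlane :=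
    fun z hz => Complex.mem_slitPlane_iff.2 (Or.inl (hpos z hz))
  set g : ℂ → ℂ := fun z => Complex.log (1 + v * z) with hg
  have hd : DifferentiableOn ℂ g (Metric.closedBall 0 1) := by
    intro z hz
    have hz1 : ‖z‖ ≤ 1 := by simpa [Metric.mem_closedBall] using hz
    exact (((differentiableAt_const (1:ℂ)).add
      ((differentiableAt_const v).mul differentiableAt_id)).clog
      (hslit z hz1)).differentiableWithinAt
  have key := hd.circleIntegral_sub_inv_smul (w := 0)
    (Metric.mem_ball_self one_pos)
  have hg0 : g 0 = 0 := by simp [hg]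
  rw [hg0, smul_zero] at key
  rw [circleIntegral] at key
  have hint_eq : ∀ θ : ℝ, deriv (circleMap 0 1) θ • ((circleMap 0 1 θ - 0)⁻¹ • g (circleMap 0 1 θ))
      = Complex.I * g (Complex.exp (θ * Complex.I)) := by
    intro θ
    rw [deriv_circleMap]
    simp only [circleMap_zero, sub_zero, smul_eq_mul, Complex.ofReal_one, one_mul]
    have hne : Complex.exp (θ * Complex.I) ≠ 0 := Complex.exp_ne_zero _
    field_simp
  simp only [hint_eq] at key
  rw [intervalIntegral.integral_const_mul] at key
  have hI : (Complex.I : ℂ) ≠ 0 := Complex.I_ne_zero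
  have hzero : ∫ θ in (0:ℝ)..(2*π), g (Complex.exp (θ * Complex.I)) = 0 :=
    (mul_eq_zero.1 key).resolve_left hI
  have hcont : Continuous fun θ : ℝ => g (Complex.exp (θ * Complex.I)) := by
    apply Continuous.clog
    · fun_prop
    · intro θ
      apply hslit
      simp [Complex.norm_exp]
  have hii : IntervalIntegrable (fun θ : ℝ => g (Complex.exp (θ * Complex.I)))
      volume 0 (2*π) := hcont.intervalIntegrable _ _
  have := Complex.reCLM.intervalIntegral_comp_comm hii
  rw [hzero] at this
  simp only [Complex.reCLM_apply, map_zero] at this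
  calc ∫ θ in (0:ℝ)..(2*π), Real.log ‖1 + v * Complex.exp (θ * Complex.I)‖
      = ∫ θ in (0:ℝ)..(2*π), (g (Complex.exp (θ * Complex.I))).re := by
        apply intervalIntegral.integral_congr
        intro θ _
        simp [hg, Complex.log_re]
    _ = 0 := this

/-- Pointwise bound: `log(c/2) + 2 log‖1 + v z‖ ≤ log (c + 2 Re(w z))` on the unit circle,
where `v = (2/c) w`. -/
lemma pointwise_bound {c : ℝ} {w : ℂ} (hc : 1 ≤ c) (hw : 2 * ‖w‖ ≤ c - 1) {z : ℂ}
    (hz : ‖z‖ = 1) :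
    Real.log (c/2) + 2 * Real.log ‖1 + ((2/c : ℝ) : ℂ) * w * z‖
      ≤ Real.log (c + 2 * (w * z).re) := by
  have hc0 : (0:ℝ) < c := by linarith
  set v : ℂ := ((2/c : ℝ) : ℂ) * w with hvdef
  have hnv : ‖v‖ = (2/c) * ‖w‖ := by
    rw [hvdef, norm_mul, Complex.norm_real, Real.norm_eq_abs, abs_of_pos (by positivity)]
  have hv1 : ‖v‖ < 1 := by
    rw [hnv]
    rw [div_mul_eq_mul_div, div_lt_one hc0]
    linarith
  have hnvz : ‖v * z‖ = ‖v‖ := by rw [norm_mul, hz, mul_one]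
  have hlb : 1 - ‖v‖ ≤ ‖1 + v * z‖ := by
    have h := norm_add_le (1 + v * z) (-(v * z))
    simp only [add_neg_cancel_right, norm_one, norm_neg] at h
    rw [hnvz] at h
    linarith
  have hpos1 : (0:ℝ) < ‖1 + v * z‖ := by linarith
  have hsq : ‖1 + v * z‖^2 = 1 + ‖v‖^2 + 2 * (v * z).re := by
    have h := Complex.normSq_add 1 (v * z)
    have h1 : Complex.normSq (1 + v * z) = ‖1 + v * z‖^2 := by
      rw [Complex.sq_norm]
    have h2 : Complex.normSq (1:ℂ) = 1 := by simp
    have h3 : Complex.normSq (v * z) = ‖v * z‖^2 := by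
      rw [Complex.sq_norm]
    have h4 : ((1:ℂ) * (starRingEnd ℂ) (v * z)).re = (v * z).re := by
      rw [one_mul, Complex.conj_re]
    rw [h1, h2, h3, h4, hnvz] at h
    linarith
  have hre : (v * z).re = (2/c) * (w * z).re := by
    rw [hvdef, mul_assoc]
    exact Complex.re_ofReal_mul _ _
  have hchain : (c/2) * ‖1 + v * z‖^2 ≤ c + 2 * (w * z).re := by
    rw [hsq, hre]
    have hv2 : ‖v‖^2 ≤ 1 := by nlinarith [norm_nonneg v]
    have : (c/2) * (1 + ‖v‖^2 + 2 * ((2/c) * (w * z).re))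
        = c/2 + (c/2) * ‖v‖^2 + 2 * (w * z).re := by
      field_simp
    rw [this]
    nlinarith
  have hmidpos : (0:ℝ) < (c/2) * ‖1 + v * z‖^2 := by positivity
  calc Real.log (c/2) + 2 * Real.log ‖1 + v * z‖
      = Real.log ((c/2) * ‖1 + v * z‖^2) := by
        rw [Real.log_mul (by positivity) (by positivity), Real.log_pow]
        push_cast; ring
    _ ≤ Real.log (c + 2 * (w * z).re) := Real.log_le_log hmidpos hchain

set_option maxHeartbeats 1000000 in
/-- lower bound on the mutual information of the equivalent two-path
channel: `(1/(4πBT₀)) ∫_{-πBT₀}^{πBT₀} ln(1 + ρ|a₁+a₂e^{iu}|²) du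
  ≥ (Δ₁/2) ln((1+ρ(|a₁|²+|a₂|²))/2)` where `Δ₁ = ⌊BT₀⌋/⌈BT₀⌉`. -/
theorem stmt_10 (a₁ a₂ : ℂ) (ρ B T₀ : ℝ) (hρ : 0 < ρ) (hB : 0 < B) (hT : 0 < T₀)
    (hBT : 1 ≤ B * T₀) :
    (1 / (4 * π * B * T₀)) *
        ∫ u in Set.Icc (-(π * B * T₀)) (π * B * T₀),
          Real.log (1 + ρ * ‖a₁ + a₂ * Complex.exp (u * Complex.I)‖ ^ 2)
      ≥ ((⌊B * T₀⌋ : ℝ) / (⌈B * T₀⌉ : ℝ)) / 2 *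
          Real.log ((1 + ρ * (‖a₁‖ ^ 2 + ‖a₂‖ ^ 2)) / 2) := by
  set S : ℝ := ‖a₁‖ ^ 2 + ‖a₂‖ ^ 2 with hSdef
  set c : ℝ := 1 + ρ * S with hcdef
  set w : ℂ := (ρ : ℂ) * ((starRingEnd ℂ) a₁ * a₂) with hwdef
  set n : ℤ := ⌊B * T₀⌋ with hndef
  set m : ℤ := ⌈B * T₀⌉ with hmdef
  have hS0 : 0 ≤ S := by positivity
  have hc1 : (1:ℝ) ≤ c := by nlinarith
  have hc0 : (0:ℝ) < c := by linarith
  have hwnorm : ‖w‖ = ρ * (‖a₁‖ * ‖a₂‖) := by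
    rw [hwdef, norm_mul, norm_mul, Complex.norm_real, Real.norm_eq_abs, abs_of_pos hρ,
      Complex.norm_conj]
  have hw : 2 * ‖w‖ ≤ c - 1 := by
    rw [hwnorm, hcdef, hSdef]
    nlinarith [sq_nonneg (‖a₁‖ - ‖a₂‖)]
  have hone : ∀ u : ℝ, ‖Complex.exp (u * Complex.I)‖ = 1 := by
    intro u; simp [Complex.norm_exp]
  -- the identity rewriting the integrand
  have hident : ∀ u : ℝ, 1 + ρ * ‖a₁ + a₂ * Complex.exp (u * Complex.I)‖ ^ 2
      = c + 2 * (w * Complex.exp (u * Complex.I)).re := by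
    intro u
    set e : ℂ := Complex.exp (u * Complex.I) with hedef
    have he : Complex.normSq e = 1 := by
      rw [← Complex.sq_norm, hone u, one_pow]
    have h1 : ‖a₁ + a₂ * e‖ ^ 2
        = ‖a₁‖ ^ 2 + ‖a₂‖ ^ 2
          + 2 * ((starRingEnd ℂ) a₁ * (a₂ * e)).re := by
      rw [Complex.sq_norm, Complex.normSq_add, map_mul, he, mul_one,
        Complex.sq_norm, Complex.sq_norm]
      congr 1
      have hcj : (starRingEnd ℂ) a₁ * (a₂ * e)
          = (starRingEnd ℂ) (a₁ * (starRingEnd ℂ) (a₂ * e)) := by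
        rw [map_mul, Complex.conj_conj]
      rw [hcj, Complex.conj_re]
    have h2 : (w * e).re = ρ * ((starRingEnd ℂ) a₁ * (a₂ * e)).re := by
      rw [hwdef, mul_assoc, mul_assoc, Complex.re_ofReal_mul]
    rw [h1, h2, hcdef, hSdef]
    ring
  -- lower bound on the new integrand
  have hf_lb : ∀ u : ℝ, (1:ℝ) ≤ c + 2 * (w * Complex.exp (u * Complex.I)).re := by
    intro u
    have h := Complex.abs_re_le_norm (w * Complex.exp (u * Complex.I))
    rw [norm_mul, hone u, mul_one] at h
    rcases abs_le.1 h with ⟨hl, _⟩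
    linarith
  have hf0 : ∀ u : ℝ, 0 ≤ Real.log (c + 2 * (w * Complex.exp (u * Complex.I)).re) :=
    fun u => Real.log_nonneg (hf_lb u)
  have hcont_f : Continuous fun u : ℝ =>
      Real.log (c + 2 * (w * Complex.exp (u * Complex.I)).re) := by
    apply Continuous.log
    · fun_prop
    · intro u
      have := hf_lb u
      intro h; rw [h] at this; linarith
  -- v and g
  set v : ℂ := ((2/c : ℝ) : ℂ) * w with hvdef
  have hnv : ‖v‖ = (2/c) * ‖w‖ := by
    rw [hvdef, norm_mul, Complex.norm_real, Real.norm_eq_abs, abs_of_pos (by positivity)]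
  have hv1 : ‖v‖ < 1 := by
    rw [hnv, div_mul_eq_mul_div, div_lt_one hc0]
    linarith
  have hglb : ∀ u : ℝ, 1 - ‖v‖ ≤ ‖1 + v * Complex.exp (u * Complex.I)‖ := by
    intro u
    have h := norm_add_le (1 + v * Complex.exp (u * Complex.I))
      (-(v * Complex.exp (u * Complex.I)))
    simp only [add_neg_cancel_right, norm_one, norm_neg] at h
    rw [norm_mul, hone u, mul_one] at h
    linarith
  have hcont_g : Continuous fun u : ℝ =>
      Real.log ‖1 + v * Complex.exp (u * Complex.I)‖ := by
    apply Continuous.log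
    · fun_prop
    · intro u
      exact ne_of_gt (lt_of_lt_of_le (by linarith) (hglb u))
  have hper : Function.Periodic
      (fun u : ℝ => Real.log ‖1 + v * Complex.exp (u * Complex.I)‖) (2*π) := by
    intro x
    have hx : ((x + 2*π : ℝ) : ℂ) * Complex.I = x * Complex.I + 2*π*Complex.I := by
      push_cast; ring
    simp only [hx, Complex.exp_add, Complex.exp_two_pi_mul_I, mul_one]
  -- integer bookkeeping
  have hn1 : (1:ℤ) ≤ n := by
    rw [hndef]
    exact Int.le_floor.2 (by exact_mod_cast hBT)
  have hnR : (1:ℝ) ≤ (n:ℝ) := by exact_mod_cast hn1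
  have hnBT : (n:ℝ) ≤ B * T₀ := by rw [hndef]; exact Int.floor_le _
  have hmR : B * T₀ ≤ (m:ℝ) := by rw [hmdef]; exact Int.le_ceil _
  have hm1 : (1:ℝ) ≤ (m:ℝ) := le_trans hBT hmR
  have hBT0 : (0:ℝ) < B * T₀ := by positivity
  have hL0 : (0:ℝ) < π * B * T₀ := by positivity
  have hJ0 : (0:ℝ) < π * (n:ℝ) := by nlinarith [Real.pi_pos]
  have hJL : π * (n:ℝ) ≤ π * B * T₀ := by nlinarith [Real.pi_pos]
  -- integrability
  have hfint : ∀ t₁ t₂ : ℝ, IntervalIntegrable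
      (fun u : ℝ => Real.log (c + 2 * (w * Complex.exp (u * Complex.I)).re)) volume t₁ t₂ :=
    fun t₁ t₂ => hcont_f.intervalIntegrable _ _
  have hgint : ∀ t₁ t₂ : ℝ, IntervalIntegrable
      (fun u : ℝ => Real.log ‖1 + v * Complex.exp (u * Complex.I)‖) volume t₁ t₂ :=
    fun t₁ t₂ => hcont_g.intervalIntegrable _ _
  -- rewrite the integrand
  have hfeq : (fun u : ℝ =>
        Real.log (1 + ρ * ‖a₁ + a₂ * Complex.exp (u * Complex.I)‖ ^ 2))
      = fun u : ℝ => Real.log (c + 2 * (w * Complex.exp (u * Complex.I)).re) :=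
    funext fun u => by rw [hident u]
  have hIcc : (∫ u in Set.Icc (-(π * B * T₀)) (π * B * T₀),
        Real.log (1 + ρ * ‖a₁ + a₂ * Complex.exp (u * Complex.I)‖ ^ 2))
      = ∫ u in (-(π * B * T₀))..(π * B * T₀),
          Real.log (c + 2 * (w * Complex.exp (u * Complex.I)).re) := by
    rw [hfeq, intervalIntegral.integral_of_le (by linarith : -(π*B*T₀) ≤ π*B*T₀),
      MeasureTheory.integral_Icc_eq_integral_Ioc]
  -- monotonicity in the interval
  have hmono : (∫ u in (-(π*(n:ℝ)))..(π*(n:ℝ)),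
        Real.log (c + 2 * (w * Complex.exp (u * Complex.I)).re))
      ≤ ∫ u in (-(π*B*T₀))..(π*B*T₀),
          Real.log (c + 2 * (w * Complex.exp (u * Complex.I)).re) :=
    intervalIntegral.integral_mono_interval (by linarith) (by linarith) (by linarith)
      (Filter.Eventually.of_forall fun u => hf0 u) (hfint _ _)
  -- pointwise comparison on [-πn, πn]
  have hstep : (∫ u in (-(π*(n:ℝ)))..(π*(n:ℝ)),
        (Real.log (c/2) + 2 * Real.log ‖1 + v * Complex.exp (u * Complex.I)‖))
      ≤ ∫ u in (-(π*(n:ℝ)))..(π*(n:ℝ)),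
          Real.log (c + 2 * (w * Complex.exp (u * Complex.I)).re) := by
    apply intervalIntegral.integral_mono_on (by linarith)
    · exact ((intervalIntegrable_const).add ((hgint _ _).const_mul 2))
    · exact hfint _ _
    · intro x _
      have pb := pointwise_bound (c := c) (w := w) hc1 hw (hone x)
      rw [← hvdef] at pb
      exact pb
  -- compute the lower integral
  have hperiodzero : (∫ u in (-(π*(n:ℝ)))..(-(π*(n:ℝ)) + 2*π),
      Real.log ‖1 + v * Complex.exp (u * Complex.I)‖) = 0 := by
    rw [hper.intervalIntegral_add_eq (-(π*(n:ℝ))) 0, zero_add]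
    exact circle_log_norm_integral hv1
  have hJint : (∫ u in (-(π*(n:ℝ)))..(π*(n:ℝ)),
      Real.log ‖1 + v * Complex.exp (u * Complex.I)‖) = 0 := by
    have h := hper.intervalIntegral_add_zsmul_eq n (-(π*(n:ℝ))) hgint
    have he : -(π*(n:ℝ)) + n • (2*π) = π*(n:ℝ) := by
      rw [zsmul_eq_mul]; ring
    rw [he] at h
    rw [h, hperiodzero, smul_zero]
  have hsplit : (∫ u in (-(π*(n:ℝ)))..(π*(n:ℝ)),
        (Real.log (c/2) + 2 * Real.log ‖1 + v * Complex.exp (u * Complex.I)‖))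
      = 2 * (π*(n:ℝ)) * Real.log (c/2) := by
    rw [intervalIntegral.integral_add intervalIntegrable_const ((hgint _ _).const_mul 2),
      intervalIntegral.integral_const, intervalIntegral.integral_const_mul, hJint,
      mul_zero, add_zero, smul_eq_mul]
    ring
  have hlow : 2 * π * (n:ℝ) * Real.log (c/2)
      ≤ ∫ u in (-(π*B*T₀))..(π*B*T₀),
          Real.log (c + 2 * (w * Complex.exp (u * Complex.I)).re) := by
    rw [hsplit] at hstep
    nlinarith [hstep, hmono]
  have hA0 : (0:ℝ) ≤ ∫ u in (-(π*B*T₀))..(π*B*T₀),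
      Real.log (c + 2 * (w * Complex.exp (u * Complex.I)).re) :=
    intervalIntegral.integral_nonneg (by linarith) (fun u _ => hf0 u)
  rw [ge_iff_le, hIcc]
  set A : ℝ := ∫ u in (-(π*B*T₀))..(π*B*T₀),
      Real.log (c + 2 * (w * Complex.exp (u * Complex.I)).re) with hAdef
  have hm0 : (0:ℝ) < (m:ℝ) := by linarith
  have hn0 : (0:ℝ) ≤ (n:ℝ) := by linarith
  rcases le_or_gt (Real.log (c/2)) 0 with hlog | hlog
  · have h1 : ((n:ℝ)/(m:ℝ))/2 * Real.log (c/2) ≤ 0 :=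
      mul_nonpos_of_nonneg_of_nonpos
        (div_nonneg (div_nonneg hn0 hm0.le) (by norm_num)) hlog
    have h2 : (0:ℝ) ≤ 1/(4*π*B*T₀) * A := mul_nonneg (by positivity) hA0
    linarith
  · have hdd : (n:ℝ)/(m:ℝ) ≤ (n:ℝ)/(B*T₀) :=
      div_le_div_of_nonneg_left hn0 hBT0 hmR
    have hd1 : ((n:ℝ)/(m:ℝ))/2 * Real.log (c/2)
        ≤ ((n:ℝ)/(B*T₀))/2 * Real.log (c/2) := by
      have h := mul_le_mul_of_nonneg_right hdd hlog.le
      linarith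
    have hd2 : ((n:ℝ)/(B*T₀))/2 * Real.log (c/2)
        = 1/(4*π*B*T₀) * (2*π*(n:ℝ) * Real.log (c/2)) := by
      field_simp
      ring
    have hd3 : 1/(4*π*B*T₀) * (2*π*(n:ℝ)*Real.log (c/2)) ≤ 1/(4*π*B*T₀) * A :=
      mul_le_mul_of_nonneg_left hlow (by positivity)
    linarith
end

section
/- Let a₁, a₂ ∈ ℂ and ρ > 0. Put ν = |a₁|² + |a₂|² and w = |a₁|² − |a₂|². Then (1/(2π))·∫_{−π}^{π} ln(1 + ρ·|a₁ + a₂e^{iu}|²) du = ln( (1 + ρν + √(1 + ρ²w² + 2ρν)) / 2 ). -/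
open MeasureTheory Real intervalIntegral


lemma core (c : ℂ) (hc : ‖c‖ < 1) :
    ∫ θ in (0:ℝ)..(2*π), Real.log (‖1 + c * Complex.exp (θ * Complex.I)‖) = 0 := by
  set f : ℂ → ℂ := fun z => Complex.log (1 + c * z) with hf
  have hre : ∀ z : ℂ, ‖z‖ ≤ 1 → 0 < (1 + c * z).re := by
    intro z hz
    have h1 : ‖c * z‖ < 1 := by
      rw [norm_mul]
      calc ‖c‖ * ‖z‖ ≤ ‖c‖ * 1 :=
        mul_le_mul_of_nonneg_left hz (norm_nonneg c)
      _ < 1 := by simpa using hc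
    have h2 : |(c * z).re| < 1 := lt_of_le_of_lt (Complex.abs_re_le_norm _) h1
    have h3 := (abs_lt.mp h2).1
    simp only [Complex.add_re, Complex.one_re]
    linarith
  have hdiff : ∀ z : ℂ, ‖z‖ ≤ 1 → DifferentiableAt ℂ f z := by
    intro z hz
    apply DifferentiableAt.clog
    · fun_prop
    · exact Or.inl (hre z hz)
  have hdc : DiffContOnCl ℂ f (Metric.ball 0 1) := by
    constructor
    · intro z hz
      exact (hdiff z (le_of_lt (by simpa [Complex.dist_eq] using Metric.mem_ball.mp hz))).differentiableWithinAt
    · intro z hz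
      have hz' : ‖z‖ ≤ 1 := by
        have := Metric.closure_ball_subset_closedBall hz
        simpa [Metric.mem_closedBall, Complex.dist_eq] using this
      exact (hdiff z hz').continuousAt.continuousWithinAt
  have hcauchy := hdc.circleIntegral_sub_inv_smul (Metric.mem_ball_self one_pos) (w := 0)
  have hf0 : f 0 = 0 := by simp [hf]
  rw [hf0, smul_zero] at hcauchy
  rw [circleIntegral] at hcauchy
  simp only [deriv_circleMap, circleMap, Complex.ofReal_one, Complex.ofReal_zero, zero_add,
    one_mul, sub_zero, smul_eq_mul] at hcauchy
  have heq : ∀ θ : ℝ, Complex.exp (θ * Complex.I) * Complex.I *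
      ((Complex.exp (θ * Complex.I))⁻¹ * f (Complex.exp (θ * Complex.I)))
      = Complex.I * f (Complex.exp (θ * Complex.I)) := by
    intro θ
    have : Complex.exp (θ * Complex.I) ≠ 0 := Complex.exp_ne_zero _
    field_simp
  rw [intervalIntegral.integral_congr (fun θ _ => heq θ)] at hcauchy
  rw [intervalIntegral.integral_const_mul] at hcauchy
  have hint : ∫ θ in (0:ℝ)..(2*π), f (Complex.exp (θ * Complex.I)) = 0 :=
    (mul_eq_zero.mp hcauchy).resolve_left Complex.I_ne_zero
  have habs : ∀ θ : ℝ, ‖Complex.exp (θ * Complex.I)‖ = 1 := fun θ =>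
    Complex.norm_exp_ofReal_mul_I θ
  have hcont : Continuous fun θ : ℝ => f (Complex.exp (θ * Complex.I)) := by
    rw [continuous_iff_continuousAt]
    intro θ
    exact ContinuousAt.clog (by fun_prop) (Or.inl (hre _ (le_of_eq (habs θ))))
  have hii : IntervalIntegrable (fun θ : ℝ => f (Complex.exp (θ * Complex.I)))
      volume 0 (2*π) := hcont.intervalIntegrable _ _
  have := Complex.reCLM.intervalIntegral_comp_comm hii
  rw [hint] at this
  simp only [Complex.reCLM_apply, map_zero] at this
  have h2 : (∫ θ in (0:ℝ)..(2*π), Real.log (‖1 + c * Complex.exp (θ * Complex.I)‖))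
      = ∫ θ in (0:ℝ)..(2*π), (f (Complex.exp (θ * Complex.I))).re := by
    apply intervalIntegral.integral_congr
    intro θ _
    simp only [hf, Complex.log_re]
  rw [h2, this]

set_option maxHeartbeats 1000000 in
/-- closed form of the per-period average mutual information of the
equivalent two-path channel:
`(1/2π) ∫_{-π}^{π} ln(1 + ρ|a₁+a₂e^{iu}|²) du = ln((1+ρν+√(1+ρ²w²+2ρν))/2)`. -/
theorem stmt_11 (a₁ a₂ : ℂ) (ρ : ℝ) (hρ : 0 < ρ) (ν w : ℝ)
    (hν : ν = ‖a₁‖ ^ 2 + ‖a₂‖ ^ 2)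
    (hw : w = ‖a₁‖ ^ 2 - ‖a₂‖ ^ 2) :
    (1 / (2 * π)) *
        ∫ u in Set.Icc (-π) π,
          Real.log (1 + ρ * ‖a₁ + a₂ * Complex.exp (u * Complex.I)‖ ^ 2)
      = Real.log ((1 + ρ * ν + Real.sqrt (1 + ρ^2 * w^2 + 2 * ρ * ν)) / 2) := by
  have pi_pos := Real.pi_pos
  obtain ⟨r1, hr1⟩ : ∃ r : ℝ, r = ‖a₁‖ := ⟨_, rfl⟩
  obtain ⟨r2, hr2⟩ : ∃ r : ℝ, r = ‖a₂‖ := ⟨_, rfl⟩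
  have hr1n : 0 ≤ r1 := hr1 ▸ norm_nonneg a₁
  have hr2n : 0 ≤ r2 := hr2 ▸ norm_nonneg a₂
  obtain ⟨s, hs⟩ : ∃ s : ℝ, s = 1 + ρ * ν := ⟨_, rfl⟩
  obtain ⟨D, hD⟩ : ∃ D : ℝ, D = 1 + ρ^2 * w^2 + 2 * ρ * ν := ⟨_, rfl⟩
  obtain ⟨p, hp⟩ : ∃ p : ℝ, p = ρ^2 * r1^2 * r2^2 := ⟨_, rfl⟩
  have hν0 : 0 ≤ ν := by rw [hν]; positivity
  have hρν : 0 ≤ ρ * ν := mul_nonneg hρ.le hν0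
  have hD1 : (1:ℝ) ≤ D := by rw [hD]; nlinarith [sq_nonneg (ρ * w)]
  have hD0 : (0:ℝ) ≤ D := by linarith
  have hs1 : (1:ℝ) ≤ s := by rw [hs]; linarith
  have hDeq : D = s^2 - 4*p := by rw [hD, hs, hp, hν, hw, hr1, hr2]; ring
  obtain ⟨q, hq0, hqsq⟩ : ∃ q : ℝ, 1 ≤ q ∧ q^2 = D :=
    ⟨Real.sqrt D, by
      rw [show (1:ℝ) = Real.sqrt 1 by simp]; exact Real.sqrt_le_sqrt hD1,
      Real.sq_sqrt hD0⟩
  have hqD : Real.sqrt D = q := by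
    rw [← hqsq]; exact Real.sqrt_sq (by linarith)
  obtain ⟨α, hαpos, hα2⟩ : ∃ α : ℝ, 0 < α ∧ α^2 = (s + q)/2 :=
    ⟨Real.sqrt ((s + q)/2), Real.sqrt_pos.mpr (by linarith),
      Real.sq_sqrt (by linarith)⟩
  have hα21 : (1:ℝ) ≤ α^2 := by rw [hα2]; linarith
  have hαne : (α:ℂ) ≠ 0 := Complex.ofReal_ne_zero.mpr hαpos.ne'
  obtain ⟨β, hβdef⟩ : ∃ β : ℂ, β = (ρ:ℂ) * (starRingEnd ℂ a₁) * a₂ / (α:ℂ) := ⟨_, rfl⟩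
  have hαβ : (α:ℂ) * β = (ρ:ℂ) * (starRingEnd ℂ a₁) * a₂ := by
    rw [hβdef]; field_simp
  have hβabs : ‖β‖ = ρ * r1 * r2 / α := by
    rw [hβdef, norm_div, norm_mul, norm_mul, Complex.norm_of_nonneg hρ.le,
      Complex.norm_of_nonneg hαpos.le, Complex.norm_conj, hr1, hr2]
  have hβ2 : (‖β‖)^2 = p / α^2 := by
    rw [hβabs, hp, div_pow]; ring
  have hβlt : ‖β‖ < α := by
    apply lt_of_pow_lt_pow_left₀ 2 hαpos.le
    rw [hβ2, div_lt_iff₀ (by positivity)]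
    nlinarith [mul_nonneg (by linarith : (0:ℝ) ≤ q) (by linarith : (0:ℝ) ≤ s)]
  obtain ⟨c, hcdef⟩ : ∃ c : ℂ, c = β / (α:ℂ) := ⟨_, rfl⟩
  have hcabs : ‖c‖ = ‖β‖ / α := by
    rw [hcdef, norm_div, Complex.norm_of_nonneg hαpos.le]
  have hc1 : ‖c‖ < 1 := by
    rw [hcabs, div_lt_one hαpos]; exact hβlt
  have habse : ∀ u : ℝ, ‖Complex.exp (u * Complex.I)‖ = 1 := fun u =>
    Complex.norm_exp_ofReal_mul_I u
  -- pointwise identity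
  have key : ∀ u : ℝ, 1 + ρ * ‖a₁ + a₂ * Complex.exp (u * Complex.I)‖ ^ 2
      = α^2 * (‖1 + c * Complex.exp (u * Complex.I)‖)^2 := by
    intro u
    set e : ℂ := Complex.exp (u * Complex.I) with he
    have hαc : (α:ℂ) * (1 + c * e) = (α:ℂ) + β * e := by
      rw [hcdef]; field_simp
    have h1 : α^2 * (‖1 + c * e‖)^2 = (‖(α:ℂ) + β * e‖)^2 := by
      rw [← hαc, norm_mul, mul_pow, Complex.norm_real, Real.norm_eq_abs, sq_abs]
    rw [h1]
    rw [Complex.sq_norm, Complex.sq_norm, Complex.normSq_add, Complex.normSq_add]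
    have hne : Complex.normSq e = 1 := by
      rw [← Complex.sq_norm, habse u]; norm_num
    have hnβe : Complex.normSq (β * e) = p / α^2 := by
      rw [Complex.normSq_mul, hne, mul_one, ← Complex.sq_norm, hβ2]
    have hna2e : Complex.normSq (a₂ * e) = r2^2 := by
      rw [Complex.normSq_mul, hne, mul_one, ← Complex.sq_norm, ← hr2]
    have hsum : α^2 + p/α^2 = s := by
      have h4 : α^2 * α^2 - s * α^2 + p = 0 := by
        linear_combination (α^2 + (s+q)/2 - s) * hα2 + (1/4) * hqsq + (1/4) * hDeq
      have h5 : p / α^2 = s - α^2 := by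
        rw [div_eq_iff (by positivity : α^2 ≠ 0)]; linear_combination h4
      linarith
    have hreterm : ((α:ℂ) * (starRingEnd ℂ) (β * e)).re
        = ρ * (a₁ * (starRingEnd ℂ) (a₂ * e)).re := by
      have hcc : (α:ℂ) * (starRingEnd ℂ) (β * e)
          = (ρ:ℂ) * (a₁ * (starRingEnd ℂ) (a₂ * e)) := by
        rw [map_mul]
        calc (α:ℂ) * ((starRingEnd ℂ) β * (starRingEnd ℂ) e)
            = (starRingEnd ℂ) ((α:ℂ) * β) * (starRingEnd ℂ) e := by
              rw [map_mul, Complex.conj_ofReal]; ring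
          _ = (ρ:ℂ) * (a₁ * (starRingEnd ℂ) (a₂ * e)) := by
              rw [hαβ]; simp only [map_mul, Complex.conj_conj, Complex.conj_ofReal]; ring
      rw [hcc, Complex.re_ofReal_mul]
    rw [hreterm, hnβe, hna2e, Complex.normSq_ofReal]
    have hna1 : Complex.normSq a₁ = r1^2 := by rw [← Complex.sq_norm, ← hr1]
    rw [hna1]
    have hν' : ν = r1^2 + r2^2 := by rw [hν, hr1, hr2]
    linear_combination -ρ * hν' - hs - hsum
  -- positivity of 1 + c e
  have hpos1 : ∀ u : ℝ, 0 < ‖1 + c * Complex.exp (u * Complex.I)‖ := by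
    intro u
    have h1 : ‖c * Complex.exp (u * Complex.I)‖ < 1 := by
      rw [norm_mul, habse u, mul_one]; exact hc1
    have h2 := norm_add_le (1 + c * Complex.exp (u * Complex.I))
      (-(c * Complex.exp (u * Complex.I)))
    simp only [add_neg_cancel_right, norm_neg, norm_one] at h2
    linarith
  -- continuity
  have hce : Continuous fun u : ℝ => Complex.exp (u * Complex.I) :=
    Complex.continuous_exp.comp (Complex.continuous_ofReal.mul continuous_const)
  have hcontg : Continuous fun u : ℝ =>
      Real.log (‖1 + c * Complex.exp (u * Complex.I)‖) := by
    apply Continuous.log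
    · exact continuous_norm.comp (continuous_const.add (continuous_const.mul hce))
    · exact fun u => (hpos1 u).ne'
  have hcontF : Continuous fun u : ℝ =>
      Real.log (1 + ρ * ‖a₁ + a₂ * Complex.exp (u * Complex.I)‖ ^ 2) := by
    apply Continuous.log
    · exact continuous_const.add (continuous_const.mul
        ((continuous_norm.comp
          (continuous_const.add (continuous_const.mul hce))).pow 2))
    · intro u
      have h0 : 0 ≤ ρ * ‖a₁ + a₂ * Complex.exp (u * Complex.I)‖ ^ 2 := by positivity
      intro h; linarith
  -- periodicity
  have hper : Function.Periodic (fun u : ℝ =>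
      Real.log (1 + ρ * ‖a₁ + a₂ * Complex.exp (u * Complex.I)‖ ^ 2)) (2*π) := by
    intro u
    have hexp : Complex.exp ((↑(u + 2*π)) * Complex.I) = Complex.exp (u * Complex.I) := by
      push_cast
      rw [add_mul, Complex.exp_add, Complex.exp_two_pi_mul_I, mul_one]
    simp only [hexp]
  -- put the integral in interval form
  have hIcc : (∫ u in Set.Icc (-π) π,
        Real.log (1 + ρ * ‖a₁ + a₂ * Complex.exp (u * Complex.I)‖ ^ 2))
      = ∫ u in (-π)..π,
        Real.log (1 + ρ * ‖a₁ + a₂ * Complex.exp (u * Complex.I)‖ ^ 2) := by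
    rw [intervalIntegral.integral_of_le (by linarith : -π ≤ π),
      MeasureTheory.integral_Icc_eq_integral_Ioc]
  have hshift := hper.intervalIntegral_add_eq (-π) 0
  rw [show -π + 2*π = π by ring, zero_add] at hshift
  have hsplit : (∫ u in (0:ℝ)..(2*π),
        Real.log (1 + ρ * ‖a₁ + a₂ * Complex.exp (u * Complex.I)‖ ^ 2))
      = 2*π * Real.log (α^2) := by
    have hcongr : ∀ u ∈ Set.uIcc (0:ℝ) (2*π),
        Real.log (1 + ρ * ‖a₁ + a₂ * Complex.exp (u * Complex.I)‖ ^ 2)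
        = Real.log (α^2)
          + 2 * Real.log (‖1 + c * Complex.exp (u * Complex.I)‖) := by
      intro u _
      rw [key u, Real.log_mul (by positivity) (pow_ne_zero 2 (hpos1 u).ne'), Real.log_pow]
      norm_num
    rw [intervalIntegral.integral_congr hcongr]
    rw [intervalIntegral.integral_add (f := fun _ => Real.log (α^2))
      (g := fun u : ℝ => 2 * Real.log (‖1 + c * Complex.exp (u * Complex.I)‖))
      (intervalIntegrable_const) ((continuous_const.mul hcontg).intervalIntegrable _ _)]
    rw [intervalIntegral.integral_const_mul, core c hc1]
    simp [Real.log_pow]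
    ring
  rw [hIcc, hshift, hsplit]
  rw [one_div, inv_mul_eq_div, mul_comm, mul_div_assoc, div_self (by positivity : 2*π ≠ 0),
    mul_one]
  rw [hα2, hqD.symm, hs, hD]
end
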